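/- arXiv:1206.0489 — 6 statements merged into one kernel-verified Lean document; each statement's English description precedes it below -/
import Mathlib

section
/- Ruzsa triangle inequality for differential entropy: If X, Y, Z are independent real-valued continuous random variables (each having a probability density function) whose differential entropies h(X-Z), h(X-Y), h(Y-Z), h(Y) all exist and are finite, then h(X-Z) ≤ h(X-Y) + h(Y-Z) - h(Y). -/
open MeasureTheory ProbabilityTheory

/-- The differential entropy of a random variable `X` (with respect to a reference
measure `μ` on the value space, typically Lebesgue measure): if `f` is the density of
the law of `X` with respect to `μ`, then `h(X) = -E[log f(X)]`. -/
noncomputable def dent {Ω E : Type*} [MeasurableSpace Ω] [MeasurableSpace E]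
    (μ : Measure E) (P : Measure Ω) (X : Ω → E) : ℝ :=
  -∫ x, Real.log (((P.map X).rnDeriv μ x).toReal) ∂(P.map X)

/-- `X` is a continuous random variable (its law is absolutely continuous with respect
to the reference measure `μ`, i.e. it has a density `f`), and its differential entropy
exists and is finite (the log-density is integrable under the law of `X`). -/
def FiniteDent {Ω E : Type*} [MeasurableSpace Ω] [MeasurableSpace E]
    (μ : Measure E) (P : Measure Ω) (X : Ω → E) : Prop :=
  P.map X ≪ μ ∧
    Integrable (fun x => Real.log (((P.map X).rnDeriv μ x).toReal)) (P.map X)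

private lemma ennreal_mul_div_mul_le {A b c : ENNReal} (hb : b ≠ ⊤) :
    b * (A / (b * c)) ≤ A / c := by
  rcases eq_or_ne b 0 with rfl | hb0
  · simp
  · rw [← mul_div_assoc, ENNReal.mul_div_mul_left _ _ hb0 hb]

private lemma dent_facts {Ω : Type*} [MeasurableSpace Ω] (P : Measure Ω) [IsProbabilityMeasure P]
    (W : Ω → ℝ) (hW : Measurable W) (h : FiniteDent volume P W) :
    Integrable (fun ω => Real.log (((P.map W).rnDeriv volume) (W ω)).toReal) P ∧
    dent volume P W = -∫ ω, Real.log (((P.map W).rnDeriv volume) (W ω)).toReal ∂P ∧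
    (∀ᵐ ω ∂P, 0 < ((P.map W).rnDeriv volume) (W ω) ∧ ((P.map W).rnDeriv volume) (W ω) < ⊤) := by
  obtain ⟨hac, hint⟩ := h
  haveI : IsProbabilityMeasure (P.map W) := Measure.isProbabilityMeasure_map hW.aemeasurable
  have hm : Measurable fun x => Real.log (((P.map W).rnDeriv volume) x).toReal :=
    Real.measurable_log.comp (Measure.measurable_rnDeriv _ _).ennreal_toReal
  refine ⟨(integrable_map_measure hm.aestronglyMeasurable hW.aemeasurable).mp hint, ?_, ?_⟩
  · rw [dent, integral_map hW.aemeasurable hm.aestronglyMeasurable]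
  · have h1 : ∀ᵐ x ∂(P.map W), 0 < ((P.map W).rnDeriv volume) x ∧
        ((P.map W).rnDeriv volume) x < ⊤ := by
      filter_upwards [Measure.rnDeriv_pos hac, hac.ae_le (Measure.rnDeriv_lt_top (P.map W) volume)]
        with x h1 h2 using ⟨h1, h2⟩
    have hset : MeasurableSet {x : ℝ | 0 < ((P.map W).rnDeriv volume) x ∧
        ((P.map W).rnDeriv volume) x < ⊤} := by
      have : {x : ℝ | 0 < ((P.map W).rnDeriv volume) x ∧ ((P.map W).rnDeriv volume) x < ⊤}
          = ((P.map W).rnDeriv volume) ⁻¹' (Set.Ioo 0 ⊤) := by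
        ext x; simp [Set.mem_Ioo]
      rw [this]
      exact Measure.measurable_rnDeriv _ _ measurableSet_Ioo
    exact (ae_map_iff hW.aemeasurable hset).mp h1

/-- **Ruzsa triangle inequality for differential entropy.**
If `X, Y, Z` are independent continuous random variables whose differential entropies
`h(X-Z), h(X-Y), h(Y-Z), h(Y)` all exist and are finite, then
`h(X-Z) ≤ h(X-Y) + h(Y-Z) - h(Y)`. -/
theorem ruzsa_triangle_diffEntropy
    {Ω : Type*} [MeasurableSpace Ω] (P : Measure Ω) [IsProbabilityMeasure P]
    (X Y Z : Ω → ℝ) (hX : Measurable X) (hY : Measurable Y) (hZ : Measurable Z)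
    (hindep : iIndepFun ![X, Y, Z] P)
    (hXZ : FiniteDent volume P (X - Z)) (hXY : FiniteDent volume P (X - Y))
    (hYZ : FiniteDent volume P (Y - Z)) (hY' : FiniteDent volume P Y) :
    dent volume P (X - Z) ≤ dent volume P (X - Y) + dent volume P (Y - Z) - dent volume P Y := by
  classical
  -- abbreviations for the densities
  set f : ℝ → ENNReal := (P.map (X - Z)).rnDeriv volume with hf_def
  set g : ℝ → ENNReal := (P.map (X - Y)).rnDeriv volume with hg_def
  set k : ℝ → ENNReal := (P.map (Y - Z)).rnDeriv volume with hk_def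
  set q : ℝ → ENNReal := (P.map Y).rnDeriv volume with hq_def
  have hfm : Measurable f := Measure.measurable_rnDeriv _ _
  have hgm : Measurable g := Measure.measurable_rnDeriv _ _
  have hkm : Measurable k := Measure.measurable_rnDeriv _ _
  have hqm : Measurable q := Measure.measurable_rnDeriv _ _
  have hXZm : Measurable (X - Z) := hX.sub hZ
  have hXYm : Measurable (X - Y) := hX.sub hY
  have hYZm : Measurable (Y - Z) := hY.sub hZ
  haveI : IsProbabilityMeasure (P.map X) := Measure.isProbabilityMeasure_map hX.aemeasurable
  haveI : IsProbabilityMeasure (P.map Y) := Measure.isProbabilityMeasure_map hY.aemeasurable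
  haveI : IsProbabilityMeasure (P.map Z) := Measure.isProbabilityMeasure_map hZ.aemeasurable
  haveI : IsProbabilityMeasure (P.map (X - Z)) := Measure.isProbabilityMeasure_map hXZm.aemeasurable
  haveI : IsProbabilityMeasure (P.map (X - Y)) := Measure.isProbabilityMeasure_map hXYm.aemeasurable
  haveI : IsProbabilityMeasure (P.map (Y - Z)) := Measure.isProbabilityMeasure_map hYZm.aemeasurable
  obtain ⟨hiXZ, hdXZ, haeXZ⟩ := dent_facts P (X - Z) hXZm hXZ
  obtain ⟨hiXY, hdXY, haeXY⟩ := dent_facts P (X - Y) hXYm hXY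
  obtain ⟨hiYZ, hdYZ, haeYZ⟩ := dent_facts P (Y - Z) hYZm hYZ
  obtain ⟨hiY, hdY, haeY⟩ := dent_facts P Y hY hY'
  -- the ratio function
  set S : (ℝ × ℝ) × ℝ → ENNReal :=
    fun p => g (p.1.1 - p.2) * k (p.2 - p.1.2) / (q p.2 * f (p.1.1 - p.1.2)) with hS_def
  have hSm : Measurable S := by
    apply Measurable.div
    · exact (hgm.comp (measurable_fst.fst.sub measurable_snd)).mul
        (hkm.comp (measurable_snd.sub measurable_fst.snd))
    · exact (hqm.comp measurable_snd).mul
        (hfm.comp (measurable_fst.fst.sub measurable_fst.snd))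
  set R : Ω → ENNReal := fun ω => S ((X ω, Z ω), Y ω) with hR_def
  have hRm : Measurable R := hSm.comp ((hX.prodMk hZ).prodMk hY)
  -- the convolution density
  set C : ℝ → ENNReal := fun w => ∫⁻ s, g (w - s) * k s with hC_def
  have hCm : Measurable C := by
    apply Measurable.lintegral_prod_right
    exact (hgm.comp (measurable_fst.sub measurable_snd)).mul (hkm.comp measurable_snd)
  -- identify the joint law
  have hpairXZ : Measurable fun ω => (X ω, Z ω) := hX.prodMk hZ
  have hmeas3 : ∀ i, Measurable (![X, Y, Z] i) := by
    intro i; fin_cases i <;> assumption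
  have hIprod : IndepFun (fun ω => (X ω, Z ω)) Y P := by
    have := hindep.indepFun_prodMk hmeas3 0 2 1 (by decide) (by decide)
    exact this
  have hIXZ : IndepFun X Z P := hindep.indepFun (show (0 : Fin 3) ≠ 2 by decide)
  have hmap_pair : P.map (fun ω => (X ω, Z ω)) = (P.map X).prod (P.map Z) :=
    (indepFun_iff_map_prod_eq_prod_map_map hX.aemeasurable hZ.aemeasurable).mp hIXZ
  have hmapT : P.map (fun ω => ((X ω, Z ω), Y ω))
      = ((P.map X).prod (P.map Z)).prod (P.map Y) := by
    have := (indepFun_iff_map_prod_eq_prod_map_map hpairXZ.aemeasurable hY.aemeasurable).mp hIprod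
    rw [this, hmap_pair]
  have hmapXZ : P.map (X - Z)
      = ((P.map X).prod (P.map Z)).map (fun p => p.1 - p.2) := by
    rw [← hmap_pair,
      Measure.map_map (g := fun p : ℝ × ℝ => p.1 - p.2) (measurable_fst.sub measurable_snd) hpairXZ]
    rfl
  -- a.e. positivity/finiteness of f along π
  have haeπ : ∀ᵐ p ∂(P.map X).prod (P.map Z), 0 < f (p.1 - p.2) ∧ f (p.1 - p.2) < ⊤ := by
    have hs : MeasurableSet {p : ℝ × ℝ | 0 < f (p.1 - p.2) ∧ f (p.1 - p.2) < ⊤} := by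
      have : {p : ℝ × ℝ | 0 < f (p.1 - p.2) ∧ f (p.1 - p.2) < ⊤}
          = (fun p : ℝ × ℝ => f (p.1 - p.2)) ⁻¹' (Set.Ioo 0 ⊤) := by
        ext p; simp [Set.mem_Ioo]
      rw [this]
      exact (hfm.comp (measurable_fst.sub measurable_snd)) measurableSet_Ioo
    rw [← hmap_pair]
    exact (ae_map_iff hpairXZ.aemeasurable hs).mpr haeXZ
  -- the key bound: ∫⁻ R dP ≤ 1
  have key : ∫⁻ ω, R ω ∂P ≤ 1 := by
    have h1 : ∫⁻ ω, R ω ∂P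
        = ∫⁻ p, S p ∂(((P.map X).prod (P.map Z)).prod (P.map Y)) := by
      rw [← hmapT, lintegral_map hSm ((hX.prodMk hZ).prodMk hY)]
    rw [h1, lintegral_prod _ hSm.aemeasurable]
    -- bound the inner integral
    have hinner : ∀ᵐ p ∂(P.map X).prod (P.map Z),
        (∫⁻ y, S (p, y) ∂(P.map Y)) ≤ C (p.1 - p.2) / f (p.1 - p.2) := by
      filter_upwards [haeπ] with p hp
      obtain ⟨x, z⟩ := p
      simp only at hp ⊢
      have hmapY : P.map Y = volume.withDensity q :=
        (Measure.withDensity_rnDeriv_eq _ _ hY'.1).symm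
      have hSym : Measurable fun y => S ((x, z), y) :=
        hSm.comp measurable_prodMk_left
      rw [hmapY, lintegral_withDensity_eq_lintegral_mul volume hqm hSym]
      have step1 : ∫⁻ y, (q * fun y => S ((x, z), y)) y ∂volume
          ≤ ∫⁻ y, g (x - y) * k (y - z) / f (x - z) ∂volume := by
        apply lintegral_mono_ae
        filter_upwards [Measure.rnDeriv_lt_top (P.map Y) volume] with y hy
        simp only [Pi.mul_apply, hS_def]
        exact ennreal_mul_div_mul_le hy.ne
      refine step1.trans ?_
      have step2 : ∫⁻ y, g (x - y) * k (y - z) / f (x - z) ∂volume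
          = (∫⁻ y, g (x - y) * k (y - z) ∂volume) / f (x - z) := by
        simp_rw [div_eq_mul_inv]
        exact lintegral_mul_const' _ _ (by simp [hp.1.ne'])
      rw [step2]
      have step3 : ∫⁻ y, g (x - y) * k (y - z) ∂volume = C (x - z) := by
        simp only [hC_def]
        have h := lintegral_add_right_eq_self (μ := volume) (fun y => g (x - y) * k (y - z)) z
        simp only [add_sub_cancel_right] at h
        rw [← h]
        congr 1
        funext s
        congr 2
        ring
      rw [step3]
    calc ∫⁻ p, ∫⁻ y, S (p, y) ∂(P.map Y) ∂(P.map X).prod (P.map Z)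
        ≤ ∫⁻ p, C (p.1 - p.2) / f (p.1 - p.2) ∂(P.map X).prod (P.map Z) :=
          lintegral_mono_ae hinner
      _ = ∫⁻ w, C w / f w ∂(P.map (X - Z)) := by
          rw [hmapXZ, lintegral_map (f := fun w => C w / f w) (g := fun p : ℝ × ℝ => p.1 - p.2) (hCm.div hfm) (measurable_fst.sub measurable_snd)]
      _ = ∫⁻ w, f w * (C w / f w) ∂volume := by
          rw [show P.map (X - Z) = volume.withDensity f from
            (Measure.withDensity_rnDeriv_eq _ _ hXZ.1).symm,
            lintegral_withDensity_eq_lintegral_mul volume hfm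
              (show Measurable fun w => C w / f w from hCm.div hfm)]
          rfl
      _ ≤ ∫⁻ w, C w ∂volume := lintegral_mono fun w => ENNReal.mul_div_le
      _ = ∫⁻ s, (∫⁻ w, g (w - s) ∂volume) * k s ∂volume := by
          simp only [hC_def]
          rw [lintegral_lintegral_swap
            (((hgm.comp (measurable_fst.sub measurable_snd)).mul
              (hkm.comp measurable_snd)).aemeasurable)]
          congr 1
          funext s
          exact lintegral_mul_const _ (hgm.comp (measurable_id.sub measurable_const))
      _ = 1 := by
          have hg1 : ∀ s : ℝ, (∫⁻ w, g (w - s) ∂volume) = 1 := by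
            intro s
            have := lintegral_add_right_eq_self (μ := volume) g (-s)
            simp_rw [← sub_eq_add_neg] at this
            rw [this, Measure.lintegral_rnDeriv hXY.1]
            simp
          simp_rw [hg1, one_mul]
          rw [Measure.lintegral_rnDeriv hYZ.1]
          simp
  -- real-valued version
  set r : Ω → ℝ := fun ω => (R ω).toReal with hr_def
  have hRlt : ∀ᵐ ω ∂P, R ω < ⊤ := ae_lt_top hRm (lt_of_le_of_lt key (by norm_num)).ne
  have hrint : Integrable r P := integrable_toReal_of_lintegral_ne_top hRm.aemeasurable
    (lt_of_le_of_lt key (by norm_num)).ne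
  have hrle : ∫ ω, r ω ∂P ≤ 1 := by
    rw [hr_def]
    rw [integral_toReal hRm.aemeasurable hRlt]
    exact ENNReal.toReal_le_of_le_ofReal zero_le_one (by simpa using key)
  -- a.e. identity between log r and the sum of log-densities
  have haelog : ∀ᵐ ω ∂P,
      Real.log (g ((X - Y) ω)).toReal + Real.log (k ((Y - Z) ω)).toReal
        - Real.log (q (Y ω)).toReal - Real.log (f ((X - Z) ω)).toReal = Real.log (r ω) := by
    filter_upwards [haeXZ, haeXY, haeYZ, haeY] with ω h1 h2 h3 h4
    have hfx := h1; have hgx := h2; have hkx := h3; have hqx := h4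
    simp only [Pi.sub_apply] at hfx hgx hkx hqx ⊢
    simp only [hr_def, hR_def, hS_def]
    rw [ENNReal.toReal_div, ENNReal.toReal_mul, ENNReal.toReal_mul]
    rw [Real.log_div, Real.log_mul, Real.log_mul]
    · ring
    · exact ENNReal.toReal_ne_zero.mpr ⟨hqx.1.ne', hqx.2.ne⟩
    · exact ENNReal.toReal_ne_zero.mpr ⟨hfx.1.ne', hfx.2.ne⟩
    · exact ENNReal.toReal_ne_zero.mpr ⟨hgx.1.ne', hgx.2.ne⟩
    · exact ENNReal.toReal_ne_zero.mpr ⟨hkx.1.ne', hkx.2.ne⟩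
    · exact (mul_ne_zero (ENNReal.toReal_ne_zero.mpr ⟨hgx.1.ne', hgx.2.ne⟩)
        (ENNReal.toReal_ne_zero.mpr ⟨hkx.1.ne', hkx.2.ne⟩))
    · exact (mul_ne_zero (ENNReal.toReal_ne_zero.mpr ⟨hqx.1.ne', hqx.2.ne⟩)
        (ENNReal.toReal_ne_zero.mpr ⟨hfx.1.ne', hfx.2.ne⟩))
  have hrpos : ∀ᵐ ω ∂P, 0 < r ω := by
    filter_upwards [haeXZ, haeXY, haeYZ, haeY] with ω h1 h2 h3 h4
    simp only [Pi.sub_apply] at h1 h2 h3 h4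
    simp only [hr_def, hR_def, hS_def]
    apply ENNReal.toReal_pos
    · rw [Ne, ENNReal.div_eq_zero_iff]
      push_neg
      constructor
      · exact mul_ne_zero h2.1.ne' h3.1.ne'
      · exact (ENNReal.mul_lt_top h4.2 h1.2).ne
    · rw [Ne, ENNReal.div_eq_top]
      push_neg
      constructor
      · intro _
        exact mul_ne_zero h4.1.ne' h1.1.ne'
      · intro h
        exact absurd h (ENNReal.mul_lt_top h2.2 h3.2).ne
  -- log of integrable
  have hLint : Integrable (fun ω => Real.log (r ω)) P := by
    apply Integrable.congr _ haelog
    exact ((hiXY.add hiYZ).sub hiY).sub hiXZ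
  -- log r ≤ r - 1 a.e.
  have hlogle : ∫ ω, Real.log (r ω) ∂P ≤ ∫ ω, (r ω - 1) ∂P := by
    apply integral_mono_ae hLint (hrint.sub (integrable_const 1))
    filter_upwards [hrpos] with ω hω
    exact Real.log_le_sub_one_of_pos hω
  have hsum : ∫ ω, Real.log (r ω) ∂P ≤ 0 := by
    refine hlogle.trans ?_
    rw [integral_sub hrint (integrable_const 1), integral_const]
    simp only [Measure.real, measure_univ, ENNReal.toReal_one, smul_eq_mul, one_mul]
    linarith
  -- conclude
  rw [hdXZ, hdXY, hdYZ, hdY]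
  have hA : Integrable (fun ω => Real.log (g ((X - Y) ω)).toReal
      + Real.log (k ((Y - Z) ω)).toReal) P := hiXY.add hiYZ
  have hB : Integrable (fun ω => Real.log (g ((X - Y) ω)).toReal
      + Real.log (k ((Y - Z) ω)).toReal - Real.log (q (Y ω)).toReal) P := hA.sub hiY
  have hint_eq : ∫ ω, Real.log (r ω) ∂P
      = ∫ ω, Real.log (g ((X - Y) ω)).toReal ∂P + ∫ ω, Real.log (k ((Y - Z) ω)).toReal ∂P
        - ∫ ω, Real.log (q (Y ω)).toReal ∂P - ∫ ω, Real.log (f ((X - Z) ω)).toReal ∂P := by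
    calc ∫ ω, Real.log (r ω) ∂P
        = ∫ ω, (Real.log (g ((X - Y) ω)).toReal + Real.log (k ((Y - Z) ω)).toReal
            - Real.log (q (Y ω)).toReal - Real.log (f ((X - Z) ω)).toReal) ∂P :=
          (integral_congr_ae haelog).symm
      _ = _ := by
          rw [integral_sub hB hiXZ, integral_sub hA hiY, integral_add hiXY hiYZ]
  linarith [hint_eq, hsum]
end

section
/- If X, Y, Z are independent real-valued continuous random variables with all relevant differential entropies existing and finite, then h(X-Z) + h(Y) ≤ h(X+Y) + h(Y+Z). -/
open MeasureTheory ProbabilityTheory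

open scoped ENNReal
open ENNReal

private lemma inv_mul_le_one' (x : ℝ≥0∞) : x⁻¹ * x ≤ 1 := by
  rcases eq_or_ne x 0 with h | h0
  · simp [h]
  rcases eq_or_ne x ∞ with h | ht
  · simp [h]
  · rw [ENNReal.inv_mul_cancel h0 ht]

private lemma div_mul_le_self' (b g : ℝ≥0∞) : b / g * g ≤ b := by
  rw [div_eq_mul_inv, mul_assoc, mul_comm g⁻¹ g]
  exact mul_le_of_le_one_right' (mul_comm g⁻¹ g ▸ inv_mul_le_one' g)

/-- If `X, Y, Z` are independent continuous random variables with all relevant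
differential entropies existing and finite, then `h(X-Z) + h(Y) ≤ h(X+Y) + h(Y+Z)`. -/
theorem diffEntropy_sum_diff_ineq
    {Ω : Type*} [MeasurableSpace Ω] (P : Measure Ω) [IsProbabilityMeasure P]
    (X Y Z : Ω → ℝ) (hX : Measurable X) (hY : Measurable Y) (hZ : Measurable Z)
    (hindep : iIndepFun ![X, Y, Z] P)
    (h1 : FiniteDent volume P (X - Z)) (h2 : FiniteDent volume P Y)
    (h3 : FiniteDent volume P (X + Y)) (h4 : FiniteDent volume P (Y + Z)) :
    dent volume P (X - Z) + dent volume P Y ≤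
      dent volume P (X + Y) + dent volume P (Y + Z) := by
  classical
  obtain ⟨hacU, hintU⟩ := h1
  obtain ⟨hacV, hintV⟩ := h2
  obtain ⟨hacS, hintS⟩ := h3
  obtain ⟨hacT, hintT⟩ := h4
  set U : Ω → ℝ := X - Z with hUdef
  set S : Ω → ℝ := X + Y with hSdef
  set T : Ω → ℝ := Y + Z with hTdef
  have hUm : Measurable U := hX.sub hZ
  have hSm : Measurable S := hX.add hY
  have hTm : Measurable T := hY.add hZ
  haveI : IsProbabilityMeasure (P.map U) := Measure.isProbabilityMeasure_map hUm.aemeasurable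
  haveI : IsProbabilityMeasure (P.map Y) := Measure.isProbabilityMeasure_map hY.aemeasurable
  haveI : IsProbabilityMeasure (P.map S) := Measure.isProbabilityMeasure_map hSm.aemeasurable
  haveI : IsProbabilityMeasure (P.map T) := Measure.isProbabilityMeasure_map hTm.aemeasurable
  set p := (P.map U).rnDeriv volume with hpdef
  set g := (P.map Y).rnDeriv volume with hgdef
  set a := (P.map S).rnDeriv volume with hadef
  set b := (P.map T).rnDeriv volume with hbdef
  have hpm : Measurable p := Measure.measurable_rnDeriv _ _
  have hgm : Measurable g := Measure.measurable_rnDeriv _ _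
  have ham : Measurable a := Measure.measurable_rnDeriv _ _
  have hbm : Measurable b := Measure.measurable_rnDeriv _ _
  -- Independence : (X, Z) is independent of Y
  have hIndep : IndepFun (fun ω => (X ω, Z ω)) Y P := by
    have hmeas : ∀ i, Measurable (![X, Y, Z] i) := by
      intro i; fin_cases i <;> simpa using ‹_›
    have := hindep.indepFun_prodMk hmeas 0 2 1 (by decide) (by decide)
    simpa using this
  have hmapPair :
      P.map (fun ω => ((X ω, Z ω), Y ω)) =
        (P.map (fun ω => (X ω, Z ω))).prod (P.map Y) :=
    (indepFun_iff_map_prod_eq_prod_map_map ((hX.prodMk hZ)).aemeasurable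
      hY.aemeasurable).mp hIndep
  have hmapU :
      (P.map (fun ω => (X ω, Z ω))).map (fun q : ℝ × ℝ => q.1 - q.2) = P.map U := by
    rw [Measure.map_map (g := fun q : ℝ × ℝ => q.1 - q.2) (measurable_fst.sub measurable_snd) (hX.prodMk hZ)]
    rfl
  -- the density ratio function
  set F : (ℝ × ℝ) × ℝ → ℝ≥0∞ :=
    fun q => (a (q.1.1 + q.2) / p (q.1.1 - q.1.2)) * (b (q.2 + q.1.2) / g q.2) with hFdef
  have hFm : Measurable F := by
    apply Measurable.mul
    · exact (ham.comp (measurable_fst.fst.add measurable_snd)).div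
        (hpm.comp (measurable_fst.fst.sub measurable_fst.snd))
    · exact (hbm.comp (measurable_snd.add measurable_fst.snd)).div
        (hgm.comp measurable_snd)
  -- convolution of a and b
  set c : ℝ → ℝ≥0∞ := fun u => ∫⁻ s, a (u + s) * b s with hcdef
  have hcm : Measurable c := by
    apply Measurable.lintegral_prod_right (f := fun (u : ℝ) (s : ℝ) => a (u + s) * b s)
    exact (ham.comp (measurable_fst.add measurable_snd)).mul (hbm.comp measurable_snd)
  have hshift : ∀ x z : ℝ, (∫⁻ y, a (x + y) * b (y + z)) = c (x - z) := by
    intro x z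
    rw [← lintegral_add_right_eq_self (fun y => a (x + y) * b (y + z)) (-z)]
    refine lintegral_congr fun s => ?_
    congr 1
    · congr 1; ring
    · congr 1; ring
  have hcint : (∫⁻ u, c u) ≤ 1 := by
    have hswap : (∫⁻ u, c u) = ∫⁻ s, ∫⁻ u, a (u + s) * b s := by
      refine lintegral_lintegral_swap ?_
      exact ((ham.comp (measurable_fst.add measurable_snd)).mul
        (hbm.comp measurable_snd)).aemeasurable
    rw [hswap]
    have : ∀ s : ℝ, (∫⁻ u, a (u + s) * b s) = b s := by
      intro s
      have hma : Measurable fun u : ℝ => a (u + s) := by fun_prop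
      rw [lintegral_mul_const _ hma,
        lintegral_add_right_eq_self a s, Measure.lintegral_rnDeriv hacS]
      simp
    calc (∫⁻ s, ∫⁻ u, a (u + s) * b s) = ∫⁻ s, b s := lintegral_congr this
      _ = (P.map T) Set.univ := Measure.lintegral_rnDeriv hacT
      _ ≤ 1 := by simp
  -- main lintegral bound
  have key : (∫⁻ ω, F ((X ω, Z ω), Y ω) ∂P) ≤ 1 := by
    have h1' : (∫⁻ ω, F ((X ω, Z ω), Y ω) ∂P) =
        ∫⁻ q, F q ∂((P.map (fun ω => (X ω, Z ω))).prod (P.map Y)) := by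
      rw [← hmapPair, lintegral_map hFm ((hX.prodMk hZ).prodMk hY)]
    rw [h1', lintegral_prod F hFm.aemeasurable]
    have inner : ∀ q : ℝ × ℝ, (∫⁻ y, F (q, y) ∂(P.map Y)) ≤
        c (q.1 - q.2) * (p (q.1 - q.2))⁻¹ := by
      rintro ⟨x, z⟩
      have hmeas' : AEMeasurable (fun y => F ((x, z), y)) volume := by
        exact (hFm.comp (measurable_const.prodMk measurable_id)).aemeasurable
      calc (∫⁻ y, F ((x, z), y) ∂(P.map Y))
          = ∫⁻ y, g y * F ((x, z), y) := by
            rw [lintegral_rnDeriv_mul hacV hmeas']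
        _ ≤ ∫⁻ y, (a (x + y) * b (y + z)) * (p (x - z))⁻¹ := by
            refine lintegral_mono fun y => ?_
            simp only [hFdef]
            calc g y * (a (x + y) / p (x - z) * (b (y + z) / g y))
                = (a (x + y) / p (x - z)) * (b (y + z) / g y * g y) := by ring
              _ ≤ (a (x + y) / p (x - z)) * b (y + z) :=
                  mul_le_mul_right (div_mul_le_self' _ _) _
              _ = (a (x + y) * b (y + z)) * (p (x - z))⁻¹ := by
                  rw [div_eq_mul_inv]; ring
        _ = (∫⁻ y, a (x + y) * b (y + z)) * (p (x - z))⁻¹ := by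
            have hma : Measurable fun y : ℝ => a (x + y) * b (y + z) := by fun_prop
            rw [lintegral_mul_const _ hma]
        _ = c (x - z) * (p (x - z))⁻¹ := by rw [hshift]
    calc (∫⁻ q, ∫⁻ y, F (q, y) ∂(P.map Y) ∂(P.map (fun ω => (X ω, Z ω))))
        ≤ ∫⁻ q, c (q.1 - q.2) * (p (q.1 - q.2))⁻¹ ∂(P.map (fun ω => (X ω, Z ω))) :=
          lintegral_mono inner
      _ = ∫⁻ u, c u * (p u)⁻¹ ∂(P.map U) := by
          rw [← hmapU, lintegral_map (f := fun u => c u * (p u)⁻¹) (g := fun q : ℝ × ℝ => q.1 - q.2) (hcm.mul hpm.inv) (measurable_fst.sub measurable_snd)]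
      _ = ∫⁻ u, p u * (c u * (p u)⁻¹) := by
          rw [lintegral_rnDeriv_mul hacU (f := fun u => c u * (p u)⁻¹) (hcm.mul hpm.inv).aemeasurable]
      _ ≤ ∫⁻ u, c u := by
          refine lintegral_mono fun u => ?_
          calc p u * (c u * (p u)⁻¹) = c u * ((p u)⁻¹ * p u) := by ring
            _ ≤ c u * 1 := mul_le_mul_right (inv_mul_le_one' _) _
            _ = c u := mul_one _
      _ ≤ 1 := hcint
  -- W as a function on Ω
  set W : Ω → ℝ≥0∞ := fun ω => F ((X ω, Z ω), Y ω) with hWdef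
  have hWm : Measurable W := hFm.comp ((hX.prodMk hZ).prodMk hY)
  have hWfin : ∀ᵐ ω ∂P, W ω < ∞ := ae_lt_top hWm (lt_of_le_of_lt key one_lt_top).ne
  have hWint : Integrable (fun ω => (W ω).toReal) P :=
    integrable_toReal_of_lintegral_ne_top hWm.aemeasurable
      (lt_of_le_of_lt key one_lt_top).ne
  have hWintval : (∫ ω, (W ω).toReal ∂P) ≤ 1 := by
    rw [integral_toReal hWm.aemeasurable hWfin]
    simpa using ENNReal.toReal_mono one_ne_top key
  -- a.e. positivity and finiteness of densities at the random points
  have haepos : ∀ (R : Ω → ℝ) (hRm : Measurable R) (hac : P.map R ≪ volume),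
      ∀ᵐ ω ∂P, 0 < (P.map R).rnDeriv volume (R ω) ∧
        (P.map R).rnDeriv volume (R ω) < ∞ := by
    intro R hRm hac
    have h0 : ∀ᵐ x ∂(P.map R), 0 < (P.map R).rnDeriv volume x ∧
        (P.map R).rnDeriv volume x < ∞ :=
      (Measure.rnDeriv_pos hac).and (hac.ae_le (Measure.rnDeriv_lt_top _ _))
    have hset : MeasurableSet {x : ℝ | 0 < (P.map R).rnDeriv volume x ∧
        (P.map R).rnDeriv volume x < ∞} := by
      have heq : {x : ℝ | 0 < (P.map R).rnDeriv volume x ∧ (P.map R).rnDeriv volume x < ∞}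
          = ((P.map R).rnDeriv volume) ⁻¹' (Set.Ioo 0 ∞) := rfl
      rw [heq]; exact (Measure.measurable_rnDeriv _ _) measurableSet_Ioo
    exact (ae_map_iff hRm.aemeasurable hset).mp h0
  have haeU := haepos U hUm hacU
  have haeV := haepos Y hY hacV
  have haeS := haepos S hSm hacS
  have haeT := haepos T hTm hacT
  -- pointwise log inequality
  have hptwise : ∀ᵐ ω ∂P,
      Real.log ((a (S ω)).toReal) + Real.log ((b (T ω)).toReal)
        - Real.log ((p (U ω)).toReal) - Real.log ((g (Y ω)).toReal)
        ≤ (W ω).toReal - 1 := by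
    filter_upwards [haeU, haeV, haeS, haeT] with ω hU hV hS hT
    obtain ⟨hU0, hUt⟩ := hU
    obtain ⟨hV0, hVt⟩ := hV
    obtain ⟨hS0, hSt⟩ := hS
    obtain ⟨hT0, hTt⟩ := hT
    have hSa : S ω = X ω + Y ω := rfl
    have hTa : T ω = Y ω + Z ω := rfl
    have hUa : U ω = X ω - Z ω := rfl
    have hWval : (W ω).toReal =
        ((a (S ω)).toReal / (p (U ω)).toReal) * ((b (T ω)).toReal / (g (Y ω)).toReal) := by
      simp only [hWdef, hFdef]
      rw [ENNReal.toReal_mul, ENNReal.toReal_div, ENNReal.toReal_div, ← hSa, ← hTa, ← hUa]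
    have hA : 0 < (a (S ω)).toReal := ENNReal.toReal_pos hS0.ne' hSt.ne
    have hB : 0 < (b (T ω)).toReal := ENNReal.toReal_pos hT0.ne' hTt.ne
    have hP : 0 < (p (U ω)).toReal := ENNReal.toReal_pos hU0.ne' hUt.ne
    have hG : 0 < (g (Y ω)).toReal := ENNReal.toReal_pos hV0.ne' hVt.ne
    have hWpos : 0 < (W ω).toReal := by
      rw [hWval]; positivity
    have hlog : Real.log ((W ω).toReal) =
        Real.log ((a (S ω)).toReal) + Real.log ((b (T ω)).toReal)
          - Real.log ((p (U ω)).toReal) - Real.log ((g (Y ω)).toReal) := by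
      rw [hWval, Real.log_mul (by positivity) (by positivity),
        Real.log_div hA.ne' hP.ne', Real.log_div hB.ne' hG.ne']
      ring
    rw [← hlog]
    exact Real.log_le_sub_one_of_pos hWpos
  -- integrability of the pulled-back log densities
  have hpull : ∀ (R : Ω → ℝ) (hRm : Measurable R),
      Integrable (fun x => Real.log (((P.map R).rnDeriv volume x).toReal)) (P.map R) →
      Integrable (fun ω => Real.log (((P.map R).rnDeriv volume (R ω)).toReal)) P := by
    intro R hRm hint
    have hfm : Measurable fun x : ℝ => Real.log (((P.map R).rnDeriv volume x).toReal) :=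
      (Measure.measurable_rnDeriv _ _).ennreal_toReal.log
    exact (integrable_map_measure hfm.aestronglyMeasurable hRm.aemeasurable).mp hint
  have hiU : Integrable (fun ω => Real.log ((p (U ω)).toReal)) P := hpull U hUm hintU
  have hiV : Integrable (fun ω => Real.log ((g (Y ω)).toReal)) P := hpull Y hY hintV
  have hiS : Integrable (fun ω => Real.log ((a (S ω)).toReal)) P := hpull S hSm hintS
  have hiT : Integrable (fun ω => Real.log ((b (T ω)).toReal)) P := hpull T hTm hintT
  have hiST : Integrable
      (fun ω => Real.log ((a (S ω)).toReal) + Real.log ((b (T ω)).toReal)) P := hiS.add hiT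
  have hiSTU : Integrable (fun ω => Real.log ((a (S ω)).toReal) + Real.log ((b (T ω)).toReal)
      - Real.log ((p (U ω)).toReal)) P := hiST.sub hiU
  have hiSTUV : Integrable (fun ω => Real.log ((a (S ω)).toReal) + Real.log ((b (T ω)).toReal)
      - Real.log ((p (U ω)).toReal) - Real.log ((g (Y ω)).toReal)) P := hiSTU.sub hiV
  -- rewrite dent via integral_map
  have hdent : ∀ (R : Ω → ℝ) (hRm : Measurable R),
      dent volume P R = -∫ ω, Real.log (((P.map R).rnDeriv volume (R ω)).toReal) ∂P := by
    intro R hRm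
    have hfm : Measurable fun x : ℝ => Real.log (((P.map R).rnDeriv volume x).toReal) :=
      (Measure.measurable_rnDeriv _ _).ennreal_toReal.log
    unfold dent
    exact congrArg Neg.neg (integral_map hRm.aemeasurable hfm.aestronglyMeasurable)
  rw [hdent U hUm, hdent Y hY, hdent S hSm, hdent T hTm,
    ← hpdef, ← hgdef, ← hadef, ← hbdef]
  -- final computation
  have hsum : (∫ ω, (Real.log ((a (S ω)).toReal) + Real.log ((b (T ω)).toReal)
      - Real.log ((p (U ω)).toReal) - Real.log ((g (Y ω)).toReal)) ∂P)
      = (∫ ω, Real.log ((a (S ω)).toReal) ∂P) + (∫ ω, Real.log ((b (T ω)).toReal) ∂P)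
        - (∫ ω, Real.log ((p (U ω)).toReal) ∂P) - (∫ ω, Real.log ((g (Y ω)).toReal) ∂P) := by
    rw [integral_sub hiSTU hiV, integral_sub hiST hiU, integral_add hiS hiT]
  have hmain : (∫ ω, (Real.log ((a (S ω)).toReal) + Real.log ((b (T ω)).toReal)
      - Real.log ((p (U ω)).toReal) - Real.log ((g (Y ω)).toReal)) ∂P) ≤ 0 := by
    have h1 : (∫ ω, (Real.log ((a (S ω)).toReal) + Real.log ((b (T ω)).toReal)
        - Real.log ((p (U ω)).toReal) - Real.log ((g (Y ω)).toReal)) ∂P)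
        ≤ ∫ ω, ((W ω).toReal - 1) ∂P :=
      integral_mono_ae hiSTUV (hWint.sub (integrable_const 1)) hptwise
    have h2 : (∫ ω, ((W ω).toReal - 1) ∂P) = (∫ ω, (W ω).toReal ∂P) - 1 := by
      rw [integral_sub hWint (integrable_const 1)]
      simp
    linarith [hWintval]
  rw [hsum] at hmain
  linarith
end

section
/- If X, Y, Z are independent real-valued continuous random variables with all relevant differential entropies existing and finite, then h(X+Y+Z) + h(Y) ≤ h(X+Y) + h(Y+Z). -/
open MeasureTheory ProbabilityTheory
open scoped ENNReal

namespace DentAux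

lemma map_add_prod_eq (μ ν : Measure ℝ) [IsProbabilityMeasure μ] [IsProbabilityMeasure ν]
    (hν : ν ≪ volume) :
    Measure.map (fun p : ℝ × ℝ => p.1 + p.2) (μ.prod ν) =
      volume.withDensity (fun u => ∫⁻ x, ν.rnDeriv volume (u - x) ∂μ) := by
  set q : ℝ → ℝ≥0∞ := ν.rnDeriv volume with hq
  have hqm : Measurable q := Measure.measurable_rnDeriv ν volume
  have hDm : Measurable (fun u => ∫⁻ x, q (u - x) ∂μ) := by
    apply Measurable.lintegral_prod_right
    exact hqm.comp (measurable_fst.sub measurable_snd)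
  ext E hE
  rw [Measure.map_apply (by fun_prop) hE, withDensity_apply _ hE,
    Measure.prod_apply (measurable_add hE)]
  have hν' : ν = volume.withDensity q := (Measure.withDensity_rnDeriv_eq ν volume hν).symm
  have key : ∀ x : ℝ, ν (Prod.mk x ⁻¹' ((fun p : ℝ × ℝ => p.1 + p.2) ⁻¹' E))
      = ∫⁻ u, E.indicator (fun _ => 1) u * q (u - x) ∂volume := by
    intro x
    have hsm : MeasurableSet {y : ℝ | x + y ∈ E} :=
      (show Measurable fun y : ℝ => x + y by fun_prop) hE
    have hset : (Prod.mk x ⁻¹' ((fun p : ℝ × ℝ => p.1 + p.2) ⁻¹' E))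
        = {y : ℝ | x + y ∈ E} := rfl
    rw [hset, hν', withDensity_apply _ hsm,
      ← lintegral_indicator hsm]
    have heq : ∀ y : ℝ, {y : ℝ | x + y ∈ E}.indicator q y
        = (fun u => E.indicator (fun _ => 1) u * q (u - x)) (x + y) := by
      intro y
      simp only [Set.indicator, Set.mem_setOf_eq, add_sub_cancel_left]
      by_cases h : x + y ∈ E <;> simp [h]
    simp_rw [heq]
    exact lintegral_add_left_eq_self (fun u => E.indicator (fun _ => 1) u * q (u - x)) x
  simp_rw [key]
  rw [lintegral_lintegral_swap (((measurable_indicator_const_iff 1).mpr hE |>.comp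
      measurable_snd |>.mul (hqm.comp (measurable_snd.sub measurable_fst))).aemeasurable),
    ← lintegral_indicator hE]
  refine lintegral_congr fun u => ?_
  by_cases h : u ∈ E <;> simp [h]

lemma conv_rnDeriv (μ ν : Measure ℝ) [IsProbabilityMeasure μ] [IsProbabilityMeasure ν]
    (hν : ν ≪ volume) :
    (Measure.map (fun p : ℝ × ℝ => p.1 + p.2) (μ.prod ν)).rnDeriv volume =ᵐ[volume]
      fun u => ∫⁻ x, ν.rnDeriv volume (u - x) ∂μ := by
  rw [map_add_prod_eq μ ν hν]
  exact Measure.rnDeriv_withDensity volume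
    (Measurable.lintegral_prod_right ((Measure.measurable_rnDeriv ν volume).comp
      (measurable_fst.sub measurable_snd)))

lemma ennreal_cancel_le {A c g : ℝ≥0∞} (hg : g ≠ ∞) : A * (c * g)⁻¹ * g ≤ A * c⁻¹ := by
  rcases eq_or_ne g 0 with h0 | h0
  · simp [h0]
  · rw [ENNReal.mul_inv (Or.inr hg) (Or.inr h0), mul_assoc, mul_assoc,
      ENNReal.inv_mul_cancel h0 hg, mul_one]

end DentAux

/-- If `X, Y, Z` are independent continuous random variables with all relevant
differential entropies existing and finite, then `h(X+Y+Z) + h(Y) ≤ h(X+Y) + h(Y+Z)`. -/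
theorem diffEntropy_triple_sum_ineq
    {Ω : Type*} [MeasurableSpace Ω] (P : Measure Ω) [IsProbabilityMeasure P]
    (X Y Z : Ω → ℝ) (hX : Measurable X) (hY : Measurable Y) (hZ : Measurable Z)
    (hindep : iIndepFun ![X, Y, Z] P)
    (h1 : FiniteDent volume P (X + Y + Z)) (h2 : FiniteDent volume P Y)
    (h3 : FiniteDent volume P (X + Y)) (h4 : FiniteDent volume P (Y + Z)) :
    dent volume P (X + Y + Z) + dent volume P Y ≤
      dent volume P (X + Y) + dent volume P (Y + Z) := by
  classical
  have hS : Measurable (X + Y + Z) := ((hX.add hY).add hZ)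
  have hA : Measurable (X + Y) := hX.add hY
  have hB : Measurable (Y + Z) := hY.add hZ
  haveI : IsProbabilityMeasure (P.map X) := Measure.isProbabilityMeasure_map hX.aemeasurable
  haveI : IsProbabilityMeasure (P.map Y) := Measure.isProbabilityMeasure_map hY.aemeasurable
  haveI : IsProbabilityMeasure (P.map Z) := Measure.isProbabilityMeasure_map hZ.aemeasurable
  haveI : IsProbabilityMeasure (P.map (X + Y)) := Measure.isProbabilityMeasure_map hA.aemeasurable
  haveI : IsProbabilityMeasure (P.map (Y + Z)) := Measure.isProbabilityMeasure_map hB.aemeasurable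
  haveI : IsProbabilityMeasure (P.map (X + Y + Z)) := Measure.isProbabilityMeasure_map hS.aemeasurable
  set f' : ℝ → ℝ≥0∞ := (P.map (X + Y + Z)).rnDeriv volume with hf'def
  set g' : ℝ → ℝ≥0∞ := (P.map Y).rnDeriv volume with hg'def
  set p' : ℝ → ℝ≥0∞ := (P.map (X + Y)).rnDeriv volume with hp'def
  set q' : ℝ → ℝ≥0∞ := (P.map (Y + Z)).rnDeriv volume with hq'def
  have hf'm : Measurable f' := Measure.measurable_rnDeriv _ _
  have hg'm : Measurable g' := Measure.measurable_rnDeriv _ _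
  have hp'm : Measurable p' := Measure.measurable_rnDeriv _ _
  have hq'm : Measurable q' := Measure.measurable_rnDeriv _ _
  have hmeas : ∀ i, Measurable (![X, Y, Z] i) := by
    intro i
    fin_cases i <;> simp [hX, hY, hZ]
  have hIndZY : IndepFun Z Y P := by
    simpa using hindep.indepFun (show (2 : Fin 3) ≠ 1 by decide)
  have hIndX_ZYpair : IndepFun X (fun ω => (Z ω, Y ω)) P := by
    have := hindep.indepFun_prodMk hmeas 2 1 0 (by decide) (by decide)
    simpa using this.symm
  have hIndX_YZpair : IndepFun X (fun ω => (Y ω, Z ω)) P := by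
    have := hindep.indepFun_prodMk hmeas 1 2 0 (by decide) (by decide)
    simpa using this.symm
  have hIndXYpair_Z : IndepFun (fun ω => (X ω, Y ω)) Z P := by
    have := hindep.indepFun_prodMk hmeas 0 1 2 (by decide) (by decide)
    simpa using this
  have hIndX_YZ : IndepFun X (Y + Z) P :=
    hIndX_YZpair.comp measurable_id (measurable_fst.add measurable_snd)
  have hIndZ_XY : IndepFun Z (X + Y) P :=
    (hIndXYpair_Z.comp (measurable_fst.add measurable_snd) measurable_id).symm
  have hmapS1 : P.map (X + Y + Z)
      = Measure.map (fun p : ℝ × ℝ => p.1 + p.2) ((P.map X).prod (P.map (Y + Z))) := by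
    have hpair : P.map (fun ω => (X ω, (Y + Z) ω)) = (P.map X).prod (P.map (Y + Z)) :=
      (indepFun_iff_map_prod_eq_prod_map_map hX.aemeasurable hB.aemeasurable).mp hIndX_YZ
    rw [← hpair, Measure.map_map (by fun_prop) (hX.prodMk hB)]
    congr 1
    funext ω
    show X ω + Y ω + Z ω = X ω + (Y ω + Z ω)
    ring
  have hmapS2 : P.map (X + Y + Z)
      = Measure.map (fun p : ℝ × ℝ => p.1 + p.2) ((P.map Z).prod (P.map (X + Y))) := by
    have hpair : P.map (fun ω => (Z ω, (X + Y) ω)) = (P.map Z).prod (P.map (X + Y)) :=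
      (indepFun_iff_map_prod_eq_prod_map_map hZ.aemeasurable hA.aemeasurable).mp hIndZ_XY
    rw [← hpair, Measure.map_map (by fun_prop) (hZ.prodMk hA)]
    congr 1
    funext ω
    show X ω + Y ω + Z ω = Z ω + (X ω + Y ω)
    ring
  have hdensS2 : f' =ᵐ[volume] fun u => ∫⁻ z, p' (u - z) ∂(P.map Z) := by
    have := DentAux.conv_rnDeriv (P.map Z) (P.map (X + Y)) h3.1
    rw [← hmapS2] at this
    exact this
  have hjoint : P.map (fun ω => (X ω, (Z ω, Y ω)))
      = (P.map X).prod ((P.map Z).prod (P.map Y)) := by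
    have e1 : P.map (fun ω => (Z ω, Y ω)) = (P.map Z).prod (P.map Y) :=
      (indepFun_iff_map_prod_eq_prod_map_map hZ.aemeasurable hY.aemeasurable).mp hIndZY
    have e2 := (indepFun_iff_map_prod_eq_prod_map_map hX.aemeasurable
        (hZ.prodMk hY).aemeasurable).mp hIndX_ZYpair
    rw [e2, e1]
  set G' : Ω → ℝ≥0∞ := fun ω => (q' ((Y + Z) ω) * p' ((X + Y) ω))
      / (f' ((X + Y + Z) ω) * g' (Y ω)) with hG'def
  have hHm : Measurable (fun v : ℝ × ℝ × ℝ =>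
      (q' (v.2.2 + v.2.1) * p' (v.1 + v.2.2)) / (f' (v.1 + v.2.2 + v.2.1) * g' v.2.2)) := by
    apply Measurable.div
    · exact (hq'm.comp (measurable_snd.snd.add measurable_snd.fst)).mul
        (hp'm.comp (measurable_fst.add measurable_snd.snd))
    · exact (hf'm.comp ((measurable_fst.add measurable_snd.snd).add measurable_snd.fst)).mul
        (hg'm.comp measurable_snd.snd)
  have hG'm : Measurable G' :=
    hHm.comp (hX.prodMk (hZ.prodMk hY))
  
  have hinner : ∀ x z : ℝ,
      (∫⁻ y, (q' (y + z) * p' (x + y)) / (f' (x + y + z) * g' y) ∂(P.map Y))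
        ≤ ∫⁻ u, q' (u - x) * p' (u - z) * (f' u)⁻¹ ∂volume := by
    intro x z
    have hintm : Measurable fun y : ℝ =>
        (q' (y + z) * p' (x + y)) / (f' (x + y + z) * g' y) := by
      apply Measurable.div
      · exact (hq'm.comp (measurable_id.add_const z)).mul
          (hp'm.comp (measurable_const_add x))
      · exact (hf'm.comp ((measurable_const_add x).add_const z)).mul hg'm
    conv_lhs => rw [← Measure.withDensity_rnDeriv_eq (P.map Y) volume h2.1]
    rw [lintegral_withDensity_eq_lintegral_mul volume hg'm hintm]
    have hle : (fun y => (g' * fun y => (q' (y + z) * p' (x + y)) /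
          (f' (x + y + z) * g' y)) y)
        ≤ᵐ[volume] fun y => q' (y + z) * p' (x + y) * (f' (x + y + z))⁻¹ := by
      filter_upwards [Measure.rnDeriv_ne_top (P.map Y) volume] with y hy
      simp only [Pi.mul_apply]
      rw [mul_comm, div_eq_mul_inv]
      exact DentAux.ennreal_cancel_le hy
    refine (lintegral_mono_ae hle).trans ?_
    rw [← lintegral_add_left_eq_self (fun u => q' (u - x) * p' (u - z) * (f' u)⁻¹) (x + z)]
    refine le_of_eq (lintegral_congr fun y => ?_)
    have e1 : x + z + y - x = y + z := by ring
    have e2 : x + z + y - z = x + y := by ring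
    have e3 : x + z + y = x + y + z := by ring
    rw [e1, e2, e3]
  have hone : ∀ a : ℝ≥0∞, a⁻¹ * a ≤ 1 := by
    intro a
    rcases eq_or_ne a 0 with h | h
    · simp [h]
    rcases eq_or_ne a ∞ with h' | h'
    · simp [h']
    · rw [ENNReal.inv_mul_cancel h h']
  have hI : ∫⁻ ω, G' ω ∂P ≤ 1 := by
    have hmap : ∫⁻ ω, G' ω ∂P = ∫⁻ v : ℝ × ℝ × ℝ,
        (q' (v.2.2 + v.2.1) * p' (v.1 + v.2.2)) / (f' (v.1 + v.2.2 + v.2.1) * g' v.2.2)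
          ∂((P.map X).prod ((P.map Z).prod (P.map Y))) := by
      rw [← hjoint, lintegral_map hHm (hX.prodMk (hZ.prodMk hY))]
      rfl
    rw [hmap, lintegral_prod _ hHm.aemeasurable]
    have hx_bound : ∀ x : ℝ, (∫⁻ zy : ℝ × ℝ,
        (q' (zy.2 + zy.1) * p' (x + zy.2)) / (f' (x + zy.2 + zy.1) * g' zy.2)
          ∂((P.map Z).prod (P.map Y))) ≤ 1 := by
      intro x
      rw [lintegral_prod]
      case hf => exact (hHm.comp (measurable_const.prodMk measurable_id)).aemeasurable
      calc ∫⁻ z, ∫⁻ y, (q' (y + z) * p' (x + y)) / (f' (x + y + z) * g' y)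
              ∂(P.map Y) ∂(P.map Z)
          ≤ ∫⁻ z, ∫⁻ u, q' (u - x) * p' (u - z) * (f' u)⁻¹ ∂volume ∂(P.map Z) :=
            lintegral_mono fun z => hinner x z
        _ = ∫⁻ u, ∫⁻ z, q' (u - x) * p' (u - z) * (f' u)⁻¹ ∂(P.map Z) ∂volume := by
            apply lintegral_lintegral_swap
            exact (((hq'm.comp (measurable_snd.sub measurable_const)).mul
              (hp'm.comp (measurable_snd.sub measurable_fst))).mul
              ((hf'm.comp measurable_snd).inv)).aemeasurable
        _ = ∫⁻ u, (q' (u - x) * (f' u)⁻¹) * ∫⁻ z, p' (u - z) ∂(P.map Z) ∂volume := by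
            refine lintegral_congr fun u => ?_
            have hm : Measurable fun z : ℝ => p' (u - z) :=
              hp'm.comp (measurable_const.sub measurable_id)
            rw [← lintegral_const_mul _ hm]
            refine lintegral_congr fun z => ?_
            ring
        _ ≤ ∫⁻ u, q' (u - x) ∂volume := by
            apply lintegral_mono_ae
            filter_upwards [hdensS2] with u hu
            rw [← hu]
            calc q' (u - x) * (f' u)⁻¹ * f' u
                = q' (u - x) * ((f' u)⁻¹ * f' u) := by ring
              _ ≤ q' (u - x) * 1 := mul_le_mul_right (hone _) _
              _ = q' (u - x) := mul_one _
        _ = ∫⁻ u, q' u ∂volume := lintegral_sub_right_eq_self q' x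
        _ = 1 := by
            rw [Measure.lintegral_rnDeriv h4.1]
            simp
    calc ∫⁻ x, (∫⁻ zy : ℝ × ℝ, (q' (zy.2 + zy.1) * p' (x + zy.2)) /
            (f' (x + zy.2 + zy.1) * g' zy.2) ∂((P.map Z).prod (P.map Y))) ∂(P.map X)
        ≤ ∫⁻ _ : ℝ, 1 ∂(P.map X) := lintegral_mono fun x => hx_bound x
      _ = 1 := by simp
  have haefacts : ∀ (W : Ω → ℝ), Measurable W → P.map W ≪ volume →
      ∀ᵐ ω ∂P, 0 < (P.map W).rnDeriv volume (W ω) ∧ (P.map W).rnDeriv volume (W ω) < ∞ := by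
    intro W hW hac
    refine ae_of_ae_map (p := fun u => 0 < (P.map W).rnDeriv volume u ∧
      (P.map W).rnDeriv volume u < ∞) hW.aemeasurable ?_
    filter_upwards [Measure.rnDeriv_pos hac,
      (Measure.rnDeriv_lt_top (P.map W) volume).filter_mono hac.ae_le] with u hu1 hu2
    exact ⟨hu1, hu2⟩
  have haeS := haefacts _ hS h1.1
  have haeY := haefacts _ hY h2.1
  have haeA := haefacts _ hA h3.1
  have haeB := haefacts _ hB h4.1
  have logm : ∀ m : Measure ℝ, Measurable fun x : ℝ => Real.log ((m.rnDeriv volume x).toReal) :=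
    fun m => Real.measurable_log.comp (Measure.measurable_rnDeriv m volume).ennreal_toReal
  have intc : Integrable (fun ω => Real.log ((f' ((X + Y + Z) ω)).toReal)) P := by
    have := (integrable_map_measure (logm _).aestronglyMeasurable hS.aemeasurable).mp h1.2
    simpa [Function.comp_def] using this
  have intd : Integrable (fun ω => Real.log ((g' (Y ω)).toReal)) P := by
    have := (integrable_map_measure (logm _).aestronglyMeasurable hY.aemeasurable).mp h2.2
    simpa [Function.comp_def] using this
  have intb : Integrable (fun ω => Real.log ((p' ((X + Y) ω)).toReal)) P := by
    have := (integrable_map_measure (logm _).aestronglyMeasurable hA.aemeasurable).mp h3.2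
    simpa [Function.comp_def] using this
  have inta : Integrable (fun ω => Real.log ((q' ((Y + Z) ω)).toReal)) P := by
    have := (integrable_map_measure (logm _).aestronglyMeasurable hB.aemeasurable).mp h4.2
    simpa [Function.comp_def] using this
  have dentrw : ∀ (W : Ω → ℝ), Measurable W →
      dent volume P W = -∫ ω, Real.log (((P.map W).rnDeriv volume (W ω)).toReal) ∂P := by
    intro W hW
    unfold dent
    rw [integral_map hW.aemeasurable (logm _).aestronglyMeasurable]
  have hGint : Integrable (fun ω => (G' ω).toReal) P :=
    integrable_toReal_of_lintegral_ne_top hG'm.aemeasurable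
      (lt_of_le_of_lt hI ENNReal.one_lt_top).ne
  have hGval : ∫ ω, (G' ω).toReal ∂P ≤ 1 := by
    have hfin : ∀ᵐ ω ∂P, G' ω < ∞ := by
      filter_upwards [haeB, haeA, haeS, haeY] with ω ha hb hc hd
      exact ENNReal.div_lt_top (ENNReal.mul_ne_top ha.2.ne hb.2.ne)
        (mul_ne_zero hc.1.ne' hd.1.ne')
    rw [integral_toReal hG'm.aemeasurable hfin]
    calc (∫⁻ ω, G' ω ∂P).toReal ≤ (1 : ℝ≥0∞).toReal :=
          ENNReal.toReal_mono ENNReal.one_ne_top hI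
      _ = 1 := by simp
  have hpt : ∀ᵐ ω ∂P,
      Real.log ((q' ((Y + Z) ω)).toReal) + Real.log ((p' ((X + Y) ω)).toReal)
        - Real.log ((f' ((X + Y + Z) ω)).toReal) - Real.log ((g' (Y ω)).toReal)
        ≤ (G' ω).toReal - 1 := by
    filter_upwards [haeB, haeA, haeS, haeY] with ω ha hb hc hd
    have hat : 0 < (q' ((Y + Z) ω)).toReal := ENNReal.toReal_pos ha.1.ne' ha.2.ne
    have hbt : 0 < (p' ((X + Y) ω)).toReal := ENNReal.toReal_pos hb.1.ne' hb.2.ne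
    have hct : 0 < (f' ((X + Y + Z) ω)).toReal := ENNReal.toReal_pos hc.1.ne' hc.2.ne
    have hdt : 0 < (g' (Y ω)).toReal := ENNReal.toReal_pos hd.1.ne' hd.2.ne
    have hGre : (G' ω).toReal = ((q' ((Y + Z) ω)).toReal * (p' ((X + Y) ω)).toReal)
        / ((f' ((X + Y + Z) ω)).toReal * (g' (Y ω)).toReal) := by
      simp only [hG'def, ENNReal.toReal_div, ENNReal.toReal_mul]
    have ht : 0 < ((q' ((Y + Z) ω)).toReal * (p' ((X + Y) ω)).toReal)
        / ((f' ((X + Y + Z) ω)).toReal * (g' (Y ω)).toReal) :=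
      div_pos (mul_pos hat hbt) (mul_pos hct hdt)
    have hlog := Real.log_le_sub_one_of_pos ht
    rw [Real.log_div (mul_pos hat hbt).ne' (mul_pos hct hdt).ne',
      Real.log_mul hat.ne' hbt.ne', Real.log_mul hct.ne' hdt.ne'] at hlog
    rw [hGre]
    linarith
  have h2int : Integrable (fun ω =>
      Real.log ((q' ((Y + Z) ω)).toReal) + Real.log ((p' ((X + Y) ω)).toReal)
        - Real.log ((f' ((X + Y + Z) ω)).toReal) - Real.log ((g' (Y ω)).toReal)) P :=
    ((inta.add intb).sub intc).sub intd
  have hsum : ∫ ω, (Real.log ((q' ((Y + Z) ω)).toReal) + Real.log ((p' ((X + Y) ω)).toReal)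
      - Real.log ((f' ((X + Y + Z) ω)).toReal) - Real.log ((g' (Y ω)).toReal)) ∂P ≤ 0 := by
    calc ∫ ω, (Real.log ((q' ((Y + Z) ω)).toReal) + Real.log ((p' ((X + Y) ω)).toReal)
          - Real.log ((f' ((X + Y + Z) ω)).toReal) - Real.log ((g' (Y ω)).toReal)) ∂P
        ≤ ∫ ω, ((G' ω).toReal - 1) ∂P :=
          integral_mono_ae h2int (hGint.sub (integrable_const 1)) hpt
      _ = (∫ ω, (G' ω).toReal ∂P) - 1 := by
          rw [integral_sub hGint (integrable_const 1)]
          simp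
      _ ≤ 0 := by linarith
  have hsplit : ∫ ω, (Real.log ((q' ((Y + Z) ω)).toReal) + Real.log ((p' ((X + Y) ω)).toReal)
      - Real.log ((f' ((X + Y + Z) ω)).toReal) - Real.log ((g' (Y ω)).toReal)) ∂P
      = (∫ ω, Real.log ((q' ((Y + Z) ω)).toReal) ∂P)
        + (∫ ω, Real.log ((p' ((X + Y) ω)).toReal) ∂P)
        - (∫ ω, Real.log ((f' ((X + Y + Z) ω)).toReal) ∂P)
        - (∫ ω, Real.log ((g' (Y ω)).toReal) ∂P) := by
    have intab : Integrable (fun ω => Real.log ((q' ((Y + Z) ω)).toReal)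
        + Real.log ((p' ((X + Y) ω)).toReal)) P := inta.add intb
    have intabc : Integrable (fun ω => Real.log ((q' ((Y + Z) ω)).toReal)
        + Real.log ((p' ((X + Y) ω)).toReal)
        - Real.log ((f' ((X + Y + Z) ω)).toReal)) P := intab.sub intc
    rw [integral_sub intabc intd, integral_sub intab intc, integral_add inta intb]
  rw [dentrw _ hS, dentrw _ hY, dentrw _ hA, dentrw _ hB]
  rw [hsplit] at hsum
  linarith
end

section
/- Doubling-difference inequality (upper bound): If X1, X2 are independent and identically distributed real-valued continuous random variables with all relevant differential entropies existing and finite, then h(X1+X2) - h(X1) ≤ 2·(h(X1-X2) - h(X1)). -/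
open MeasureTheory ProbabilityTheory
open scoped ENNReal

namespace DDU


lemma mul_inv_mul_le (a b : ℝ≥0∞) : a * b⁻¹ * b ≤ a := by
  rcases eq_or_ne b 0 with rfl | hb0
  · simp
  rcases eq_or_ne b ⊤ with rfl | hbt
  · simp
  · rw [mul_assoc, ENNReal.inv_mul_cancel hb0 hbt, mul_one]

lemma cancel_div_le (a b c : ℝ≥0∞) : c * (a / (b * c)) ≤ a / b := by
  rcases eq_or_ne c 0 with rfl | hc0
  · simp
  rcases eq_or_ne c ⊤ with rfl | hct
  · rcases eq_or_ne b 0 with rfl | hb0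
    · rcases eq_or_ne a 0 with rfl | ha0
      · simp
      · simp [ENNReal.div_zero ha0]
    · rw [ENNReal.mul_top hb0, ENNReal.div_top, mul_zero]
      exact zero_le
  · have h1 : (b * c)⁻¹ = b⁻¹ * c⁻¹ := ENNReal.mul_inv (Or.inr hct) (Or.inr hc0)
    have : c * (a / (b * c)) = a / b := by
      calc c * (a / (b * c)) = c * (a * (b⁻¹ * c⁻¹)) := by rw [div_eq_mul_inv, h1]
      _ = a * b⁻¹ * (c * c⁻¹) := by ring
      _ = a / b := by rw [ENNReal.mul_inv_cancel hc0 hct, mul_one, div_eq_mul_inv]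
    exact this.le

lemma ofReal_max_identity {a b c : ℝ} (h : a = b + c) :
    ENNReal.ofReal a + ENNReal.ofReal (-b) + ENNReal.ofReal (-c)
      = ENNReal.ofReal (-a) + ENNReal.ofReal b + ENNReal.ofReal c := by
  have hm : ∀ x : ℝ, (ENNReal.ofReal x).toReal = max x 0 := by
    intro x
    rcases le_total x 0 with hx | hx
    · simp [ENNReal.ofReal_of_nonpos hx, max_eq_right hx]
    · simp [ENNReal.toReal_ofReal hx, max_eq_left hx]
  have hmax : ∀ x : ℝ, max x 0 = (x + |x|) / 2 := by
    intro x
    rcases abs_cases x with ⟨h1, h2⟩ | ⟨h1, h2⟩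
    · rw [h1, max_eq_left h2]; ring
    · rw [h1, max_eq_right (le_of_lt h2)]; ring
  rw [← ENNReal.toReal_eq_toReal_iff' (by finiteness) (by finiteness)]
  rw [ENNReal.toReal_add (by finiteness) (by finiteness),
    ENNReal.toReal_add (by finiteness) (by finiteness),
    ENNReal.toReal_add (by finiteness) (by finiteness),
    ENNReal.toReal_add (by finiteness) (by finiteness)]
  rw [hm, hm, hm, hm, hm, hm, hmax, hmax, hmax, hmax, hmax, hmax]
  have habs : |(-a)| = |a| := abs_neg a
  have hb : |(-b)| = |b| := abs_neg b
  have hc : |(-c)| = |c| := abs_neg c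
  rw [habs, hb, hc]
  subst h
  ring

/-- Gibbs inequality in robust form. -/
lemma gibbs {W : Type*} [MeasurableSpace W] (Q : Measure W) [IsProbabilityMeasure Q]
    (R : W → ℝ≥0∞) (hR : Measurable R) (hmass : ∫⁻ w, R w ∂Q ≤ 1)
    (hpos : ∀ᵐ w ∂Q, R w ≠ 0) (hfin : ∀ᵐ w ∂Q, R w ≠ ⊤)
    (L : W → ℝ) (hLm : Measurable L) (hL : ∀ᵐ w ∂Q, L w = Real.log (R w).toReal) :
    ∫⁻ w, ENNReal.ofReal (L w) ∂Q ≤ 1 ∧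
      ∫⁻ w, ENNReal.ofReal (L w) ∂Q ≤ ∫⁻ w, ENNReal.ofReal (-L w) ∂Q := by
  have hptwise : ∀ᵐ w ∂Q, ENNReal.ofReal (L w) ≤ R w := by
    filter_upwards [hpos, hfin, hL] with w hw0 hwt hLw
    have ht : 0 < (R w).toReal := ENNReal.toReal_pos hw0 hwt
    rw [hLw]
    calc ENNReal.ofReal (Real.log (R w).toReal)
        ≤ ENNReal.ofReal ((R w).toReal) := by
          apply ENNReal.ofReal_le_ofReal
          linarith [Real.log_le_sub_one_of_pos ht]
    _ = R w := ENNReal.ofReal_toReal hwt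
  have hLp : ∫⁻ w, ENNReal.ofReal (L w) ∂Q ≤ 1 :=
    le_trans (lintegral_mono_ae hptwise) hmass
  refine ⟨hLp, ?_⟩
  rcases eq_or_ne (∫⁻ w, ENNReal.ofReal (-L w) ∂Q) ⊤ with hLn | hLn
  · rw [hLn]; exact le_top
  -- L is integrable
  have hint : Integrable L Q := by
    constructor
    · exact hLm.aestronglyMeasurable
    · rw [hasFiniteIntegral_iff_norm]
      have : ∀ w, ENNReal.ofReal ‖L w‖ ≤ ENNReal.ofReal (L w) + ENNReal.ofReal (-L w) := by
        intro w
        rcases le_total (L w) 0 with hw | hw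
        · rw [Real.norm_eq_abs, abs_of_nonpos hw]
          exact le_add_self
        · rw [Real.norm_eq_abs, abs_of_nonneg hw]
          exact le_self_add
      calc ∫⁻ w, ENNReal.ofReal ‖L w‖ ∂Q
          ≤ ∫⁻ w, (ENNReal.ofReal (L w) + ENNReal.ofReal (-L w)) ∂Q := lintegral_mono this
      _ = (∫⁻ w, ENNReal.ofReal (L w) ∂Q) + ∫⁻ w, ENNReal.ofReal (-L w) ∂Q := by
          exact lintegral_add_left (by measurability) _
      _ < ⊤ := ENNReal.add_lt_top.mpr ⟨lt_of_le_of_lt hLp (by norm_num), hLn.lt_top⟩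
  have hRint : Integrable (fun w => (R w).toReal) Q := by
    apply integrable_toReal_of_lintegral_ne_top hR.aemeasurable
    exact ne_top_of_le_ne_top (by norm_num) hmass
  have hbound : ∀ᵐ w ∂Q, L w ≤ (R w).toReal - 1 := by
    filter_upwards [hpos, hfin, hL] with w hw0 hwt hLw
    rw [hLw]
    exact Real.log_le_sub_one_of_pos (ENNReal.toReal_pos hw0 hwt)
  have hIL : ∫ w, L w ∂Q ≤ 0 := by
    calc ∫ w, L w ∂Q ≤ ∫ w, ((R w).toReal - 1) ∂Q :=
          integral_mono_ae hint (hRint.sub (integrable_const 1)) hbound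
    _ = (∫ w, (R w).toReal ∂Q) - 1 := by
        rw [integral_sub hRint (integrable_const 1), integral_const]; simp
    _ ≤ 0 := by
        have : ∫ w, (R w).toReal ∂Q ≤ 1 := by
          rw [integral_toReal hR.aemeasurable (hfin.mono fun w h => h.lt_top)]
          exact le_trans (ENNReal.toReal_le_toReal (ne_top_of_le_ne_top (by norm_num) hmass)
            (by norm_num) |>.mpr hmass) (by norm_num)
        linarith
  have hrepr := integral_eq_lintegral_pos_part_sub_lintegral_neg_part hint
  rw [hrepr] at hIL
  have h1 : (∫⁻ w, ENNReal.ofReal (L w) ∂Q).toReal ≤ (∫⁻ w, ENNReal.ofReal (-L w) ∂Q).toReal := by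
    linarith
  exact (ENNReal.toReal_le_toReal (ne_top_of_le_ne_top (by norm_num) hLp) hLn).mp h1

/-- If `A = A1 + A2`, `A` is integrable, and each `Ai` satisfies the one-sided Gibbs bounds,
then `∫ A ≥ 0`. -/
lemma integral_nonneg_of_parts {W : Type*} [MeasurableSpace W] (Q : Measure W)
    [IsProbabilityMeasure Q] (A A1 A2 : W → ℝ)
    (hsum : ∀ w, A w = A1 w + A2 w) (hAint : Integrable A Q)
    (hm1 : Measurable A1) (hm2 : Measurable A2)
    (hN1 : ∫⁻ w, ENNReal.ofReal (-A1 w) ∂Q ≤ 1)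
    (hN2 : ∫⁻ w, ENNReal.ofReal (-A2 w) ∂Q ≤ 1)
    (hG1 : ∫⁻ w, ENNReal.ofReal (-A1 w) ∂Q ≤ ∫⁻ w, ENNReal.ofReal (A1 w) ∂Q)
    (hG2 : ∫⁻ w, ENNReal.ofReal (-A2 w) ∂Q ≤ ∫⁻ w, ENNReal.ofReal (A2 w) ∂Q) :
    0 ≤ ∫ w, A w ∂Q := by
  have hmA : Measurable A := by
    have : A = fun w => A1 w + A2 w := funext hsum
    rw [this]; exact hm1.add hm2
  set PA := ∫⁻ w, ENNReal.ofReal (A w) ∂Q with hPA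
  set NA := ∫⁻ w, ENNReal.ofReal (-A w) ∂Q with hNA
  set P1 := ∫⁻ w, ENNReal.ofReal (A1 w) ∂Q
  set P2 := ∫⁻ w, ENNReal.ofReal (A2 w) ∂Q
  set N1 := ∫⁻ w, ENNReal.ofReal (-A1 w) ∂Q
  set N2 := ∫⁻ w, ENNReal.ofReal (-A2 w) ∂Q
  have hPAfin : PA ≠ ⊤ := by
    have hb : ∀ w, ENNReal.ofReal (A w) ≤ (‖A w‖₊ : ℝ≥0∞) := fun w => Real.ofReal_le_enorm _
    exact ne_top_of_le_ne_top hAint.2.ne (lintegral_mono hb)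
  have hNAfin : NA ≠ ⊤ := by
    have hb : ∀ w, ENNReal.ofReal (-A w) ≤ (‖A w‖₊ : ℝ≥0∞) := by
      intro w
      calc ENNReal.ofReal (-A w) ≤ (‖-A w‖₊ : ℝ≥0∞) := Real.ofReal_le_enorm _
      _ = (‖A w‖₊ : ℝ≥0∞) := by rw [nnnorm_neg]
    exact ne_top_of_le_ne_top hAint.2.ne (lintegral_mono hb)
  have mOf : ∀ {g : W → ℝ}, Measurable g → Measurable fun w => ENNReal.ofReal (g w) :=
    fun hg => ENNReal.measurable_ofReal.comp hg
  -- key identity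
  have hkey : PA + N1 + N2 = NA + P1 + P2 := by
    have e1 : PA + N1 + N2
        = ∫⁻ w, (ENNReal.ofReal (A w) + ENNReal.ofReal (-A1 w) + ENNReal.ofReal (-A2 w)) ∂Q := by
      rw [lintegral_add_left (f := fun w => ENNReal.ofReal (A w) + ENNReal.ofReal (-A1 w)) ((mOf hmA).add (mOf hm1.neg)), lintegral_add_left (mOf hmA)]
    have e2 : NA + P1 + P2
        = ∫⁻ w, (ENNReal.ofReal (-A w) + ENNReal.ofReal (A1 w) + ENNReal.ofReal (A2 w)) ∂Q := by
      rw [lintegral_add_left (f := fun w => ENNReal.ofReal (-A w) + ENNReal.ofReal (A1 w)) ((mOf hmA.neg).add (mOf hm1)), lintegral_add_left (f := fun w => ENNReal.ofReal (-A w)) (mOf hmA.neg)]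
    rw [e1, e2]
    exact lintegral_congr fun w => ofReal_max_identity (hsum w)
  have hge : NA ≤ PA := by
    have h1 : NA + N1 + N2 ≤ NA + P1 + P2 := by
      gcongr
    rw [← hkey] at h1
    have hN1f : N1 ≠ ⊤ := ne_top_of_le_ne_top (by norm_num) hN1
    have hN2f : N2 ≠ ⊤ := ne_top_of_le_ne_top (by norm_num) hN2
    calc NA = NA + N1 + N2 - N2 - N1 := by
          rw [ENNReal.add_sub_cancel_right hN2f, ENNReal.add_sub_cancel_right hN1f]
    _ ≤ PA + N1 + N2 - N2 - N1 := by gcongr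
    _ = PA := by rw [ENNReal.add_sub_cancel_right hN2f, ENNReal.add_sub_cancel_right hN1f]
  rw [integral_eq_lintegral_pos_part_sub_lintegral_neg_part hAint]
  have := (ENNReal.toReal_le_toReal hNAfin hPAfin).mpr hge
  linarith


lemma conv_def (μ ν : Measure ℝ) :
    μ.conv ν = (μ.prod ν).map (fun p : ℝ × ℝ => p.1 + p.2) := rfl

lemma conv_assoc (μ ν ρ : Measure ℝ) [SFinite μ] [SFinite ν] [SFinite ρ] :
    (μ.conv ν).conv ρ = μ.conv (ν.conv ρ) := by
  have hadd : Measurable (fun p : ℝ × ℝ => p.1 + p.2) := measurable_add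
  rw [conv_def, conv_def, conv_def, conv_def]
  have h1 : (Measure.map (fun p : ℝ × ℝ => p.1 + p.2) (μ.prod ν)).prod ρ
      = Measure.map (Prod.map (fun p : ℝ × ℝ => p.1 + p.2) id) ((μ.prod ν).prod ρ) := by
    rw [← Measure.map_prod_map _ _ hadd measurable_id, Measure.map_id]
  have h2 : μ.prod (Measure.map (fun p : ℝ × ℝ => p.1 + p.2) (ν.prod ρ))
      = Measure.map (Prod.map id (fun p : ℝ × ℝ => p.1 + p.2)) (μ.prod (ν.prod ρ)) := by
    rw [← Measure.map_prod_map _ _ measurable_id hadd, Measure.map_id]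
  rw [h1, h2]
  rw [Measure.map_map hadd (hadd.prodMap measurable_id),
    Measure.map_map hadd (measurable_id.prodMap hadd)]
  rw [← Measure.prodAssoc_prod (μ := μ) (ν := ν) (τ := ρ)]
  rw [Measure.map_map (by exact hadd.comp (measurable_id.prodMap hadd))
    MeasurableEquiv.prodAssoc.measurable]
  congr 1
  ext p
  simp [Function.comp, MeasurableEquiv.prodAssoc, add_assoc]

/-- density of a convolution where the first factor has a density. -/
lemma conv_withDensity (μ ν : Measure ℝ) [IsProbabilityMeasure μ] [IsProbabilityMeasure ν]
    (hμ : μ ≪ volume) :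
    μ.conv ν = volume.withDensity (fun w => ∫⁻ y, μ.rnDeriv volume (w - y) ∂ν) := by
  have hf : Measurable (μ.rnDeriv volume) := Measure.measurable_rnDeriv μ volume
  ext A hA
  rw [Measure.conv_comm, conv_def]
  rw [Measure.map_apply measurable_add hA]
  rw [Measure.prod_apply (measurable_add hA)]
  have key : ∀ y : ℝ, μ ((fun x => (y, x)) ⁻¹' ((fun p : ℝ × ℝ => p.1 + p.2) ⁻¹' A))
      = ∫⁻ w in A, μ.rnDeriv volume (w - y) ∂volume := by
    intro y
    have : ((fun x => (y, x)) ⁻¹' ((fun p : ℝ × ℝ => p.1 + p.2) ⁻¹' A)) = (fun x => y + x) ⁻¹' A := by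
      ext x; simp
    rw [this]
    have h1 : μ ((fun x => y + x) ⁻¹' A) = ∫⁻ x in ((fun x => y + x) ⁻¹' A), μ.rnDeriv volume x ∂volume := by
      rw [← withDensity_apply _ ((measurable_const_add y) hA)]
      rw [Measure.withDensity_rnDeriv_eq μ volume hμ]
    rw [h1]
    -- substitute x = w - y
    have h2 := (measurePreserving_add_right (volume : Measure ℝ) y).setLIntegral_comp_preimage_emb
      (measurableEmbedding_addRight y) (fun w => μ.rnDeriv volume (w - y)) A
    simp only [add_sub_cancel_right] at h2
    rw [← h2]
    congr 1
    ext x; simp [add_comm]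
  rw [lintegral_congr key]
  rw [withDensity_apply _ hA]
  rw [lintegral_lintegral_swap]
  · exact (hf.comp (measurable_snd.sub measurable_fst)).aemeasurable
lemma map_sub_eq_conv_neg (μ ν : Measure ℝ) [SFinite μ] [SFinite ν] :
    (μ.prod ν).map (fun p : ℝ × ℝ => p.1 - p.2) = μ.conv (ν.map Neg.neg) := by
  have hadd : Measurable (fun p : ℝ × ℝ => p.1 + p.2) := measurable_add
  rw [conv_def]
  have h1 : μ.prod (ν.map Neg.neg) = (μ.prod ν).map (Prod.map id Neg.neg) := by
    rw [← Measure.map_prod_map _ _ measurable_id measurable_neg, Measure.map_id]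
  rw [h1, Measure.map_map hadd (measurable_id.prodMap measurable_neg)]
  have hfun : (fun p : ℝ × ℝ => p.1 + p.2) ∘ (Prod.map id Neg.neg)
      = (fun p : ℝ × ℝ => p.1 - p.2) := by
    ext p; simp [sub_eq_add_neg]
  rw [hfun]

lemma dens_ae {μ : Measure ℝ} [SigmaFinite μ] (h : μ ≪ volume) :
    ∀ᵐ x ∂μ, μ.rnDeriv volume x ≠ 0 ∧ μ.rnDeriv volume x ≠ ⊤ := by
  filter_upwards [Measure.rnDeriv_pos h, h.ae_le (Measure.rnDeriv_lt_top μ volume)] with x h1 h2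
  exact ⟨h1.ne', h2.ne⟩

section Key

variable (ρ : Measure ℝ) [IsProbabilityMeasure ρ] (hρac : ρ ≪ volume)

theorem key (hρac : ρ ≪ volume) (σ δ : Measure ℝ)
    (hσ : σ = (ρ.prod ρ).map (fun p : ℝ × ℝ => p.1 + p.2))
    (hδ : δ = (ρ.prod ρ).map (fun p : ℝ × ℝ => p.1 - p.2))
    (hσac : σ ≪ volume) (hδac : δ ≪ volume)
    (hρint : Integrable (fun x => Real.log (ρ.rnDeriv volume x).toReal) ρ)
    (hσint : Integrable (fun x => Real.log (σ.rnDeriv volume x).toReal) σ)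
    (hδint : Integrable (fun x => Real.log (δ.rnDeriv volume x).toReal) δ) :
    2 * ∫ x, Real.log (δ.rnDeriv volume x).toReal ∂δ ≤
      (∫ x, Real.log (σ.rnDeriv volume x).toReal ∂σ) +
        ∫ x, Real.log (ρ.rnDeriv volume x).toReal ∂ρ := by
  have hadd : Measurable (fun p : ℝ × ℝ => p.1 + p.2) := measurable_add
  have hsub : Measurable (fun p : ℝ × ℝ => p.1 - p.2) := measurable_sub
  haveI : IsProbabilityMeasure σ := by
    rw [hσ]; exact Measure.isProbabilityMeasure_map hadd.aemeasurable
  haveI : IsProbabilityMeasure δ := by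
    rw [hδ]; exact Measure.isProbabilityMeasure_map hsub.aemeasurable
  set f := ρ.rnDeriv volume with hf
  set sh := σ.rnDeriv volume with hsh
  set dh := δ.rnDeriv volume with hdh
  have hfm : Measurable f := Measure.measurable_rnDeriv ρ volume
  have hshm : Measurable sh := Measure.measurable_rnDeriv σ volume
  have hdhm : Measurable dh := Measure.measurable_rnDeriv δ volume
  set Th : ℝ → ℝ≥0∞ := fun w => ∫⁻ z, dh (w - z) ∂ρ with hTh
  have hThm : Measurable Th :=
    Measurable.lintegral_prod_right (f := fun w z => dh (w - z)) (hdhm.comp measurable_sub)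
  -- τ = δ ∗ ρ = σ ∗ ρ⁻ , with density Th
  have hτ : (σ.prod ρ).map (fun q : ℝ × ℝ => q.1 - q.2) = volume.withDensity Th := by
    rw [map_sub_eq_conv_neg, hσ, ← conv_def, conv_assoc,
      ← map_sub_eq_conv_neg, ← hδ, Measure.conv_comm, conv_withDensity δ ρ hδac]
  -- the triple product
  set Pi3 : Measure ((ℝ × ℝ) × ℝ) := (ρ.prod ρ).prod ρ with hPi3
  haveI : IsProbabilityMeasure Pi3 := by rw [hPi3]; infer_instance
  -- coordinate maps
  set φS : (ℝ × ℝ) × ℝ → ℝ := fun p => p.1.1 + p.1.2 with hφS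
  set φY : (ℝ × ℝ) × ℝ → ℝ := fun p => p.2 with hφY
  set φD1 : (ℝ × ℝ) × ℝ → ℝ := fun p => p.1.1 - p.2 with hφD1
  set φD2 : (ℝ × ℝ) × ℝ → ℝ := fun p => p.1.2 - p.2 with hφD2
  set φT : (ℝ × ℝ) × ℝ → ℝ := fun p => p.1.1 + p.1.2 - p.2 with hφT
  have hφSm : Measurable φS := (measurable_fst.fst.add measurable_fst.snd)
  have hφYm : Measurable φY := measurable_snd
  have hφD1m : Measurable φD1 := (measurable_fst.fst.sub measurable_snd)
  have hφD2m : Measurable φD2 := (measurable_fst.snd.sub measurable_snd)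
  have hφTm : Measurable φT := ((measurable_fst.fst.add measurable_fst.snd).sub measurable_snd)
  -- pushforward identities
  have hfst : Pi3.map Prod.fst = ρ.prod ρ := by
    rw [hPi3, Measure.map_fst_prod]; simp
  have hS : Pi3.map φS = σ := by
    have : φS = (fun p : ℝ × ℝ => p.1 + p.2) ∘ Prod.fst := rfl
    rw [this, ← Measure.map_map hadd measurable_fst, hfst, ← hσ]
  have hY : Pi3.map φY = ρ := by
    rw [hPi3]; rw [show φY = (Prod.snd : (ℝ×ℝ)×ℝ → ℝ) from rfl, Measure.map_snd_prod]; simp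
  have hpair1 : Pi3.map (fun p : (ℝ × ℝ) × ℝ => (p.1.1, p.2)) = ρ.prod ρ := by
    have : (fun p : (ℝ × ℝ) × ℝ => (p.1.1, p.2)) = Prod.map Prod.fst (id : ℝ → ℝ) := rfl
    rw [this, hPi3, ← Measure.map_prod_map _ _ measurable_fst measurable_id, Measure.map_id,
      Measure.map_fst_prod]
    simp
  have hpair2 : Pi3.map (fun p : (ℝ × ℝ) × ℝ => (p.1.2, p.2)) = ρ.prod ρ := by
    have : (fun p : (ℝ × ℝ) × ℝ => (p.1.2, p.2)) = Prod.map Prod.snd (id : ℝ → ℝ) := rfl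
    rw [this, hPi3, ← Measure.map_prod_map _ _ measurable_snd measurable_id, Measure.map_id,
      Measure.map_snd_prod]
    simp
  have hD1 : Pi3.map φD1 = δ := by
    have : φD1 = (fun p : ℝ × ℝ => p.1 - p.2) ∘ (fun p : (ℝ × ℝ) × ℝ => (p.1.1, p.2)) := rfl
    rw [this, ← Measure.map_map hsub (measurable_fst.fst.prodMk measurable_snd), hpair1, ← hδ]
  have hD2 : Pi3.map φD2 = δ := by
    have : φD2 = (fun p : ℝ × ℝ => p.1 - p.2) ∘ (fun p : (ℝ × ℝ) × ℝ => (p.1.2, p.2)) := rfl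
    rw [this, ← Measure.map_map hsub (measurable_fst.snd.prodMk measurable_snd), hpair2, ← hδ]
  have hP5 : Pi3.map (fun p : (ℝ × ℝ) × ℝ => (p.1.1 + p.1.2, p.2)) = σ.prod ρ := by
    have : (fun p : (ℝ × ℝ) × ℝ => (p.1.1 + p.1.2, p.2))
        = Prod.map (fun q : ℝ × ℝ => q.1 + q.2) (id : ℝ → ℝ) := rfl
    rw [this, hPi3, ← Measure.map_prod_map _ _ hadd measurable_id, Measure.map_id, ← hσ]
  have hT : Pi3.map φT = volume.withDensity Th := by
    have : φT = (fun q : ℝ × ℝ => q.1 - q.2) ∘ (fun p : (ℝ × ℝ) × ℝ => (p.1.1 + p.1.2, p.2)) := rfl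
    rw [this, ← Measure.map_map (f := fun p : (ℝ × ℝ) × ℝ => (p.1.1 + p.1.2, p.2)) hsub ((measurable_fst.fst.add measurable_fst.snd).prodMk
      measurable_snd), hP5, hτ]
  -- mass of Th
  have hmassTh : ∫⁻ w, Th w ∂volume = 1 := by
    show (∫⁻ w, ∫⁻ z, dh (w - z) ∂ρ ∂volume) = 1
    rw [lintegral_lintegral_swap (f := fun w z => dh (w - z)) (μ := volume) (ν := ρ)
      ((hdhm.comp (measurable_fst.sub measurable_snd)).aemeasurable)]
    have : ∀ z : ℝ, ∫⁻ w, dh (w - z) ∂volume = 1 := by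
      intro z
      rw [(measurePreserving_sub_right (volume : Measure ℝ) z).lintegral_comp hdhm]
      rw [hdh, Measure.lintegral_rnDeriv hδac]
      simp
    simp only [this]
    simp
  -- alternate form of Th
  have hρd : (volume : Measure ℝ).withDensity f = ρ := Measure.withDensity_rnDeriv_eq ρ volume hρac
  have hρlint : ∀ (g : ℝ → ℝ≥0∞), Measurable g → ∫⁻ z, g z ∂ρ = ∫⁻ z, f z * g z ∂volume := by
    intro g hg
    rw [← hρd, lintegral_withDensity_eq_lintegral_mul volume hfm hg]
    rfl
  have hT2 : ∀ w, Th w = ∫⁻ a, dh a * f (w - a) ∂volume := by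
    intro w
    show (∫⁻ z, dh (w - z) ∂ρ) = _
    rw [hρlint (fun z => dh (w - z)) (hdhm.comp (measurable_const.sub measurable_id))]
    rw [← (Measure.measurePreserving_sub_left (volume : Measure ℝ) w).lintegral_comp
      (show Measurable fun z : ℝ => f z * dh (w - z) from
        hfm.mul (hdhm.comp (measurable_const.sub measurable_id)))]
    congr 1
    ext a
    rw [sub_sub_cancel, mul_comm]
  -- integral of f over volume
  have hmassf : ∫⁻ x, f x ∂volume = 1 := by
    rw [hf, Measure.lintegral_rnDeriv hρac]; simp
  have hmassdh : ∫⁻ x, dh x ∂volume = 1 := by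
    rw [hdh, Measure.lintegral_rnDeriv hδac]; simp
  -- a.e. facts under Pi3
  have haeS : ∀ᵐ p ∂Pi3, sh (φS p) ≠ 0 ∧ sh (φS p) ≠ ⊤ := by
    refine ae_of_ae_map (p := fun y => sh y ≠ 0 ∧ sh y ≠ ⊤) hφSm.aemeasurable ?_
    rw [hS]; exact dens_ae hσac
  have haeY : ∀ᵐ p ∂Pi3, f (φY p) ≠ 0 ∧ f (φY p) ≠ ⊤ := by
    refine ae_of_ae_map (p := fun y => f y ≠ 0 ∧ f y ≠ ⊤) hφYm.aemeasurable ?_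
    rw [hY]; exact dens_ae hρac
  have haeD1 : ∀ᵐ p ∂Pi3, dh (φD1 p) ≠ 0 ∧ dh (φD1 p) ≠ ⊤ := by
    refine ae_of_ae_map (p := fun y => dh y ≠ 0 ∧ dh y ≠ ⊤) hφD1m.aemeasurable ?_
    rw [hD1]; exact dens_ae hδac
  have haeD2 : ∀ᵐ p ∂Pi3, dh (φD2 p) ≠ 0 ∧ dh (φD2 p) ≠ ⊤ := by
    refine ae_of_ae_map (p := fun y => dh y ≠ 0 ∧ dh y ≠ ⊤) hφD2m.aemeasurable ?_
    rw [hD2]; exact dens_ae hδac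
  have haeT : ∀ᵐ p ∂Pi3, Th (φT p) ≠ 0 ∧ Th (φT p) ≠ ⊤ := by
    refine ae_of_ae_map (p := fun y => Th y ≠ 0 ∧ Th y ≠ ⊤) hφTm.aemeasurable ?_
    rw [hT]
    have hs0 : MeasurableSet {w : ℝ | Th w = 0} := hThm (measurableSet_singleton 0)
    have h0 : (volume.withDensity Th) {w : ℝ | Th w = 0} = 0 := by
      rw [withDensity_apply _ hs0]
      calc ∫⁻ w in {w : ℝ | Th w = 0}, Th w ∂volume
          = ∫⁻ w in {w : ℝ | Th w = 0}, 0 ∂volume :=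
            setLIntegral_congr_fun hs0 (fun w hw => hw)
      _ = 0 := by simp
    have hstop : volume {w : ℝ | Th w = ⊤} = 0 := by
      have hae := ae_lt_top hThm (by rw [hmassTh]; exact ENNReal.one_ne_top)
      rw [ae_iff] at hae
      have : {w : ℝ | ¬ Th w < ⊤} = {w : ℝ | Th w = ⊤} := by
        ext w; simp [not_lt, top_le_iff]
      rwa [this] at hae
    have h1 : (volume.withDensity Th) {w : ℝ | Th w = ⊤} = 0 :=
      (withDensity_absolutelyContinuous volume Th) hstop
    have e0 : ∀ᵐ w ∂(volume.withDensity Th), Th w ≠ 0 := by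
      rw [ae_iff]
      have : {w : ℝ | ¬ Th w ≠ 0} = {w : ℝ | Th w = 0} := by ext w; simp
      rw [this]; exact h0
    have e1 : ∀ᵐ w ∂(volume.withDensity Th), Th w ≠ ⊤ := by
      rw [ae_iff]
      have : {w : ℝ | ¬ Th w ≠ ⊤} = {w : ℝ | Th w = ⊤} := by ext w; simp
      rw [this]; exact h1
    filter_upwards [e0, e1] with w hw0 hw1 using ⟨hw0, hw1⟩
  -- Mass bound 1
  have hmass1 : ∫⁻ p, Th (φT p) / sh (φS p) ∂Pi3 ≤ 1 := by
    have hgm : Measurable fun q : ℝ × ℝ => Th (q.1 - q.2) / sh q.1 :=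
      ((hThm.comp (measurable_fst.sub measurable_snd)).div (hshm.comp measurable_fst))
    have hφ5m : Measurable fun p : (ℝ × ℝ) × ℝ => (p.1.1 + p.1.2, p.2) :=
      ((measurable_fst.fst.add measurable_fst.snd).prodMk measurable_snd)
    have e1 : ∫⁻ p, Th (φT p) / sh (φS p) ∂Pi3
        = ∫⁻ q, Th (q.1 - q.2) / sh q.1 ∂(σ.prod ρ) := by
      rw [← hP5, lintegral_map hgm hφ5m]
    rw [e1, lintegral_prod _ hgm.aemeasurable]
    have e2 : ∀ s : ℝ, (∫⁻ y, Th (s - y) / sh s ∂ρ)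
        = (∫⁻ y, Th (s - y) ∂ρ) * (sh s)⁻¹ := by
      intro s
      simp_rw [div_eq_mul_inv]
      exact lintegral_mul_const _ (hThm.comp (measurable_const.sub measurable_id))
    calc (∫⁻ s, ∫⁻ y, Th (s - y) / sh s ∂ρ ∂σ)
        = ∫⁻ s, (∫⁻ y, Th (s - y) ∂ρ) * (sh s)⁻¹ ∂σ := lintegral_congr e2
      _ = ∫⁻ s, sh s * ((∫⁻ y, Th (s - y) ∂ρ) * (sh s)⁻¹) ∂volume := by
          conv_lhs => rw [← Measure.withDensity_rnDeriv_eq σ volume hσac]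
          rw [lintegral_withDensity_eq_lintegral_mul volume hshm (g := fun s => (∫⁻ y, Th (s - y) ∂ρ) * (sh s)⁻¹)
            ((Measurable.lintegral_prod_right (f := fun s y => Th (s - y))
              (hThm.comp (measurable_fst.sub measurable_snd))).mul (hshm.inv))]
          exact lintegral_congr fun a => rfl
      _ ≤ ∫⁻ s, ∫⁻ y, Th (s - y) ∂ρ ∂volume := by
          apply lintegral_mono fun s => ?_
          calc sh s * ((∫⁻ y, Th (s - y) ∂ρ) * (sh s)⁻¹)
              = (∫⁻ y, Th (s - y) ∂ρ) * (sh s)⁻¹ * sh s := by ring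
            _ ≤ ∫⁻ y, Th (s - y) ∂ρ := mul_inv_mul_le _ _
      _ = ∫⁻ y, ∫⁻ s, Th (s - y) ∂volume ∂ρ :=
          lintegral_lintegral_swap (f := fun s y => Th (s - y)) (μ := volume) (ν := ρ)
            ((hThm.comp (measurable_fst.sub measurable_snd)).aemeasurable)
      _ = 1 := by
          have : ∀ y : ℝ, ∫⁻ s, Th (s - y) ∂volume = 1 := by
            intro y
            rw [(measurePreserving_sub_right (volume : Measure ℝ) y).lintegral_comp hThm]
            exact hmassTh
          simp only [this]
          simp
  -- Mass bound 2
  have hmass2 : ∫⁻ p, dh (φD1 p) * dh (φD2 p) / (Th (φT p) * f (φY p)) ∂Pi3 ≤ 1 := by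
    have hFm : Measurable (fun p : (ℝ×ℝ)×ℝ =>
        dh (φD1 p) * dh (φD2 p) / (Th (φT p) * f (φY p))) :=
      ((hdhm.comp hφD1m).mul (hdhm.comp hφD2m)).div ((hThm.comp hφTm).mul (hfm.comp hφYm))
    have eA : ∫⁻ p, dh (φD1 p) * dh (φD2 p) / (Th (φT p) * f (φY p)) ∂Pi3
        = ∫⁻ q, (∫⁻ y, dh (q.1 - y) * dh (q.2 - y) / (Th (q.1 + q.2 - y) * f y) ∂ρ)
            ∂(ρ.prod ρ) := by
      rw [hPi3]; exact lintegral_prod _ hFm.aemeasurable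
    have hKm : Measurable (fun r : (ℝ × ℝ) × ℝ =>
        dh (r.1.1 - r.2) * dh (r.1.2 - r.2) / Th (r.1.1 + r.1.2 - r.2)) :=
      ((hdhm.comp (measurable_fst.fst.sub measurable_snd)).mul
        (hdhm.comp (measurable_fst.snd.sub measurable_snd))).div
        (hThm.comp ((measurable_fst.fst.add measurable_fst.snd).sub measurable_snd))
    have eB : ∀ x z : ℝ, (∫⁻ y, dh (x - y) * dh (z - y) / (Th (x + z - y) * f y) ∂ρ)
        ≤ ∫⁻ y, dh (x - y) * dh (z - y) / Th (x + z - y) ∂volume := by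
      intro x z
      rw [hρlint _ (show Measurable fun y : ℝ =>
          dh (x - y) * dh (z - y) / (Th (x + z - y) * f y) from
        ((hdhm.comp (measurable_const.sub measurable_id)).mul
          (hdhm.comp (measurable_const.sub measurable_id))).div
          ((hThm.comp (measurable_const.sub measurable_id)).mul hfm))]
      apply lintegral_mono fun y => ?_
      exact cancel_div_le _ _ _
    have eC : ∀ x z : ℝ, (∫⁻ y, dh (x - y) * dh (z - y) / Th (x + z - y) ∂volume)
        = ∫⁻ a, dh a * dh (z - x + a) / Th (z + a) ∂volume := by
      intro x z
      rw [← (Measure.measurePreserving_sub_left (volume : Measure ℝ) x).lintegral_comp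
        (show Measurable fun y : ℝ => dh (x - y) * dh (z - y) / Th (x + z - y) from
          ((hdhm.comp (measurable_const.sub measurable_id)).mul
            (hdhm.comp (measurable_const.sub measurable_id))).div
            (hThm.comp (measurable_const.sub measurable_id)))]
      congr 1
      ext a
      have e1 : x - (x - a) = a := by ring
      have e2 : z - (x - a) = z - x + a := by ring
      have e3 : x + z - (x - a) = z + a := by ring
      rw [e1, e2, e3]
    -- inner computation for fixed x
    have eD : ∀ x : ℝ,
        (∫⁻ z, (∫⁻ a, dh a * dh (z - x + a) / Th (z + a) ∂volume) ∂ρ) ≤ 1 := by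
      intro x
      have h1 : (∫⁻ z, (∫⁻ a, dh a * dh (z - x + a) / Th (z + a) ∂volume) ∂ρ)
          = ∫⁻ a, (∫⁻ z, dh a * dh (z - x + a) / Th (z + a) ∂ρ) ∂volume :=
        lintegral_lintegral_swap (f := fun z a => dh a * dh (z - x + a) / Th (z + a))
          (μ := ρ) (ν := volume)
          (((hdhm.comp measurable_snd).mul (hdhm.comp
            ((measurable_fst.sub measurable_const).add measurable_snd))).div
            (hThm.comp (measurable_fst.add measurable_snd))).aemeasurable
      have h2 : ∀ a : ℝ, (∫⁻ z, dh a * dh (z - x + a) / Th (z + a) ∂ρ)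
          = ∫⁻ w, f (w - a) * (dh a * dh (w - x) / Th w) ∂volume := by
        intro a
        rw [hρlint _ (show Measurable fun z : ℝ => dh a * dh (z - x + a) / Th (z + a) from
          ((measurable_const.mul (hdhm.comp ((measurable_id.sub measurable_const).add
            measurable_const))).div (hThm.comp (measurable_id.add measurable_const))))]
        rw [← (measurePreserving_sub_right (volume : Measure ℝ) a).lintegral_comp
          (show Measurable fun z : ℝ => f z * (dh a * dh (z - x + a) / Th (z + a)) from
            (hfm.mul ((measurable_const.mul (hdhm.comp ((measurable_id.sub
              measurable_const).add measurable_const))).div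
              (hThm.comp (measurable_id.add measurable_const)))))]
        congr 1
        ext w
        have e1 : w - a - x + a = w - x := by ring
        have e2 : w - a + a = w := by ring
        rw [e1, e2]
      have h3 : (∫⁻ a, ∫⁻ w, f (w - a) * (dh a * dh (w - x) / Th w) ∂volume ∂volume)
          = ∫⁻ w, ∫⁻ a, f (w - a) * (dh a * dh (w - x) / Th w) ∂volume ∂volume :=
        lintegral_lintegral_swap (f := fun a w => f (w - a) * (dh a * dh (w - x) / Th w))
          (μ := volume) (ν := volume)
          (((hfm.comp (measurable_snd.sub measurable_fst)).mul
            (((hdhm.comp measurable_fst).mul (hdhm.comp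
              (measurable_snd.sub measurable_const))).div
              (hThm.comp measurable_snd)))).aemeasurable
      have h4 : ∀ w : ℝ, (∫⁻ a, f (w - a) * (dh a * dh (w - x) / Th w) ∂volume)
          ≤ dh (w - x) := by
        intro w
        have e1 : ∀ a : ℝ, f (w - a) * (dh a * dh (w - x) / Th w)
            = (dh a * f (w - a)) * (dh (w - x) * (Th w)⁻¹) := by
          intro a
          rw [div_eq_mul_inv]
          ring
        simp_rw [e1]
        rw [lintegral_mul_const _ (show Measurable fun a : ℝ => dh a * f (w - a) from
          hdhm.mul (hfm.comp (measurable_const.sub measurable_id)))]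
        rw [← hT2 w]
        calc Th w * (dh (w - x) * (Th w)⁻¹)
            = dh (w - x) * (Th w)⁻¹ * Th w := by ring
          _ ≤ dh (w - x) := mul_inv_mul_le _ _
      calc (∫⁻ z, (∫⁻ a, dh a * dh (z - x + a) / Th (z + a) ∂volume) ∂ρ)
          = ∫⁻ a, (∫⁻ z, dh a * dh (z - x + a) / Th (z + a) ∂ρ) ∂volume := h1
        _ = ∫⁻ a, ∫⁻ w, f (w - a) * (dh a * dh (w - x) / Th w) ∂volume ∂volume :=
            lintegral_congr h2
        _ = ∫⁻ w, ∫⁻ a, f (w - a) * (dh a * dh (w - x) / Th w) ∂volume ∂volume := h3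
        _ ≤ ∫⁻ w, dh (w - x) ∂volume := lintegral_mono h4
        _ = 1 := by
            rw [(measurePreserving_sub_right (volume : Measure ℝ) x).lintegral_comp hdhm]
            exact hmassdh
    -- assemble
    rw [eA]
    have hG2m : Measurable fun q : ℝ × ℝ =>
        ∫⁻ a, dh a * dh (q.2 - q.1 + a) / Th (q.2 + a) ∂volume := by
      apply Measurable.lintegral_prod_right
        (f := fun (q : ℝ × ℝ) (a : ℝ) => dh a * dh (q.2 - q.1 + a) / Th (q.2 + a))
      exact ((hdhm.comp measurable_snd).mul (hdhm.comp (((measurable_fst.snd.sub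
        measurable_fst.fst)).add measurable_snd))).div
        (hThm.comp (measurable_fst.snd.add measurable_snd))
    calc (∫⁻ q, (∫⁻ y, dh (q.1 - y) * dh (q.2 - y) / (Th (q.1 + q.2 - y) * f y) ∂ρ)
            ∂(ρ.prod ρ))
        ≤ ∫⁻ q, (∫⁻ a, dh a * dh (q.2 - q.1 + a) / Th (q.2 + a) ∂volume) ∂(ρ.prod ρ) := by
          apply lintegral_mono fun q => ?_
          calc (∫⁻ y, dh (q.1 - y) * dh (q.2 - y) / (Th (q.1 + q.2 - y) * f y) ∂ρ)
              ≤ ∫⁻ y, dh (q.1 - y) * dh (q.2 - y) / Th (q.1 + q.2 - y) ∂volume :=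
                eB q.1 q.2
            _ = ∫⁻ a, dh a * dh (q.2 - q.1 + a) / Th (q.2 + a) ∂volume := eC q.1 q.2
      _ = ∫⁻ x, (∫⁻ z, (∫⁻ a, dh a * dh (z - x + a) / Th (z + a) ∂volume) ∂ρ) ∂ρ :=
          lintegral_prod _ hG2m.aemeasurable
      _ ≤ ∫⁻ x, 1 ∂ρ := lintegral_mono fun x => eD x
      _ = 1 := by simp
  -- the log-density functions
  set A1 : (ℝ × ℝ) × ℝ → ℝ := fun p =>
    Real.log (sh (φS p)).toReal - Real.log (Th (φT p)).toReal with hA1def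
  set A2 : (ℝ × ℝ) × ℝ → ℝ := fun p =>
    Real.log (Th (φT p)).toReal + Real.log (f (φY p)).toReal
      - Real.log (dh (φD1 p)).toReal - Real.log (dh (φD2 p)).toReal with hA2def
  set A : (ℝ × ℝ) × ℝ → ℝ := fun p =>
    Real.log (sh (φS p)).toReal + Real.log (f (φY p)).toReal
      - Real.log (dh (φD1 p)).toReal - Real.log (dh (φD2 p)).toReal with hAdef
  have mlogS : Measurable fun p : (ℝ × ℝ) × ℝ => Real.log (sh (φS p)).toReal :=
    Real.measurable_log.comp (ENNReal.measurable_toReal.comp (hshm.comp hφSm))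
  have mlogY : Measurable fun p : (ℝ × ℝ) × ℝ => Real.log (f (φY p)).toReal :=
    Real.measurable_log.comp (ENNReal.measurable_toReal.comp (hfm.comp hφYm))
  have mlogD1 : Measurable fun p : (ℝ × ℝ) × ℝ => Real.log (dh (φD1 p)).toReal :=
    Real.measurable_log.comp (ENNReal.measurable_toReal.comp (hdhm.comp hφD1m))
  have mlogD2 : Measurable fun p : (ℝ × ℝ) × ℝ => Real.log (dh (φD2 p)).toReal :=
    Real.measurable_log.comp (ENNReal.measurable_toReal.comp (hdhm.comp hφD2m))
  have mlogT : Measurable fun p : (ℝ × ℝ) × ℝ => Real.log (Th (φT p)).toReal :=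
    Real.measurable_log.comp (ENNReal.measurable_toReal.comp (hThm.comp hφTm))
  have hA1m : Measurable A1 := mlogS.sub mlogT
  have hA2m : Measurable A2 := ((mlogT.add mlogY).sub mlogD1).sub mlogD2
  -- Gibbs step 1
  have hg1 := gibbs Pi3 (fun p => Th (φT p) / sh (φS p))
    ((hThm.comp hφTm).div (hshm.comp hφSm)) hmass1
    (by
      filter_upwards [haeS, haeT] with p hs ht
      simp only [ne_eq, ENNReal.div_eq_zero_iff, not_or]
      exact ⟨ht.1, hs.2⟩)
    (by
      filter_upwards [haeS, haeT] with p hs ht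
      intro heq
      rcases ENNReal.div_eq_top.mp heq with ⟨_, h⟩ | ⟨h, _⟩
      · exact hs.1 h
      · exact ht.2 h)
    (fun p => -A1 p) hA1m.neg
    (by
      filter_upwards [haeS, haeT] with p hs ht
      rw [ENNReal.toReal_div, Real.log_div (ENNReal.toReal_ne_zero.mpr ht)
        (ENNReal.toReal_ne_zero.mpr hs), hA1def]
      ring)
  -- Gibbs step 2
  have hg2 := gibbs Pi3 (fun p => dh (φD1 p) * dh (φD2 p) / (Th (φT p) * f (φY p)))
    (((hdhm.comp hφD1m).mul (hdhm.comp hφD2m)).div ((hThm.comp hφTm).mul (hfm.comp hφYm)))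
    hmass2
    (by
      filter_upwards [haeD1, haeD2, haeT, haeY] with p h1 h2 ht hy
      simp only [ne_eq, ENNReal.div_eq_zero_iff, not_or, mul_eq_zero]
      exact ⟨by tauto, ENNReal.mul_ne_top ht.2 hy.2⟩)
    (by
      filter_upwards [haeD1, haeD2, haeT, haeY] with p h1 h2 ht hy
      intro heq
      rcases ENNReal.div_eq_top.mp heq with ⟨_, h⟩ | ⟨h, _⟩
      · rcases mul_eq_zero.mp h with h | h
        · exact ht.1 h
        · exact hy.1 h
      · rcases ENNReal.mul_eq_top.mp h with ⟨_, h⟩ | ⟨h, _⟩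
        · exact h2.2 h
        · exact h1.2 h)
    (fun p => -A2 p) hA2m.neg
    (by
      filter_upwards [haeD1, haeD2, haeT, haeY] with p h1 h2 ht hy
      rw [ENNReal.toReal_div, ENNReal.toReal_mul, ENNReal.toReal_mul,
        Real.log_div (mul_ne_zero (ENNReal.toReal_ne_zero.mpr h1)
          (ENNReal.toReal_ne_zero.mpr h2))
          (mul_ne_zero (ENNReal.toReal_ne_zero.mpr ht) (ENNReal.toReal_ne_zero.mpr hy)),
        Real.log_mul (ENNReal.toReal_ne_zero.mpr h1) (ENNReal.toReal_ne_zero.mpr h2),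
        Real.log_mul (ENNReal.toReal_ne_zero.mpr ht) (ENNReal.toReal_ne_zero.mpr hy), hA2def]
      ring)
  -- integrability pullbacks
  have hgS : AEStronglyMeasurable (fun x => Real.log (sh x).toReal) (Pi3.map φS) :=
    (Real.measurable_log.comp (ENNReal.measurable_toReal.comp hshm)).aestronglyMeasurable
  have hgY : AEStronglyMeasurable (fun x => Real.log (f x).toReal) (Pi3.map φY) :=
    (Real.measurable_log.comp (ENNReal.measurable_toReal.comp hfm)).aestronglyMeasurable
  have hgD1 : AEStronglyMeasurable (fun x => Real.log (dh x).toReal) (Pi3.map φD1) :=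
    (Real.measurable_log.comp (ENNReal.measurable_toReal.comp hdhm)).aestronglyMeasurable
  have hgD2 : AEStronglyMeasurable (fun x => Real.log (dh x).toReal) (Pi3.map φD2) :=
    (Real.measurable_log.comp (ENNReal.measurable_toReal.comp hdhm)).aestronglyMeasurable
  have hintS : Integrable (fun p => Real.log (sh (φS p)).toReal) Pi3 :=
    (integrable_map_measure hgS hφSm.aemeasurable).mp (by rw [hS]; exact hσint)
  have hintY : Integrable (fun p => Real.log (f (φY p)).toReal) Pi3 :=
    (integrable_map_measure hgY hφYm.aemeasurable).mp (by rw [hY]; exact hρint)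
  have hintD1 : Integrable (fun p => Real.log (dh (φD1 p)).toReal) Pi3 :=
    (integrable_map_measure hgD1 hφD1m.aemeasurable).mp (by rw [hD1]; exact hδint)
  have hintD2 : Integrable (fun p => Real.log (dh (φD2 p)).toReal) Pi3 :=
    (integrable_map_measure hgD2 hφD2m.aemeasurable).mp (by rw [hD2]; exact hδint)
  have hAint : Integrable A Pi3 := ((hintS.add hintY).sub hintD1).sub hintD2
  -- combine
  have hnn : 0 ≤ ∫ p, A p ∂Pi3 := by
    refine integral_nonneg_of_parts Pi3 A A1 A2 (fun p => by rw [hAdef, hA1def, hA2def]; ring)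
      hAint hA1m hA2m ?_ ?_ ?_ ?_
    · exact hg1.1
    · exact hg2.1
    · simpa using hg1.2
    · simpa using hg2.2
  -- compute the integral of A
  have hIS : ∫ p, Real.log (sh (φS p)).toReal ∂Pi3
      = ∫ x, Real.log (sh x).toReal ∂σ := by
    rw [← hS, integral_map hφSm.aemeasurable hgS]
  have hIY : ∫ p, Real.log (f (φY p)).toReal ∂Pi3
      = ∫ x, Real.log (f x).toReal ∂ρ := by
    rw [← hY, integral_map hφYm.aemeasurable hgY]
  have hID1 : ∫ p, Real.log (dh (φD1 p)).toReal ∂Pi3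
      = ∫ x, Real.log (dh x).toReal ∂δ := by
    rw [← hD1, integral_map hφD1m.aemeasurable hgD1]
  have hID2 : ∫ p, Real.log (dh (φD2 p)).toReal ∂Pi3
      = ∫ x, Real.log (dh x).toReal ∂δ := by
    rw [← hD2, integral_map hφD2m.aemeasurable hgD2]
  have hIA : ∫ p, A p ∂Pi3
      = (∫ x, Real.log (sh x).toReal ∂σ) + (∫ x, Real.log (f x).toReal ∂ρ)
        - (∫ x, Real.log (dh x).toReal ∂δ) - ∫ x, Real.log (dh x).toReal ∂δ := by
    rw [hAdef]
    rw [integral_sub (show Integrable (fun p => Real.log (sh (φS p)).toReal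
        + Real.log (f (φY p)).toReal - Real.log (dh (φD1 p)).toReal) Pi3 from
        (hintS.add hintY).sub hintD1) hintD2,
      integral_sub (show Integrable (fun p => Real.log (sh (φS p)).toReal
        + Real.log (f (φY p)).toReal) Pi3 from hintS.add hintY) hintD1,
      integral_add hintS hintY]
    rw [hIS, hIY, hID1, hID2]
  rw [hIA] at hnn
  linarith

end Key
end DDU

/-- **Doubling-difference inequality (upper bound).**
If `X₁, X₂` are i.i.d. continuous random variables with all relevant differential
entropies existing and finite, then `h(X₁+X₂) - h(X₁) ≤ 2·(h(X₁-X₂) - h(X₁))`. -/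
theorem doubling_difference_upper
    {Ω : Type*} [MeasurableSpace Ω] (P : Measure Ω) [IsProbabilityMeasure P]
    (X₁ X₂ : Ω → ℝ) (hX₁ : Measurable X₁) (hX₂ : Measurable X₂)
    (hindep : IndepFun X₁ X₂ P) (hid : IdentDistrib X₁ X₂ P P)
    (h1 : FiniteDent volume P (X₁ + X₂)) (h2 : FiniteDent volume P (X₁ - X₂))
    (h3 : FiniteDent volume P X₁) :
    dent volume P (X₁ + X₂) - dent volume P X₁ ≤
      2 * (dent volume P (X₁ - X₂) - dent volume P X₁) := by
  classical
  set ρ := P.map X₁ with hρX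
  haveI : IsProbabilityMeasure ρ := Measure.isProbabilityMeasure_map hX₁.aemeasurable
  have hpairm : Measurable fun ω => (X₁ ω, X₂ ω) := hX₁.prodMk hX₂
  have hjoint : P.map (fun ω => (X₁ ω, X₂ ω)) = ρ.prod ρ := by
    rw [(indepFun_iff_map_prod_eq_prod_map_map hX₁.aemeasurable hX₂.aemeasurable).mp hindep,
      ← hid.map_eq]
  have hmapσ : P.map (X₁ + X₂) = (ρ.prod ρ).map (fun p : ℝ × ℝ => p.1 + p.2) := by
    rw [← hjoint, Measure.map_map measurable_add hpairm]
    rfl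
  have hmapδ : P.map (X₁ - X₂) = (ρ.prod ρ).map (fun p : ℝ × ℝ => p.1 - p.2) := by
    rw [← hjoint, Measure.map_map measurable_sub hpairm]
    rfl
  have hkey := DDU.key ρ h3.1 (P.map (X₁ + X₂)) (P.map (X₁ - X₂)) hmapσ hmapδ
    h1.1 h2.1 h3.2 h1.2 h2.2
  simp only [dent]
  linarith
end

section
/- Doubling-difference inequality (lower bound): If X1, X2 are independent and identically distributed real-valued continuous random variables with all relevant differential entropies existing and finite, then h(X1-X2) - h(X1) ≤ 2·(h(X1+X2) - h(X1)). -/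
open MeasureTheory ProbabilityTheory
open scoped ENNReal

noncomputable def gE (f : ℝ → ℝ≥0∞) (s : ℝ) : ℝ≥0∞ := ∫⁻ t, f t * f (s - t)
noncomputable def dE (f : ℝ → ℝ≥0∞) (u : ℝ) : ℝ≥0∞ := ∫⁻ t, f t * f (t - u)

lemma key_cancel (a N d : ℝ≥0∞) : a * (N / (a * d)) ≤ N / d := by
  rcases eq_or_ne a 0 with h | h
  · simp [h]
  rcases eq_or_ne a ⊤ with h2 | h2
  · subst h2
    rcases eq_or_ne N 0 with hN | hN
    · simp [hN]
    rcases eq_or_ne d 0 with hd | hd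
    · simp [hd, hN, ENNReal.div_zero]
    · simp [ENNReal.top_mul hd, ENNReal.div_top]
  · rw [← mul_div_assoc, ENNReal.mul_div_mul_left _ _ h h2]

lemma div_mul_le (b c : ℝ≥0∞) : b / c * c ≤ b := by
  rcases eq_or_ne c 0 with h | h
  · simp [h]
  rcases eq_or_ne c ⊤ with h2 | h2
  · subst h2; simp [ENNReal.div_top]
  · rw [ENNReal.div_mul_cancel h h2]

variable {f : ℝ → ℝ≥0∞}

lemma measurable_gE (hf : Measurable f) : Measurable (gE f) := by
  apply Measurable.lintegral_prod_right' (f := fun p : ℝ × ℝ => f p.2 * f (p.1 - p.2))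
  exact (hf.comp measurable_snd).mul (hf.comp (measurable_fst.sub measurable_snd))

lemma measurable_dE (hf : Measurable f) : Measurable (dE f) := by
  apply Measurable.lintegral_prod_right' (f := fun p : ℝ × ℝ => f p.2 * f (p.2 - p.1))
  exact (hf.comp measurable_snd).mul (hf.comp (measurable_snd.sub measurable_fst))

lemma dE_eq (hf : Measurable f) (u v : ℝ) :
    ∫⁻ y, f (u - y) * f (v - y) = dE f (u - v) := by
  have hG : Measurable (fun t => f t * f (t - (u - v))) :=
    hf.mul (hf.comp (measurable_id.sub measurable_const))
  have := (Measure.measurePreserving_sub_left volume u).lintegral_comp hG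
  rw [dE, ← this]
  congr 1
  funext y
  congr 2
  ring

lemma lint_R_le_one (hf : Measurable f)
    (hprob : IsProbabilityMeasure (volume.withDensity f))
    (hgE1 : ∫⁻ s, gE f s = 1) :
    ∫⁻ p : (ℝ × ℝ) × ℝ,
      gE f (p.1.1 + p.2) * gE f (p.1.2 + p.2) / (f p.2 * dE f (p.1.1 - p.1.2))
      ∂(((volume.withDensity f).prod (volume.withDensity f)).prod (volume.withDensity f)) ≤ 1 := by
  set μ := volume.withDensity f with hμ
  have hgE := measurable_gE hf
  have hdE := measurable_dE hf
  have hR : Measurable (fun p : (ℝ × ℝ) × ℝ =>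
      gE f (p.1.1 + p.2) * gE f (p.1.2 + p.2) / (f p.2 * dE f (p.1.1 - p.1.2))) := by fun_prop
  -- step 1: write as iterated integral, y outermost
  rw [lintegral_prod_symm _ hR.aemeasurable]
  have step2 : ∀ y : ℝ, (∫⁻ q : ℝ × ℝ, gE f (q.1 + y) * gE f (q.2 + y) / (f y * dE f (q.1 - q.2))
      ∂(μ.prod μ)) = ∫⁻ x, f x * ∫⁻ z, f z * (gE f (x + y) * gE f (z + y) / (f y * dE f (x - z)))
      ∂volume ∂volume := by
    intro y
    have hRy : Measurable (fun q : ℝ × ℝ =>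
        gE f (q.1 + y) * gE f (q.2 + y) / (f y * dE f (q.1 - q.2))) := by fun_prop
    rw [lintegral_prod _ hRy.aemeasurable]
    rw [hμ, lintegral_withDensity_eq_lintegral_mul _ hf]
    swap
    · apply Measurable.lintegral_prod_right'
        (f := fun q : ℝ × ℝ => gE f (q.1 + y) * gE f (q.2 + y) / (f y * dE f (q.1 - q.2)))
      exact hRy
    simp only [Pi.mul_apply]
    congr 1; funext x
    congr 1
    rw [lintegral_withDensity_eq_lintegral_mul _ hf]
    · rfl
    · fun_prop
  rw [lintegral_congr step2]
  rw [hμ, lintegral_withDensity_eq_lintegral_mul _ hf]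
  swap
  · apply Measurable.lintegral_prod_right' (f := fun q : ℝ × ℝ =>
      f q.2 * ∫⁻ z, f z * (gE f (q.2 + q.1) * gE f (z + q.1) / (f q.1 * dE f (q.2 - z))))
    refine Measurable.mul (by fun_prop) ?_
    exact (Measurable.lintegral_prod_right' (f := fun w : (ℝ × ℝ) × ℝ =>
      f w.2 * (gE f (w.1.2 + w.1.1) * gE f (w.2 + w.1.1) / (f w.1.1 * dE f (w.1.2 - w.2))))
      (by fun_prop))
  simp only [Pi.mul_apply]
  -- step 3 : cancel the f y factor
  have step3 : ∫⁻ y, f y * ∫⁻ x, f x * ∫⁻ z, f z *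
        (gE f (x + y) * gE f (z + y) / (f y * dE f (x - z)))
      ≤ ∫⁻ y, ∫⁻ x, f x * ∫⁻ z, f z * (gE f (x + y) * gE f (z + y) / dE f (x - z)) := by
    apply lintegral_mono
    intro y
    dsimp only
    have hA : Measurable (fun x : ℝ => f x * ∫⁻ z, f z *
        (gE f (x + y) * gE f (z + y) / (f y * dE f (x - z)))) := by
      refine Measurable.mul (by fun_prop) ?_
      exact (Measurable.lintegral_prod_right' (f := fun w : ℝ × ℝ =>
        f w.2 * (gE f (w.1 + y) * gE f (w.2 + y) / (f y * dE f (w.1 - w.2)))) (by fun_prop))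
    rw [← lintegral_const_mul _ hA]
    apply lintegral_mono
    intro x
    dsimp only
    rw [mul_left_comm]
    refine mul_le_mul_right ?_ _
    have hB : Measurable (fun z : ℝ => f z *
        (gE f (x + y) * gE f (z + y) / (f y * dE f (x - z)))) := by fun_prop
    rw [← lintegral_const_mul _ hB]
    apply lintegral_mono
    intro z
    dsimp only
    rw [mul_left_comm]
    exact mul_le_mul_right (key_cancel _ _ _) _
  refine le_trans step3 ?_
  -- step 4 : translation x = u - y, z = v - y
  have step4 : ∀ y : ℝ, (∫⁻ x, f x * ∫⁻ z, f z * (gE f (x + y) * gE f (z + y) / dE f (x - z)))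
      = ∫⁻ u, f (u - y) * ∫⁻ v, f (v - y) * (gE f u * gE f v / dE f (u - v)) := by
    intro y
    have inner_tr : ∀ x : ℝ, f x * (∫⁻ z, f z * (gE f (x + y) * gE f (z + y) / dE f (x - z)))
        = f x * ∫⁻ v, f (v - y) * (gE f (x + y) * gE f v / dE f (x + y - v)) := by
      intro x
      congr 1
      have := lintegral_add_right_eq_self (μ := volume)
        (fun v => f (v - y) * (gE f (x + y) * gE f v / dE f (x + y - v))) y
      rw [← this]
      congr 1; funext z
      have e1 : z + y - y = z := by ring
      have e2 : x + y - (z + y) = x - z := by ring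
      rw [e1, e2]
    rw [lintegral_congr inner_tr]
    have := lintegral_add_right_eq_self (μ := volume)
      (fun u => f (u - y) * ∫⁻ v, f (v - y) * (gE f u * gE f v / dE f (u - v))) y
    rw [← this]
    congr 1; funext x
    have e1 : x + y - y = x := by ring
    rw [e1]
  rw [lintegral_congr step4]
  -- step 5 : swap integrals to put y innermost
  have swap1 : ∫⁻ y, ∫⁻ u, f (u - y) * ∫⁻ v, f (v - y) * (gE f u * gE f v / dE f (u - v))
      = ∫⁻ u, ∫⁻ v, ∫⁻ y, f (u - y) * (f (v - y) * (gE f u * gE f v / dE f (u - v))) := by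
    rw [lintegral_lintegral_swap]
    · congr 1; funext u
      have pull : ∀ y : ℝ, f (u - y) * ∫⁻ v, f (v - y) * (gE f u * gE f v / dE f (u - v))
          = ∫⁻ v, f (u - y) * (f (v - y) * (gE f u * gE f v / dE f (u - v))) := by
        intro y
        rw [← lintegral_const_mul _ (by fun_prop)]
      rw [lintegral_congr pull, lintegral_lintegral_swap]
      exact Measurable.aemeasurable (by fun_prop)
    · apply Measurable.aemeasurable
      refine Measurable.mul (by fun_prop) ?_
      exact (Measurable.lintegral_prod_right' (f := fun w : (ℝ × ℝ) × ℝ =>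
        f (w.2 - w.1.1) * (gE f w.1.2 * gE f w.2 / dE f (w.1.2 - w.2))) (by fun_prop))
  rw [swap1]
  -- step 6 : innermost integral gives dE, cancel with the division
  have step5 : ∀ u v : ℝ, (∫⁻ y, f (u - y) * (f (v - y) * (gE f u * gE f v / dE f (u - v))))
      ≤ gE f u * gE f v := by
    intro u v
    have e : ∀ y : ℝ, f (u - y) * (f (v - y) * (gE f u * gE f v / dE f (u - v)))
        = (fun y => f (u - y) * f (v - y)) y * (gE f u * gE f v / dE f (u - v)) := fun y => by
      dsimp only; ring
    rw [lintegral_congr e, lintegral_mul_const _ (by fun_prop)]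
    rw [dE_eq hf u v, mul_comm]
    exact div_mul_le _ _
  calc ∫⁻ u, ∫⁻ v, ∫⁻ y, f (u - y) * (f (v - y) * (gE f u * gE f v / dE f (u - v)))
      ≤ ∫⁻ u, ∫⁻ v, gE f u * gE f v :=
        lintegral_mono fun u => lintegral_mono fun v => step5 u v
    _ = 1 := by
        have : ∀ u : ℝ, ∫⁻ v, gE f u * gE f v = gE f u := by
          intro u
          rw [lintegral_const_mul _ hgE, hgE1, mul_one]
        rw [lintegral_congr this, hgE1]

lemma map_add_eq (hf : Measurable f) [SFinite (volume.withDensity f)] :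
    ((volume.withDensity f).prod (volume.withDensity f)).map (fun p : ℝ × ℝ => p.1 + p.2)
      = volume.withDensity (gE f) := by
  set μ := volume.withDensity f with hμ
  ext s hs
  rw [Measure.map_apply (by fun_prop : Measurable (fun p : ℝ × ℝ => p.1 + p.2)) hs, withDensity_apply _ hs,
    Measure.prod_apply ((by fun_prop : Measurable (fun p : ℝ × ℝ => p.1 + p.2)) hs)]
  have step1 : ∀ x : ℝ, μ (Prod.mk x ⁻¹' ((fun p : ℝ × ℝ => p.1 + p.2) ⁻¹' s))
      = ∫⁻ w, f (w - x) * s.indicator 1 w := by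
    intro x
    have hpre : (Prod.mk x ⁻¹' ((fun p : ℝ × ℝ => p.1 + p.2) ⁻¹' s)) = (fun z => x + z) ⁻¹' s := rfl
    rw [hpre, hμ, withDensity_apply _ ((measurable_const_add x) hs),
      ← lintegral_indicator ((measurable_const_add x) hs)]
    have : ∀ z : ℝ, ((fun z => x + z) ⁻¹' s).indicator f z = f z * s.indicator 1 (x + z) := by
      intro z
      by_cases h : x + z ∈ s <;> simp [Set.indicator_apply, Set.mem_preimage, h]
    rw [lintegral_congr this]
    have := lintegral_add_right_eq_self (μ := volume) (fun w => f (w - x) * s.indicator 1 w) x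
    rw [← this]
    congr 1; funext w; rw [add_sub_cancel_right, add_comm]
  rw [lintegral_congr step1, hμ]
  rw [lintegral_withDensity_eq_lintegral_mul _ hf]
  swap
  · apply Measurable.lintegral_prod_right' (f := fun p : ℝ × ℝ => f (p.2 - p.1) * s.indicator 1 p.2)
    exact (hf.comp (measurable_snd.sub measurable_fst)).mul
      ((measurable_one.indicator hs).comp measurable_snd)
  have swap : ∫⁻ x, (f * fun x => ∫⁻ w, f (w - x) * s.indicator 1 w) x
      = ∫⁻ w, s.indicator 1 w * ∫⁻ x, f x * f (w - x) := by
    simp only [Pi.mul_apply]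
    have e1 : ∀ x : ℝ, f x * ∫⁻ w, f (w - x) * s.indicator 1 w
        = ∫⁻ w, f x * (f (w - x) * s.indicator 1 w) :=
      fun x => (lintegral_const_mul _ ((hf.comp (measurable_id.sub measurable_const)).mul
        (measurable_one.indicator hs))).symm
    rw [lintegral_congr e1, lintegral_lintegral_swap]
    · congr 1; funext w
      by_cases h : w ∈ s
      · simp [Set.indicator_of_mem h]
      · simp [Set.indicator_of_notMem h]
    · apply Measurable.aemeasurable
      exact ((hf.comp measurable_fst).mul ((hf.comp (measurable_snd.sub measurable_fst)).mul
        ((measurable_one.indicator hs).comp measurable_snd)))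
  rw [swap, ← lintegral_indicator hs]
  congr 1; funext w
  by_cases h : w ∈ s
  · simp [Set.indicator_of_mem h, gE]
  · simp [Set.indicator_of_notMem h]

lemma map_sub_eq (hf : Measurable f) [SFinite (volume.withDensity f)] :
    ((volume.withDensity f).prod (volume.withDensity f)).map (fun p : ℝ × ℝ => p.1 - p.2)
      = volume.withDensity (dE f) := by
  set μ := volume.withDensity f with hμ
  ext s hs
  rw [Measure.map_apply (by fun_prop : Measurable (fun p : ℝ × ℝ => p.1 - p.2)) hs, withDensity_apply _ hs,
    Measure.prod_apply ((by fun_prop : Measurable (fun p : ℝ × ℝ => p.1 - p.2)) hs)]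
  have step1 : ∀ x : ℝ, μ (Prod.mk x ⁻¹' ((fun p : ℝ × ℝ => p.1 - p.2) ⁻¹' s))
      = ∫⁻ w, f (x - w) * s.indicator 1 w := by
    intro x
    have hpre : (Prod.mk x ⁻¹' ((fun p : ℝ × ℝ => p.1 - p.2) ⁻¹' s)) = (fun z => x - z) ⁻¹' s := rfl
    have hmz : Measurable (fun z : ℝ => x - z) := measurable_const.sub measurable_id
    rw [hpre, hμ, withDensity_apply _ (hmz hs), ← lintegral_indicator (hmz hs)]
    have e0 : ∀ z : ℝ, ((fun z => x - z) ⁻¹' s).indicator f z = f z * s.indicator 1 (x - z) := by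
      intro z
      by_cases h : x - z ∈ s <;> simp [Set.indicator_apply, Set.mem_preimage, h]
    rw [lintegral_congr e0]
    have hG : Measurable (fun w => f (x - w) * s.indicator 1 w) :=
      (hf.comp hmz).mul (measurable_one.indicator hs)
    have := (Measure.measurePreserving_sub_left volume x).lintegral_comp hG
    rw [← this]
    congr 1; funext z
    simp [sub_sub_cancel]
  rw [lintegral_congr step1, hμ]
  rw [lintegral_withDensity_eq_lintegral_mul _ hf]
  swap
  · apply Measurable.lintegral_prod_right' (f := fun p : ℝ × ℝ => f (p.1 - p.2) * s.indicator 1 p.2)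
    exact (hf.comp (measurable_fst.sub measurable_snd)).mul
      ((measurable_one.indicator hs).comp measurable_snd)
  have e1 : ∀ x : ℝ, f x * ∫⁻ w, f (x - w) * s.indicator 1 w
      = ∫⁻ w, f x * (f (x - w) * s.indicator 1 w) :=
    fun x => (lintegral_const_mul _ ((hf.comp (measurable_const.sub measurable_id)).mul
      (measurable_one.indicator hs))).symm
  simp only [Pi.mul_apply]
  rw [lintegral_congr e1, lintegral_lintegral_swap]
  · rw [← lintegral_indicator hs]
    congr 1; funext w
    by_cases h : w ∈ s
    · simp [Set.indicator_of_mem h, dE]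
    · simp [Set.indicator_of_notMem h]
  · apply Measurable.aemeasurable
    exact ((hf.comp measurable_fst).mul ((hf.comp (measurable_fst.sub measurable_snd)).mul
      ((measurable_one.indicator hs).comp measurable_snd)))

lemma ae_pos_lt_top {g : ℝ → ℝ≥0∞} (hg : Measurable g) (hfin : ∫⁻ x, g x ≠ ⊤) :
    ∀ᵐ x ∂(volume.withDensity g), 0 < g x ∧ g x < ⊤ := by
  have h1 : ∀ᵐ x ∂volume, g x < ⊤ := ae_lt_top hg hfin
  have h1' : ∀ᵐ x ∂(volume.withDensity g), g x < ⊤ :=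
    (withDensity_absolutelyContinuous volume g).ae_le h1
  have h2 : ∀ᵐ x ∂(volume.withDensity g), 0 < g x := by
    rw [ae_iff]
    have hset : {x : ℝ | ¬ 0 < g x} = {x | g x = 0} := by
      ext x; simp [pos_iff_ne_zero]
    have hms : MeasurableSet {x : ℝ | g x = 0} := hg (measurableSet_singleton 0)
    rw [hset, withDensity_apply _ hms]
    calc ∫⁻ x in {x | g x = 0}, g x = ∫⁻ _ in {x : ℝ | g x = 0}, 0 := by
          refine setLIntegral_congr_fun hms (fun x hx => hx)
      _ = 0 := lintegral_zero
  filter_upwards [h1', h2] with x hx1 hx2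
  exact ⟨hx2, hx1⟩

lemma core {f : ℝ → ℝ≥0∞} (hf : Measurable f)
    (hprob : IsProbabilityMeasure (volume.withDensity f))
    (hint1 : Integrable (fun x => Real.log (gE f x).toReal) (volume.withDensity (gE f)))
    (hint2 : Integrable (fun x => Real.log (dE f x).toReal) (volume.withDensity (dE f)))
    (hint3 : Integrable (fun x => Real.log (f x).toReal) (volume.withDensity f)) :
    2 * ∫ x, Real.log (gE f x).toReal ∂(volume.withDensity (gE f))
      ≤ (∫ x, Real.log (dE f x).toReal ∂(volume.withDensity (dE f)))
        + ∫ x, Real.log (f x).toReal ∂(volume.withDensity f) := by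
  haveI := hprob
  set μ := volume.withDensity f with hμ
  set S := volume.withDensity (gE f) with hSdef
  set D := volume.withDensity (dE f) with hDdef
  set π := (μ.prod μ).prod μ with hπdef
  have hgE := measurable_gE hf
  have hdE := measurable_dE hf
  have hS : (μ.prod μ).map (fun p : ℝ × ℝ => p.1 + p.2) = S := map_add_eq hf
  have hD : (μ.prod μ).map (fun p : ℝ × ℝ => p.1 - p.2) = D := map_sub_eq hf
  haveI hSprob : IsProbabilityMeasure S := by
    rw [← hS]; exact Measure.isProbabilityMeasure_map (by fun_prop)
  haveI hDprob : IsProbabilityMeasure D := by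
    rw [← hD]; exact Measure.isProbabilityMeasure_map (by fun_prop)
  have hgE1 : ∫⁻ s, gE f s = 1 := by
    have := measure_univ (μ := S)
    rwa [hSdef, withDensity_apply _ MeasurableSet.univ, setLIntegral_univ] at this
  have hdE1 : ∫⁻ s, dE f s = 1 := by
    have := measure_univ (μ := D)
    rwa [hDdef, withDensity_apply _ MeasurableSet.univ, setLIntegral_univ] at this
  have hf1 : ∫⁻ s, f s = 1 := by
    have := measure_univ (μ := μ)
    rwa [hμ, withDensity_apply _ MeasurableSet.univ, setLIntegral_univ] at this
  -- the four projection maps and their pushforwards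
  have hmap1 : π.map (fun p : (ℝ × ℝ) × ℝ => p.1.1 + p.2) = S := by
    have h0 : π.map (fun p : (ℝ × ℝ) × ℝ => (p.1.1, p.2)) = μ.prod μ := by
      have : (fun p : (ℝ × ℝ) × ℝ => (p.1.1, p.2)) = Prod.map Prod.fst id := rfl
      rw [this, hπdef, ← Measure.map_prod_map _ _ measurable_fst measurable_id,
        Measure.map_id, Measure.map_fst_prod, measure_univ, one_smul]
    have : (fun p : (ℝ × ℝ) × ℝ => p.1.1 + p.2)
        = (fun q : ℝ × ℝ => q.1 + q.2) ∘ (fun p : (ℝ × ℝ) × ℝ => (p.1.1, p.2)) := rfl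
    rw [this, ← Measure.map_map (by fun_prop) (by fun_prop), h0, hS]
  have hmap2 : π.map (fun p : (ℝ × ℝ) × ℝ => p.1.2 + p.2) = S := by
    have h0 : π.map (fun p : (ℝ × ℝ) × ℝ => (p.1.2, p.2)) = μ.prod μ := by
      have : (fun p : (ℝ × ℝ) × ℝ => (p.1.2, p.2)) = Prod.map Prod.snd id := rfl
      rw [this, hπdef, ← Measure.map_prod_map _ _ measurable_snd measurable_id,
        Measure.map_id, Measure.map_snd_prod, measure_univ, one_smul]
    have : (fun p : (ℝ × ℝ) × ℝ => p.1.2 + p.2)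
        = (fun q : ℝ × ℝ => q.1 + q.2) ∘ (fun p : (ℝ × ℝ) × ℝ => (p.1.2, p.2)) := rfl
    rw [this, ← Measure.map_map (by fun_prop) (by fun_prop), h0, hS]
  have hmap3 : π.map (fun p : (ℝ × ℝ) × ℝ => p.1.1 - p.1.2) = D := by
    have h0 : π.map (Prod.fst : (ℝ × ℝ) × ℝ → ℝ × ℝ) = μ.prod μ := by
      rw [hπdef, Measure.map_fst_prod, measure_univ, one_smul]
    have : (fun p : (ℝ × ℝ) × ℝ => p.1.1 - p.1.2)
        = (fun q : ℝ × ℝ => q.1 - q.2) ∘ (Prod.fst : (ℝ × ℝ) × ℝ → ℝ × ℝ) := rfl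
    rw [this, ← Measure.map_map (by fun_prop) (by fun_prop), h0, hD]
  have hmap4 : π.map (Prod.snd : (ℝ × ℝ) × ℝ → ℝ) = μ := by
    rw [hπdef, Measure.map_snd_prod, measure_univ, one_smul]
  -- transfer of integrals along those maps
  have transfer : ∀ (T : (ℝ × ℝ) × ℝ → ℝ), Measurable T → ∀ (ρ : Measure ℝ), π.map T = ρ →
      ∀ (g : ℝ → ℝ), Measurable g → Integrable g ρ →
      Integrable (fun p => g (T p)) π ∧ ∫ p, g (T p) ∂π = ∫ x, g x ∂ρ := by
    intro T hT ρ hρ g hg hgint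
    subst hρ
    constructor
    · exact (integrable_map_measure hg.aestronglyMeasurable hT.aemeasurable).mp hgint
    · exact (integral_map hT.aemeasurable hg.aestronglyMeasurable).symm
  have hlogg : Measurable (fun x => Real.log (gE f x).toReal) :=
    Real.measurable_log.comp hgE.ennreal_toReal
  have hlogd : Measurable (fun x => Real.log (dE f x).toReal) :=
    Real.measurable_log.comp hdE.ennreal_toReal
  have hlogf : Measurable (fun x => Real.log (f x).toReal) :=
    Real.measurable_log.comp hf.ennreal_toReal
  obtain ⟨hintc, hvalc⟩ := transfer _ (by fun_prop) S hmap1 _ hlogg hint1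
  obtain ⟨hinte, hvale⟩ := transfer _ (by fun_prop) S hmap2 _ hlogg hint1
  obtain ⟨hinta, hvala⟩ := transfer _ (by fun_prop) D hmap3 _ hlogd hint2
  obtain ⟨hintb, hvalb⟩ := transfer _ (by fun_prop) μ hmap4 _ hlogf hint3
  -- the ratio function
  set R : (ℝ × ℝ) × ℝ → ℝ≥0∞ := fun p =>
    gE f (p.1.1 + p.2) * gE f (p.1.2 + p.2) / (f p.2 * dE f (p.1.1 - p.1.2)) with hRdef
  have hRmeas : Measurable R := by fun_prop
  have hlint : ∫⁻ p, R p ∂π ≤ 1 := lint_R_le_one hf hprob hgE1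
  have hRneTop : ∫⁻ p, R p ∂π ≠ ⊤ := ne_top_of_le_ne_top ENNReal.one_ne_top hlint
  -- a.e. positivity and finiteness of the pieces
  have haegS : ∀ᵐ x ∂S, 0 < gE f x ∧ gE f x < ⊤ := by
    rw [hSdef]; exact ae_pos_lt_top hgE (by rw [hgE1]; exact ENNReal.one_ne_top)
  have haedD : ∀ᵐ x ∂D, 0 < dE f x ∧ dE f x < ⊤ := by
    rw [hDdef]; exact ae_pos_lt_top hdE (by rw [hdE1]; exact ENNReal.one_ne_top)
  have haefμ : ∀ᵐ x ∂μ, 0 < f x ∧ f x < ⊤ := by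
    rw [hμ]; exact ae_pos_lt_top hf (by rw [hf1]; exact ENNReal.one_ne_top)
  have pullback : ∀ (T : (ℝ × ℝ) × ℝ → ℝ), Measurable T → ∀ (ρ : Measure ℝ), π.map T = ρ →
      ∀ (g : ℝ → ℝ≥0∞), Measurable g → (∀ᵐ x ∂ρ, 0 < g x ∧ g x < ⊤) →
      ∀ᵐ p ∂π, 0 < g (T p) ∧ g (T p) < ⊤ := by
    intro T hT ρ hρ g hg hae
    subst hρ
    have hset : MeasurableSet {x : ℝ | 0 < g x ∧ g x < ⊤} := by
      have : {x : ℝ | 0 < g x ∧ g x < ⊤} = g ⁻¹' (Set.Ioo 0 ⊤) := rfl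
      rw [this]
      exact hg measurableSet_Ioo
    exact (ae_map_iff hT.aemeasurable hset).mp hae
  have hae1 := pullback _ (by fun_prop) S hmap1 _ hgE haegS
  have hae2 := pullback _ (by fun_prop) S hmap2 _ hgE haegS
  have hae3 := pullback _ (by fun_prop) D hmap3 _ hdE haedD
  have hae4 := pullback _ (by fun_prop) μ hmap4 _ hf haefμ
  -- a.e. identity for the log of the ratio, and a.e. bounds
  have haeEq : ∀ᵐ p ∂π, Real.log (R p).toReal
      = Real.log (gE f (p.1.1 + p.2)).toReal + Real.log (gE f (p.1.2 + p.2)).toReal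
        - Real.log (dE f (p.1.1 - p.1.2)).toReal - Real.log (f p.2).toReal
        ∧ 0 < R p ∧ R p < ⊤ := by
    filter_upwards [hae1, hae2, hae3, hae4] with p h1 h2 h3 h4
    obtain ⟨hA0, hAt⟩ := h1
    obtain ⟨hB0, hBt⟩ := h2
    obtain ⟨hD0, hDt⟩ := h3
    obtain ⟨hC0, hCt⟩ := h4
    have hnum0 : gE f (p.1.1 + p.2) * gE f (p.1.2 + p.2) ≠ 0 :=
      mul_ne_zero hA0.ne' hB0.ne'
    have hnumt : gE f (p.1.1 + p.2) * gE f (p.1.2 + p.2) ≠ ⊤ :=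
      ENNReal.mul_ne_top hAt.ne hBt.ne
    have hden0 : f p.2 * dE f (p.1.1 - p.1.2) ≠ 0 := mul_ne_zero hC0.ne' hD0.ne'
    have hdent : f p.2 * dE f (p.1.1 - p.1.2) ≠ ⊤ := ENNReal.mul_ne_top hCt.ne hDt.ne
    refine ⟨?_, ?_, ?_⟩
    · rw [hRdef]
      simp only
      rw [ENNReal.toReal_div, ENNReal.toReal_mul, ENNReal.toReal_mul]
      rw [Real.log_div (by
            exact mul_ne_zero (ENNReal.toReal_ne_zero.mpr ⟨hA0.ne', hAt.ne⟩)
              (ENNReal.toReal_ne_zero.mpr ⟨hB0.ne', hBt.ne⟩))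
          (by
            exact mul_ne_zero (ENNReal.toReal_ne_zero.mpr ⟨hC0.ne', hCt.ne⟩)
              (ENNReal.toReal_ne_zero.mpr ⟨hD0.ne', hDt.ne⟩)),
        Real.log_mul (ENNReal.toReal_ne_zero.mpr ⟨hA0.ne', hAt.ne⟩)
          (ENNReal.toReal_ne_zero.mpr ⟨hB0.ne', hBt.ne⟩),
        Real.log_mul (ENNReal.toReal_ne_zero.mpr ⟨hC0.ne', hCt.ne⟩)
          (ENNReal.toReal_ne_zero.mpr ⟨hD0.ne', hDt.ne⟩)]
      ring
    · exact ENNReal.div_pos hnum0 hdent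
    · exact ENNReal.div_lt_top hnumt hden0
  -- integrability of R.toReal and bound on its integral
  have hRint : Integrable (fun p => (R p).toReal) π :=
    integrable_toReal_of_lintegral_ne_top hRmeas.aemeasurable hRneTop
  have hRlt : ∀ᵐ p ∂π, R p < ⊤ := ae_lt_top hRmeas hRneTop
  have hRval : ∫ p, (R p).toReal ∂π ≤ 1 := by
    rw [integral_toReal hRmeas.aemeasurable hRlt]
    calc (∫⁻ p, R p ∂π).toReal ≤ (1 : ℝ≥0∞).toReal :=
          ENNReal.toReal_mono ENNReal.one_ne_top hlint
      _ = 1 := by simp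
  -- the function c + e - a - b is integrable and equals log R a.e.
  have hintce : Integrable (fun p : (ℝ × ℝ) × ℝ =>
      Real.log (gE f (p.1.1 + p.2)).toReal + Real.log (gE f (p.1.2 + p.2)).toReal) π :=
    hintc.add hinte
  have hintcea : Integrable (fun p : (ℝ × ℝ) × ℝ =>
      Real.log (gE f (p.1.1 + p.2)).toReal + Real.log (gE f (p.1.2 + p.2)).toReal
        - Real.log (dE f (p.1.1 - p.1.2)).toReal) π := hintce.sub hinta
  have hcomb : Integrable (fun p : (ℝ × ℝ) × ℝ =>
      Real.log (gE f (p.1.1 + p.2)).toReal + Real.log (gE f (p.1.2 + p.2)).toReal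
        - Real.log (dE f (p.1.1 - p.1.2)).toReal - Real.log (f p.2).toReal) π :=
    hintcea.sub hintb
  have hlogR_int : Integrable (fun p => Real.log (R p).toReal) π := by
    refine hcomb.congr ?_
    filter_upwards [haeEq] with p hp
    exact hp.1.symm
  -- Gibbs' inequality
  have gibbs : ∫ p, Real.log (R p).toReal ∂π ≤ 0 := by
    have hmono : ∫ p, Real.log (R p).toReal ∂π ≤ ∫ p, ((R p).toReal - 1) ∂π := by
      refine integral_mono_ae hlogR_int (hRint.sub (integrable_const 1)) ?_
      filter_upwards [haeEq] with p hp
      have hpos : 0 < (R p).toReal := ENNReal.toReal_pos hp.2.1.ne' hp.2.2.ne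
      exact Real.log_le_sub_one_of_pos hpos
    have : ∫ p, ((R p).toReal - 1) ∂π = (∫ p, (R p).toReal ∂π) - 1 := by
      rw [integral_sub hRint (integrable_const 1), integral_const]
      simp [measure_univ]
    linarith [hRval, hmono, this.symm ▸ hmono]
  -- put everything together
  have hsplit : ∫ p, Real.log (R p).toReal ∂π
      = (∫ x, Real.log (gE f x).toReal ∂S) + (∫ x, Real.log (gE f x).toReal ∂S)
        - (∫ x, Real.log (dE f x).toReal ∂D) - ∫ x, Real.log (f x).toReal ∂μ := by
    have : ∫ p, Real.log (R p).toReal ∂π = ∫ p : (ℝ × ℝ) × ℝ,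
        (Real.log (gE f (p.1.1 + p.2)).toReal + Real.log (gE f (p.1.2 + p.2)).toReal
          - Real.log (dE f (p.1.1 - p.1.2)).toReal - Real.log (f p.2).toReal) ∂π := by
      refine integral_congr_ae ?_
      filter_upwards [haeEq] with p hp
      exact hp.1
    rw [this, integral_sub hintcea hintb, integral_sub hintce hinta,
      integral_add hintc hinte, hvalc, hvale, hvala, hvalb]
  rw [hsplit] at gibbs
  linarith


/-- **Doubling-difference inequality (lower bound).**
If `X₁, X₂` are i.i.d. continuous random variables with all relevant differential
entropies existing and finite, then `h(X₁-X₂) - h(X₁) ≤ 2·(h(X₁+X₂) - h(X₁))`. -/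
theorem doubling_difference_lower
    {Ω : Type*} [MeasurableSpace Ω] (P : Measure Ω) [IsProbabilityMeasure P]
    (X₁ X₂ : Ω → ℝ) (hX₁ : Measurable X₁) (hX₂ : Measurable X₂)
    (hindep : IndepFun X₁ X₂ P) (hid : IdentDistrib X₁ X₂ P P)
    (h1 : FiniteDent volume P (X₁ + X₂)) (h2 : FiniteDent volume P (X₁ - X₂))
    (h3 : FiniteDent volume P X₁) :
    dent volume P (X₁ - X₂) - dent volume P X₁ ≤
      2 * (dent volume P (X₁ + X₂) - dent volume P X₁) := by
  haveI : IsProbabilityMeasure (P.map X₁) := Measure.isProbabilityMeasure_map hX₁.aemeasurable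
  obtain ⟨f, hf, hwd⟩ : ∃ f : ℝ → ℝ≥0∞, Measurable f ∧ volume.withDensity f = P.map X₁ :=
    ⟨(P.map X₁).rnDeriv volume, Measure.measurable_rnDeriv _ _,
      Measure.withDensity_rnDeriv_eq _ _ h3.1⟩
  haveI hprob : IsProbabilityMeasure (volume.withDensity f) := by
    rw [hwd]; infer_instance
  have hgE := measurable_gE hf
  have hdE := measurable_dE hf
  have hjoint : P.map (fun ω => (X₁ ω, X₂ ω))
      = (volume.withDensity f).prod (volume.withDensity f) := by
    rw [(indepFun_iff_map_prod_eq_prod_map_map hX₁.aemeasurable hX₂.aemeasurable).mp hindep,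
      ← hid.map_eq, hwd]
  have hmapS : P.map (X₁ + X₂) = volume.withDensity (gE f) := by
    have h1' : X₁ + X₂ = (fun q : ℝ × ℝ => q.1 + q.2) ∘ (fun ω => (X₁ ω, X₂ ω)) := rfl
    rw [h1', ← Measure.map_map (by fun_prop) (hX₁.prodMk hX₂), hjoint, map_add_eq hf]
  have hmapD : P.map (X₁ - X₂) = volume.withDensity (dE f) := by
    have h1' : X₁ - X₂ = (fun q : ℝ × ℝ => q.1 - q.2) ∘ (fun ω => (X₁ ω, X₂ ω)) := rfl
    rw [h1', ← Measure.map_map (by fun_prop) (hX₁.prodMk hX₂), hjoint, map_sub_eq hf]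
  -- identify the log-densities a.e.
  have haeS : (volume.withDensity (gE f)).rnDeriv volume =ᵐ[volume.withDensity (gE f)] gE f :=
    (withDensity_absolutelyContinuous volume (gE f)).ae_le
      (Measure.rnDeriv_withDensity volume hgE)
  have haeD : (volume.withDensity (dE f)).rnDeriv volume =ᵐ[volume.withDensity (dE f)] dE f :=
    (withDensity_absolutelyContinuous volume (dE f)).ae_le
      (Measure.rnDeriv_withDensity volume hdE)
  have haeX : (volume.withDensity f).rnDeriv volume =ᵐ[volume.withDensity f] f :=
    (withDensity_absolutelyContinuous volume f).ae_le
      (Measure.rnDeriv_withDensity volume hf)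
  have eS : dent volume P (X₁ + X₂)
      = -∫ x, Real.log (gE f x).toReal ∂(volume.withDensity (gE f)) := by
    rw [dent, hmapS]
    congr 1
    refine integral_congr_ae ?_
    filter_upwards [haeS] with x hx
    rw [hx]
  have eD : dent volume P (X₁ - X₂)
      = -∫ x, Real.log (dE f x).toReal ∂(volume.withDensity (dE f)) := by
    rw [dent, hmapD]
    congr 1
    refine integral_congr_ae ?_
    filter_upwards [haeD] with x hx
    rw [hx]
  have eX : dent volume P X₁
      = -∫ x, Real.log (f x).toReal ∂(volume.withDensity f) := by
    rw [dent, ← hwd]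
    congr 1
    refine integral_congr_ae ?_
    filter_upwards [haeX] with x hx
    rw [hx]
  -- integrability hypotheses in density form
  have hintS : Integrable (fun x => Real.log (gE f x).toReal) (volume.withDensity (gE f)) := by
    have := h1.2
    rw [hmapS] at this
    refine this.congr ?_
    filter_upwards [haeS] with x hx
    rw [hx]
  have hintD : Integrable (fun x => Real.log (dE f x).toReal) (volume.withDensity (dE f)) := by
    have := h2.2
    rw [hmapD] at this
    refine this.congr ?_
    filter_upwards [haeD] with x hx
    rw [hx]
  have hintX : Integrable (fun x => Real.log (f x).toReal) (volume.withDensity f) := by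
    have := h3.2
    rw [← hwd] at this
    refine this.congr ?_
    filter_upwards [haeX] with x hx
    rw [hx]
  have := core hf hprob hintS hintD hintX
  rw [eS, eD, eX]
  linarith
end

section
/- Sum-difference inequality for differential entropy: If X and Y are independent real-valued continuous random variables with all relevant differential entropies existing and finite, then h(X+Y) ≤ 3·h(X-Y) - h(X) - h(Y). -/
open MeasureTheory ProbabilityTheory

namespace SDAux

/-- ENNReal helper: cancellation inequality. -/
lemma mul_div_mul_le {a b c : ENNReal} (ha : a ≠ ⊤) : a * (b / (c * a)) ≤ b / c := by
  rcases eq_or_ne a 0 with rfl | ha0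
  · simp
  rcases eq_or_ne c 0 with rfl | hc0
  · rcases eq_or_ne b 0 with rfl | hb0
    · simp
    · simp [ENNReal.div_zero hb0]
  rcases eq_or_ne c ⊤ with rfl | hct
  · simp [ENNReal.top_mul ha0, ENNReal.div_top]
  · have : c * a ≠ 0 := by simp [ha0, hc0]
    rw [div_eq_mul_inv, ENNReal.mul_inv (Or.inl hc0) (Or.inl hct), ← mul_assoc,
      mul_comm a b, mul_assoc, mul_comm a _, mul_assoc]
    calc b * (c⁻¹ * (a⁻¹ * a)) = b * c⁻¹ * (a⁻¹ * a) := by ring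
    _ ≤ b * c⁻¹ * 1 := by
        gcongr
        rw [mul_comm]
        exact ENNReal.mul_inv_le_one a
    _ = b / c := by rw [mul_one, div_eq_mul_inv]

lemma mul_div_mul_le' {a b c : ENNReal} (ha : a ≠ ⊤) : a * (b / (a * c)) ≤ b / c := by
  rw [mul_comm a c]
  exact mul_div_mul_le ha

lemma mul_mul_inv_le {a b : ENNReal} : a * (b * a⁻¹) ≤ b := by
  rw [mul_comm b a⁻¹, ← mul_assoc]
  calc a * a⁻¹ * b ≤ 1 * b := by gcongr; exact ENNReal.mul_inv_le_one a
  _ = b := one_mul b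

lemma inv_mul_sq_le {a : ENNReal} : a⁻¹ * (a * a) ≤ a := by
  rw [← mul_assoc]
  calc a⁻¹ * a * a ≤ 1 * a := by gcongr; rw [mul_comm]; exact ENNReal.mul_inv_le_one a
  _ = a := one_mul a

lemma inv_mul_mul_le {a : ENNReal} : a⁻¹ * a * a ≤ a := by
  calc a⁻¹ * a * a ≤ 1 * a := by gcongr; rw [mul_comm]; exact ENNReal.mul_inv_le_one a
  _ = a := one_mul a

lemma mul_inv_mul_le {a b : ENNReal} : a * (a⁻¹ * b) ≤ b := by
  rw [← mul_assoc]
  calc a * a⁻¹ * b ≤ 1 * b := by gcongr; exact ENNReal.mul_inv_le_one a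
  _ = b := one_mul b

/-- Convolution of a measure with an absolutely continuous measure: density formula. -/
lemma conv_withDensity (B : Measure ℝ) [SFinite B] (g : ℝ → ENNReal) (hg : Measurable g) :
    (B.prod (volume.withDensity g)).map (fun p : ℝ × ℝ => p.1 + p.2)
      = volume.withDensity (fun e => ∫⁻ b, g (e - b) ∂B) := by
  ext s hs
  rw [Measure.map_apply measurable_add hs, Measure.prod_apply (measurable_add hs),
    withDensity_apply _ hs]
  have h1 : ∀ b : ℝ, (volume.withDensity g) (Prod.mk b ⁻¹' ((fun p : ℝ × ℝ => p.1 + p.2) ⁻¹' s))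
      = ∫⁻ e, s.indicator (fun e => g (e - b)) e := by
    intro b
    have hmeas : MeasurableSet {a : ℝ | b + a ∈ s} := (measurable_const_add b) hs
    rw [show Prod.mk b ⁻¹' ((fun p : ℝ × ℝ => p.1 + p.2) ⁻¹' s) = {a : ℝ | b + a ∈ s} from rfl,
      withDensity_apply _ hmeas, ← lintegral_indicator hmeas]
    have hshift := lintegral_add_right_eq_self
      (fun e => s.indicator (fun e => g (e - b)) e) b (μ := volume)
    rw [← hshift]
    congr 1
    funext a
    by_cases hab : b + a ∈ s
    · have hab' : a + b ∈ s := by rwa [add_comm]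
      rw [Set.indicator_of_mem (show a ∈ {a : ℝ | b + a ∈ s} from hab) g,
        Set.indicator_of_mem hab']
      norm_num
    · have hab' : a + b ∉ s := by rwa [add_comm]
      rw [Set.indicator_of_notMem (show a ∉ {a : ℝ | b + a ∈ s} from hab) g,
        Set.indicator_of_notMem hab']
  calc ∫⁻ b, (volume.withDensity g) (Prod.mk b ⁻¹' ((fun p : ℝ × ℝ => p.1 + p.2) ⁻¹' s)) ∂B
      = ∫⁻ b, ∫⁻ e, s.indicator (fun e => g (e - b)) e ∂volume ∂B := by
        simp only [h1]
    _ = ∫⁻ e, ∫⁻ b, s.indicator (fun e => g (e - b)) e ∂B ∂volume := by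
        have hm : Measurable (Function.uncurry fun (b e : ℝ) =>
            s.indicator (fun e => g (e - b)) e) := by
          have heq : (Function.uncurry fun (b e : ℝ) => s.indicator (fun e => g (e - b)) e)
              = {p : ℝ × ℝ | p.2 ∈ s}.indicator (fun p => g (p.2 - p.1)) := by
            funext p
            by_cases hp : p.2 ∈ s
            · rw [Set.indicator_of_mem (show p ∈ {p : ℝ × ℝ | p.2 ∈ s} from hp)]
              simp [Function.uncurry, Set.indicator_of_mem hp]
            · rw [Set.indicator_of_notMem (show p ∉ {p : ℝ × ℝ | p.2 ∈ s} from hp)]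
              simp [Function.uncurry, Set.indicator_of_notMem hp]
          rw [heq]
          exact (hg.comp (measurable_snd.sub measurable_fst)).indicator (measurable_snd hs)
        exact lintegral_lintegral_swap (μ := B) (ν := volume) hm.aemeasurable
    _ = ∫⁻ e, s.indicator (fun e => ∫⁻ b, g (e - b) ∂B) e ∂volume := by
        apply lintegral_congr
        intro e
        by_cases he : e ∈ s
        · simp [Set.indicator_of_mem he]
        · simp [Set.indicator_of_notMem he]
    _ = ∫⁻ e in s, (fun e => ∫⁻ b, g (e - b) ∂B) e := (lintegral_indicator hs _)


/-- The pointwise three-term Gibbs inequality. -/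
lemma log_ineq {a b c f0 g0 gp rr : ENNReal}
    (ha0 : a ≠ 0) (haT : a ≠ ⊤) (hb0 : b ≠ 0) (hbT : b ≠ ⊤)
    (hc0 : c ≠ 0) (hcT : c ≠ ⊤) (hf0 : f0 ≠ 0) (hfT : f0 ≠ ⊤)
    (hg0 : g0 ≠ 0) (hgT : g0 ≠ ⊤) (hp0 : gp ≠ 0) (hpT : gp ≠ ⊤)
    (hr0 : rr ≠ 0) (hrT : rr ≠ ⊤) :
    2 * Real.log a.toReal + Real.log b.toReal - Real.log f0.toReal - Real.log g0.toReal
        - Real.log c.toReal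
      ≤ (a * gp / (c * g0) + a * b / (f0 * rr) + rr / gp).toReal - 3 := by
  have hat : 0 < a.toReal := ENNReal.toReal_pos ha0 haT
  have hbt : 0 < b.toReal := ENNReal.toReal_pos hb0 hbT
  have hct : 0 < c.toReal := ENNReal.toReal_pos hc0 hcT
  have hft : 0 < f0.toReal := ENNReal.toReal_pos hf0 hfT
  have hgt : 0 < g0.toReal := ENNReal.toReal_pos hg0 hgT
  have hpt : 0 < gp.toReal := ENNReal.toReal_pos hp0 hpT
  have hrt : 0 < rr.toReal := ENNReal.toReal_pos hr0 hrT
  have ht1T : a * gp / (c * g0) ≠ ⊤ := by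
    rw [Ne, ENNReal.div_eq_top]
    push_neg
    refine ⟨fun _ => by simp [hc0, hg0], fun h => absurd h (ENNReal.mul_ne_top haT hpT)⟩
  have ht2T : a * b / (f0 * rr) ≠ ⊤ := by
    rw [Ne, ENNReal.div_eq_top]
    push_neg
    refine ⟨fun _ => by simp [hf0, hr0], fun h => absurd h (ENNReal.mul_ne_top haT hbT)⟩
  have ht3T : rr / gp ≠ ⊤ := by
    rw [Ne, ENNReal.div_eq_top]
    push_neg
    exact ⟨fun _ => hp0, fun h => absurd h hrT⟩
  have hsum : (a * gp / (c * g0) + a * b / (f0 * rr) + rr / gp).toReal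
      = (a * gp / (c * g0)).toReal + (a * b / (f0 * rr)).toReal + (rr / gp).toReal := by
    rw [ENNReal.toReal_add (by exact ENNReal.add_ne_top.mpr ⟨ht1T, ht2T⟩) ht3T,
      ENNReal.toReal_add ht1T ht2T]
  have hv1 : (a * gp / (c * g0)).toReal = a.toReal * gp.toReal / (c.toReal * g0.toReal) := by
    rw [ENNReal.toReal_div, ENNReal.toReal_mul, ENNReal.toReal_mul]
  have hv2 : (a * b / (f0 * rr)).toReal = a.toReal * b.toReal / (f0.toReal * rr.toReal) := by
    rw [ENNReal.toReal_div, ENNReal.toReal_mul, ENNReal.toReal_mul]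
  have hv3 : (rr / gp).toReal = rr.toReal / gp.toReal := ENNReal.toReal_div _ _
  have hl1 : Real.log (a.toReal * gp.toReal / (c.toReal * g0.toReal))
      = Real.log a.toReal + Real.log gp.toReal - (Real.log c.toReal + Real.log g0.toReal) := by
    rw [Real.log_div (by positivity) (by positivity), Real.log_mul hat.ne' hpt.ne',
      Real.log_mul hct.ne' hgt.ne']
  have hl2 : Real.log (a.toReal * b.toReal / (f0.toReal * rr.toReal))
      = Real.log a.toReal + Real.log b.toReal - (Real.log f0.toReal + Real.log rr.toReal) := by
    rw [Real.log_div (by positivity) (by positivity), Real.log_mul hat.ne' hbt.ne',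
      Real.log_mul hft.ne' hrt.ne']
  have hl3 : Real.log (rr.toReal / gp.toReal) = Real.log rr.toReal - Real.log gp.toReal :=
    Real.log_div hrt.ne' hpt.ne'
  have hb1 : Real.log (a.toReal * gp.toReal / (c.toReal * g0.toReal))
      ≤ a.toReal * gp.toReal / (c.toReal * g0.toReal) - 1 :=
    Real.log_le_sub_one_of_pos (by positivity)
  have hb2 : Real.log (a.toReal * b.toReal / (f0.toReal * rr.toReal))
      ≤ a.toReal * b.toReal / (f0.toReal * rr.toReal) - 1 :=
    Real.log_le_sub_one_of_pos (by positivity)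
  have hb3 : Real.log (rr.toReal / gp.toReal) ≤ rr.toReal / gp.toReal - 1 :=
    Real.log_le_sub_one_of_pos (by positivity)
  rw [hsum, hv1, hv2, hv3]
  linarith [hb1, hb2, hb3, hl1, hl2, hl3]

lemma bound3 (μ ν R GPm : Measure ℝ) [IsProbabilityMeasure μ] [SFinite ν]
    [IsProbabilityMeasure R] [IsProbabilityMeasure GPm]
    (hGP : GPm = (ν.prod ν).map (fun p : ℝ × ℝ => p.1 + p.2))
    (hGP_ac : GPm ≪ volume) (hR_ac : R ≪ volume) :
    ∫⁻ ω : ℝ × ℝ × ℝ, R.rnDeriv volume (ω.2.1 + ω.2.2 - ω.1)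
      / GPm.rnDeriv volume (ω.2.1 + ω.2.2) ∂(μ.prod (ν.prod ν)) ≤ 1 := by
  set RD := R.rnDeriv volume with hRDdef
  set GP := GPm.rnDeriv volume with hGPdef
  have mRD : Measurable RD := Measure.measurable_rnDeriv _ _
  have mGP : Measurable GP := Measure.measurable_rnDeriv _ _
  have hRD_mass : ∫⁻ u, RD u ∂volume = 1 := by
    rw [hRDdef, Measure.lintegral_rnDeriv hR_ac]; exact measure_univ
  have m1 : Measurable fun ω : ℝ × ℝ × ℝ => ω.1 := measurable_fst
  have m21 : Measurable fun ω : ℝ × ℝ × ℝ => ω.2.1 := measurable_fst.comp measurable_snd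
  have m22 : Measurable fun ω : ℝ × ℝ × ℝ => ω.2.2 := measurable_snd.comp measurable_snd
  have mt3 : Measurable fun ω : ℝ × ℝ × ℝ => RD (ω.2.1 + ω.2.2 - ω.1) / GP (ω.2.1 + ω.2.2) :=
    (mRD.comp ((m21.add m22).sub m1)).div (mGP.comp (m21.add m22))
  have hstep : ∀ x : ℝ, ∫⁻ p : ℝ × ℝ, RD (p.1 + p.2 - x) / GP (p.1 + p.2) ∂(ν.prod ν) ≤ 1 := by
    intro x
    have hmf : Measurable fun w : ℝ => RD (w - x) / GP w :=
      (mRD.comp (measurable_id.sub measurable_const)).div mGP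
    calc ∫⁻ p : ℝ × ℝ, RD (p.1 + p.2 - x) / GP (p.1 + p.2) ∂(ν.prod ν)
        = ∫⁻ w, RD (w - x) / GP w ∂GPm := by
          rw [hGP, lintegral_map hmf measurable_add]
      _ = ∫⁻ w, GP w * (RD (w - x) / GP w) ∂volume := by
          have hwd := lintegral_withDensity_eq_lintegral_mul volume mGP hmf
          rw [Measure.withDensity_rnDeriv_eq GPm volume hGP_ac] at hwd
          exact hwd
      _ ≤ ∫⁻ w, RD (w - x) ∂volume := lintegral_mono fun w => ENNReal.mul_div_le
      _ = ∫⁻ w, RD w ∂volume := by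
          have h := lintegral_add_right_eq_self (μ := volume) RD (-x)
          simp only [← sub_eq_add_neg] at h
          exact h
      _ = 1 := hRD_mass
  calc ∫⁻ ω : ℝ × ℝ × ℝ, RD (ω.2.1 + ω.2.2 - ω.1) / GP (ω.2.1 + ω.2.2) ∂(μ.prod (ν.prod ν))
      = ∫⁻ x, ∫⁻ p : ℝ × ℝ, RD (p.1 + p.2 - x) / GP (p.1 + p.2) ∂(ν.prod ν) ∂μ :=
        lintegral_prod _ mt3.aemeasurable
    _ ≤ ∫⁻ _, 1 ∂μ := lintegral_mono hstep
    _ = 1 := by simp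

set_option maxHeartbeats 1000000 in
lemma bound1 (μ ν S D GPm : Measure ℝ) [IsProbabilityMeasure μ] [IsProbabilityMeasure ν]
    [IsProbabilityMeasure S] [IsProbabilityMeasure D] [IsProbabilityMeasure GPm]
    (hν_ac : ν ≪ volume) (hS_ac : S ≪ volume) (hD_ac : D ≪ volume) (hGP_ac : GPm ≪ volume)
    (hSmap : S = (μ.prod ν).map (fun p : ℝ × ℝ => p.1 + p.2)) :
    ∫⁻ ω : ℝ × ℝ × ℝ, D.rnDeriv volume (ω.1 - ω.2.1) * GPm.rnDeriv volume (ω.2.1 + ω.2.2)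
      / (S.rnDeriv volume (ω.1 + ω.2.2) * ν.rnDeriv volume ω.2.1)
      ∂(μ.prod (ν.prod ν)) ≤ 1 := by
  set G := ν.rnDeriv volume with hGdef
  set SD := S.rnDeriv volume with hSDdef
  set DD := D.rnDeriv volume with hDDdef
  set GP := GPm.rnDeriv volume with hGPdef
  have mG : Measurable G := Measure.measurable_rnDeriv _ _
  have mSD : Measurable SD := Measure.measurable_rnDeriv _ _
  have mDD : Measurable DD := Measure.measurable_rnDeriv _ _
  have mGP : Measurable GP := Measure.measurable_rnDeriv _ _
  have hν_wd : volume.withDensity G = ν := Measure.withDensity_rnDeriv_eq ν volume hν_ac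
  have hDD_mass : ∫⁻ u, DD u ∂volume = 1 := by
    rw [hDDdef, Measure.lintegral_rnDeriv hD_ac]; exact measure_univ
  have hGP_mass : ∫⁻ u, GP u ∂volume = 1 := by
    rw [hGPdef, Measure.lintegral_rnDeriv hGP_ac]; exact measure_univ
  have m1 : Measurable fun ω : ℝ × ℝ × ℝ => ω.1 := measurable_fst
  have m21 : Measurable fun ω : ℝ × ℝ × ℝ => ω.2.1 := measurable_fst.comp measurable_snd
  have m22 : Measurable fun ω : ℝ × ℝ × ℝ => ω.2.2 := measurable_snd.comp measurable_snd
  set t1 : ℝ × ℝ × ℝ → ENNReal := fun ω =>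
    DD (ω.1 - ω.2.1) * GP (ω.2.1 + ω.2.2) / (SD (ω.1 + ω.2.2) * G ω.2.1) with ht1def
  have mt1 : Measurable t1 := ((mDD.comp (m1.sub m21)).mul (mGP.comp (m21.add m22))).div
    ((mSD.comp (m1.add m22)).mul (mG.comp m21))
  set c3 : ℝ → ENNReal := fun w => ∫⁻ u, DD (w - u) * GP u ∂volume with hc3def
  have mc3 : Measurable c3 := by
    apply Measurable.lintegral_prod_right' (f := fun q : ℝ × ℝ => DD (q.1 - q.2) * GP q.2)
    exact (mDD.comp (measurable_fst.sub measurable_snd)).mul (mGP.comp measurable_snd)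
  have hc3_mass : ∫⁻ w, c3 w ∂volume = 1 := by
    have hswap : ∫⁻ w, ∫⁻ u, DD (w - u) * GP u ∂volume ∂volume
        = ∫⁻ u, ∫⁻ w, DD (w - u) * GP u ∂volume ∂volume :=
      lintegral_lintegral_swap
        (show Measurable (Function.uncurry fun (w u : ℝ) => DD (w - u) * GP u) from
          (mDD.comp (measurable_fst.sub measurable_snd)).mul
            (mGP.comp measurable_snd)).aemeasurable
    have hinner : ∀ u : ℝ, ∫⁻ w, DD (w - u) * GP u ∂volume = GP u := by
      intro u
      rw [lintegral_mul_const _ (show Measurable fun w : ℝ => DD (w - u) from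
        mDD.comp (measurable_id.sub measurable_const))]
      have h := lintegral_add_right_eq_self (μ := volume) DD (-u)
      simp only [← sub_eq_add_neg] at h
      rw [h, hDD_mass, one_mul]
    calc ∫⁻ w, c3 w ∂volume
        = ∫⁻ u, ∫⁻ w, DD (w - u) * GP u ∂volume ∂volume := hswap
      _ = ∫⁻ u, GP u ∂volume := lintegral_congr hinner
      _ = 1 := hGP_mass
  have hshift : ∀ x z : ℝ, ∫⁻ y, DD (x - y) * GP (y + z) ∂volume = c3 (x + z) := by
    intro x z
    have h := lintegral_add_right_eq_self (μ := volume)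
      (fun v => DD (x + z - v) * GP v) z
    calc ∫⁻ y, DD (x - y) * GP (y + z) ∂volume
        = ∫⁻ y, DD (x + z - (y + z)) * GP (y + z) ∂volume := by
          apply lintegral_congr
          intro y
          congr 2
          ring
      _ = ∫⁻ v, DD (x + z - v) * GP v ∂volume := h
      _ = c3 (x + z) := rfl
  have hGfin : ∀ᵐ y ∂volume, G y < ⊤ := by
    have h := Measure.rnDeriv_lt_top ν volume
    rwa [← hGdef] at h
  have hfix : ∀ x : ℝ, ∫⁻ p : ℝ × ℝ, t1 (x, p) ∂(ν.prod ν)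
      ≤ ∫⁻ z, (c3 (x + z)) * (SD (x + z))⁻¹ ∂ν := by
    intro x
    have msec : ∀ y : ℝ, Measurable fun z : ℝ =>
        DD (x - y) * GP (y + z) / (SD (x + z) * G y) :=
      fun y => (measurable_const.mul (mGP.comp (measurable_const.add measurable_id))).div
        ((mSD.comp (measurable_const.add measurable_id)).mul measurable_const)
    have msec2 : Measurable fun y : ℝ => ∫⁻ z, t1 (x, y, z) ∂ν := by
      apply Measurable.lintegral_prod_right' (f := fun q : ℝ × ℝ => t1 (x, q.1, q.2))
      exact mt1.comp (measurable_const.prodMk (measurable_fst.prodMk measurable_snd))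
    calc ∫⁻ p : ℝ × ℝ, t1 (x, p) ∂(ν.prod ν)
        = ∫⁻ y, ∫⁻ z, t1 (x, y, z) ∂ν ∂ν := by
          exact lintegral_prod _ (mt1.comp
            (measurable_const.prodMk (measurable_fst.prodMk measurable_snd))).aemeasurable
      _ = ∫⁻ y, G y * ∫⁻ z, t1 (x, y, z) ∂ν ∂volume := by
          have hwd := lintegral_withDensity_eq_lintegral_mul volume mG msec2
          rw [hν_wd] at hwd
          exact hwd
      _ = ∫⁻ y, ∫⁻ z, G y * t1 (x, y, z) ∂ν ∂volume := by
          apply lintegral_congr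
          intro y
          exact (lintegral_const_mul (G y) (msec y)).symm
      _ ≤ ∫⁻ y, ∫⁻ z, DD (x - y) * GP (y + z) / SD (x + z) ∂ν ∂volume := by
          apply lintegral_mono_ae
          filter_upwards [hGfin] with y hy
          apply lintegral_mono
          intro z
          exact SDAux.mul_div_mul_le hy.ne
      _ = ∫⁻ z, ∫⁻ y, DD (x - y) * GP (y + z) / SD (x + z) ∂volume ∂ν := by
          exact lintegral_lintegral_swap
            (show Measurable (Function.uncurry fun (y z : ℝ) =>
                DD (x - y) * GP (y + z) / SD (x + z)) from
              ((mDD.comp (measurable_const.sub measurable_fst)).mul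
                (mGP.comp (measurable_fst.add measurable_snd))).div
                (mSD.comp (measurable_const.add measurable_snd))).aemeasurable
      _ = ∫⁻ z, (c3 (x + z)) * (SD (x + z))⁻¹ ∂ν := by
          apply lintegral_congr
          intro z
          calc ∫⁻ y, DD (x - y) * GP (y + z) / SD (x + z) ∂volume
              = ∫⁻ y, DD (x - y) * GP (y + z) * (SD (x + z))⁻¹ ∂volume := by
                simp only [div_eq_mul_inv]
            _ = (∫⁻ y, DD (x - y) * GP (y + z) ∂volume) * (SD (x + z))⁻¹ := by
                exact lintegral_mul_const _ (show Measurable fun y : ℝ =>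
                  DD (x - y) * GP (y + z) from (mDD.comp
                    (measurable_const.sub measurable_id)).mul
                    (mGP.comp (measurable_id.add measurable_const)))
            _ = c3 (x + z) * (SD (x + z))⁻¹ := by rw [hshift]
  calc ∫⁻ ω, t1 ω ∂(μ.prod (ν.prod ν))
      = ∫⁻ x, ∫⁻ p : ℝ × ℝ, t1 (x, p) ∂(ν.prod ν) ∂μ := lintegral_prod _ mt1.aemeasurable
    _ ≤ ∫⁻ x, ∫⁻ z, (c3 (x + z)) * (SD (x + z))⁻¹ ∂ν ∂μ := lintegral_mono hfix
    _ = ∫⁻ p : ℝ × ℝ, c3 (p.1 + p.2) * (SD (p.1 + p.2))⁻¹ ∂(μ.prod ν) := by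
        exact (lintegral_prod _ ((mc3.comp measurable_add).mul
          ((mSD.comp measurable_add).inv)).aemeasurable).symm
    _ = ∫⁻ w, c3 w * (SD w)⁻¹ ∂S := by
        rw [hSmap, lintegral_map (f := fun w => c3 w * (SD w)⁻¹) ((mc3.mul mSD.inv)) measurable_add]
    _ = ∫⁻ w, SD w * (c3 w * (SD w)⁻¹) ∂volume := by
        have hwd := lintegral_withDensity_eq_lintegral_mul volume mSD (mc3.mul mSD.inv)
        rw [Measure.withDensity_rnDeriv_eq S volume hS_ac] at hwd
        exact hwd
    _ ≤ ∫⁻ w, c3 w ∂volume := lintegral_mono fun w => SDAux.mul_mul_inv_le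
    _ = 1 := hc3_mass

set_option maxHeartbeats 1000000 in
lemma bound2 (μ ν D R : Measure ℝ) [IsProbabilityMeasure μ] [IsProbabilityMeasure ν]
    [IsProbabilityMeasure D] [IsProbabilityMeasure R]
    (hμ_ac : μ ≪ volume) (hν_ac : ν ≪ volume) (hD_ac : D ≪ volume)
    (hR_repr : R = volume.withDensity
      (fun e => ∫⁻ u, D.rnDeriv volume u * ν.rnDeriv volume (e + u) ∂volume)) :
    ∫⁻ ω : ℝ × ℝ × ℝ, D.rnDeriv volume (ω.1 - ω.2.1) * D.rnDeriv volume (ω.1 - ω.2.2)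
      / (μ.rnDeriv volume ω.1 * R.rnDeriv volume (ω.2.1 + ω.2.2 - ω.1))
      ∂(μ.prod (ν.prod ν)) ≤ 1 := by
  set F := μ.rnDeriv volume with hFdef
  set G := ν.rnDeriv volume with hGdef
  set DD := D.rnDeriv volume with hDDdef
  set RD := R.rnDeriv volume with hRDdef
  have mF : Measurable F := Measure.measurable_rnDeriv _ _
  have mG : Measurable G := Measure.measurable_rnDeriv _ _
  have mDD : Measurable DD := Measure.measurable_rnDeriv _ _
  have mRD : Measurable RD := Measure.measurable_rnDeriv _ _
  have hμ_wd : volume.withDensity F = μ := Measure.withDensity_rnDeriv_eq μ volume hμ_ac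
  have hν_wd : volume.withDensity G = ν := Measure.withDensity_rnDeriv_eq ν volume hν_ac
  set cR : ℝ → ENNReal := fun e => ∫⁻ u, DD u * G (e + u) ∂volume with hcRdef
  have mcR : Measurable cR := by
    apply Measurable.lintegral_prod_right' (f := fun q : ℝ × ℝ => DD q.2 * G (q.1 + q.2))
    exact (mDD.comp measurable_snd).mul (mG.comp (measurable_fst.add measurable_snd))
  have hR_ac : R ≪ volume := by rw [hR_repr]; exact withDensity_absolutelyContinuous _ _
  have hRD_ae : RD =ᵐ[volume] cR := by
    rw [hRDdef, hR_repr]; exact Measure.rnDeriv_withDensity volume mcR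
  have hRD_mass : ∫⁻ u, RD u ∂volume = 1 := by
    rw [hRDdef, Measure.lintegral_rnDeriv hR_ac]; exact measure_univ
  set t2 : ℝ × ℝ × ℝ → ENNReal := fun ω =>
    DD (ω.1 - ω.2.1) * DD (ω.1 - ω.2.2) / (F ω.1 * RD (ω.2.1 + ω.2.2 - ω.1)) with ht2def
  have m1 : Measurable fun ω : ℝ × ℝ × ℝ => ω.1 := measurable_fst
  have m21 : Measurable fun ω : ℝ × ℝ × ℝ => ω.2.1 := measurable_fst.comp measurable_snd
  have m22 : Measurable fun ω : ℝ × ℝ × ℝ => ω.2.2 := measurable_snd.comp measurable_snd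
  have mt2 : Measurable t2 := ((mDD.comp (m1.sub m21)).mul (mDD.comp (m1.sub m22))).div
    ((mF.comp m1).mul (mRD.comp ((m21.add m22).sub m1)))
  have mK : Measurable fun x : ℝ => ∫⁻ p : ℝ × ℝ, t2 (x, p) ∂(ν.prod ν) :=
    Measurable.lintegral_prod_right' mt2
  -- the inner z-shift identity
  have mW : Measurable (Function.uncurry fun (p : ℝ × ℝ) (y : ℝ) =>
      G (p.2 + p.1 - y) * (DD (p.1 - y) * DD (y - p.2) / RD p.2)) := by
    apply Measurable.mul
    · exact mG.comp (((measurable_snd.comp measurable_fst).add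
        (measurable_fst.comp measurable_fst)).sub measurable_snd)
    · exact ((mDD.comp ((measurable_fst.comp measurable_fst).sub measurable_snd)).mul
        (mDD.comp (measurable_snd.sub (measurable_snd.comp measurable_fst)))).div
        (mRD.comp (measurable_snd.comp measurable_fst))
  have key1 : ∀ x y : ℝ, ∫⁻ z, DD (x - y) * DD (x - z) / RD (y + z - x) ∂ν
      = ∫⁻ e, G (e + x - y) * (DD (x - y) * DD (y - e) / RD e) ∂volume := by
    intro x y
    have msec : Measurable fun z : ℝ => DD (x - y) * DD (x - z) / RD (y + z - x) :=
      (measurable_const.mul (mDD.comp (measurable_const.sub measurable_id))).div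
        (mRD.comp ((measurable_const.add measurable_id).sub measurable_const))
    have h1 : ∫⁻ z, DD (x - y) * DD (x - z) / RD (y + z - x) ∂ν
        = ∫⁻ z, G z * (DD (x - y) * DD (x - z) / RD (y + z - x)) ∂volume := by
      have hwd := lintegral_withDensity_eq_lintegral_mul volume mG msec
      rw [hν_wd] at hwd
      exact hwd
    have hsh := lintegral_add_right_eq_self (μ := volume)
      (fun e => G (e + x - y) * (DD (x - y) * DD (y - e) / RD e)) (y - x)
    rw [h1, ← hsh]
    apply lintegral_congr
    intro z
    have e1 : z + (y - x) + x - y = z := by ring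
    have e2 : y - (z + (y - x)) = x - z := by ring
    have e3 : z + (y - x) = y + z - x := by ring
    simp only [e1, e2, e3]
    rw [show y + z - x + x - y = z from by ring, show y - (y + z - x) = x - z from by ring]
  have key2 : ∀ y e : ℝ, ∫⁻ x, G (e + x - y) * (DD (x - y) * DD (y - e) / RD e) ∂volume
      = DD (y - e) * ((RD e)⁻¹ * cR e) := by
    intro y e
    have h1 : ∀ x : ℝ, G (e + x - y) * (DD (x - y) * DD (y - e) / RD e)
        = DD (y - e) * (RD e)⁻¹ * (DD (x - y) * G (e + (x - y))) := by
      intro x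
      rw [div_eq_mul_inv, show e + x - y = e + (x - y) by ring]
      ring
    rw [lintegral_congr h1, lintegral_const_mul _ (show Measurable fun x : ℝ =>
      DD (x - y) * G (e + (x - y)) from (mDD.comp (measurable_id.sub measurable_const)).mul
      (mG.comp (measurable_const.add (measurable_id.sub measurable_const)))), mul_assoc]
    congr 1
    congr 1
    have hsh := lintegral_add_right_eq_self (μ := volume) (fun u => DD u * G (e + u)) (-y)
    simp only [← sub_eq_add_neg] at hsh
    exact hsh
  have key3 : ∀ e : ℝ, ∫⁻ y, DD (y - e) ∂ν = cR e := by
    intro e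
    have hwd := lintegral_withDensity_eq_lintegral_mul volume mG
      (show Measurable fun y : ℝ => DD (y - e) from mDD.comp (measurable_id.sub measurable_const))
    rw [hν_wd] at hwd
    rw [hwd]
    have hsh := lintegral_add_right_eq_self (μ := volume) (fun u => G (u + e) * DD u) (-e)
    simp only [← sub_eq_add_neg] at hsh
    calc ∫⁻ y, G y * DD (y - e) ∂volume
        = ∫⁻ y, G (y - e + e) * DD (y - e) ∂volume := by
          apply lintegral_congr
          intro y
          rw [sub_add_cancel]
      _ = ∫⁻ u, G (u + e) * DD u ∂volume := hsh
      _ = cR e := by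
          simp only [hcRdef]
          apply lintegral_congr
          intro u
          rw [mul_comm, add_comm u e]
  have hFfin : ∀ᵐ x ∂volume, F x < ⊤ := by
    have h := Measure.rnDeriv_lt_top μ volume
    rwa [← hFdef] at h
  calc ∫⁻ ω, t2 ω ∂(μ.prod (ν.prod ν))
      = ∫⁻ x, ∫⁻ p : ℝ × ℝ, t2 (x, p) ∂(ν.prod ν) ∂μ := lintegral_prod _ mt2.aemeasurable
    _ = ∫⁻ x, F x * ∫⁻ p : ℝ × ℝ, t2 (x, p) ∂(ν.prod ν) ∂volume := by
        have hwd := lintegral_withDensity_eq_lintegral_mul volume mF mK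
        rw [hμ_wd] at hwd
        exact hwd
    _ ≤ ∫⁻ x, ∫⁻ p : ℝ × ℝ, DD (x - p.1) * DD (x - p.2) / RD (p.1 + p.2 - x)
          ∂(ν.prod ν) ∂volume := by
        apply lintegral_mono_ae
        filter_upwards [hFfin] with x hx
        have hcm := lintegral_const_mul (μ := ν.prod ν) (F x)
          (show Measurable fun p : ℝ × ℝ => t2 (x, p) from
            mt2.comp (measurable_const.prodMk measurable_id))
        rw [← hcm]
        apply lintegral_mono
        intro p
        exact SDAux.mul_div_mul_le' hx.ne
    _ = ∫⁻ x, ∫⁻ e, ∫⁻ y, G (e + x - y) * (DD (x - y) * DD (y - e) / RD e) ∂ν ∂volume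
          ∂volume := by
        apply lintegral_congr
        intro x
        have mQ : Measurable fun p : ℝ × ℝ => DD (x - p.1) * DD (x - p.2)
            / RD (p.1 + p.2 - x) :=
          ((mDD.comp (measurable_const.sub measurable_fst)).mul
            (mDD.comp (measurable_const.sub measurable_snd))).div
            (mRD.comp ((measurable_fst.add measurable_snd).sub measurable_const))
        calc ∫⁻ p : ℝ × ℝ, DD (x - p.1) * DD (x - p.2) / RD (p.1 + p.2 - x) ∂(ν.prod ν)
            = ∫⁻ y, ∫⁻ z, DD (x - y) * DD (x - z) / RD (y + z - x) ∂ν ∂ν :=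
              lintegral_prod _ mQ.aemeasurable
          _ = ∫⁻ y, ∫⁻ e, G (e + x - y) * (DD (x - y) * DD (y - e) / RD e) ∂volume ∂ν :=
              lintegral_congr (key1 x)
          _ = ∫⁻ e, ∫⁻ y, G (e + x - y) * (DD (x - y) * DD (y - e) / RD e) ∂ν ∂volume := by
              exact lintegral_lintegral_swap
                (show Measurable (Function.uncurry fun (y e : ℝ) =>
                    G (e + x - y) * (DD (x - y) * DD (y - e) / RD e)) from
                  (mG.comp ((measurable_snd.add measurable_const).sub measurable_fst)).mul
                    (((mDD.comp ((measurable_const.sub measurable_fst) :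
                      Measurable fun q : ℝ × ℝ => x - q.1)).mul
                      (mDD.comp (measurable_fst.sub measurable_snd))).div
                      (mRD.comp measurable_snd))).aemeasurable
    _ = ∫⁻ e, ∫⁻ x, ∫⁻ y, G (e + x - y) * (DD (x - y) * DD (y - e) / RD e) ∂ν ∂volume
          ∂volume := by
        exact lintegral_lintegral_swap
          (show Measurable (Function.uncurry fun (x e : ℝ) =>
              ∫⁻ y, G (e + x - y) * (DD (x - y) * DD (y - e) / RD e) ∂ν) from by
            apply Measurable.lintegral_prod_right' (f := fun q : (ℝ × ℝ) × ℝ =>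
              G (q.1.2 + q.1.1 - q.2) * (DD (q.1.1 - q.2) * DD (q.2 - q.1.2) / RD q.1.2))
            exact (mG.comp (((measurable_snd.comp measurable_fst).add
              (measurable_fst.comp measurable_fst)).sub measurable_snd)).mul
              (((mDD.comp ((measurable_fst.comp measurable_fst).sub measurable_snd)).mul
                (mDD.comp (measurable_snd.sub (measurable_snd.comp measurable_fst)))).div
                (mRD.comp (measurable_snd.comp measurable_fst)))).aemeasurable
    _ = ∫⁻ e, ∫⁻ y, ∫⁻ x, G (e + x - y) * (DD (x - y) * DD (y - e) / RD e) ∂volume ∂ν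
          ∂volume := by
        apply lintegral_congr
        intro e
        exact lintegral_lintegral_swap
          (show Measurable (Function.uncurry fun (x y : ℝ) =>
              G (e + x - y) * (DD (x - y) * DD (y - e) / RD e)) from
            (mG.comp ((measurable_const.add measurable_fst).sub measurable_snd)).mul
              (((mDD.comp (measurable_fst.sub measurable_snd)).mul
                (mDD.comp (measurable_snd.sub measurable_const))).div
                measurable_const)).aemeasurable
    _ = ∫⁻ e, cR e * ((RD e)⁻¹ * cR e) ∂volume := by
        apply lintegral_congr
        intro e
        calc ∫⁻ y, ∫⁻ x, G (e + x - y) * (DD (x - y) * DD (y - e) / RD e) ∂volume ∂ν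
            = ∫⁻ y, DD (y - e) * ((RD e)⁻¹ * cR e) ∂ν := lintegral_congr (fun y => key2 y e)
          _ = (∫⁻ y, DD (y - e) ∂ν) * ((RD e)⁻¹ * cR e) := by
              exact lintegral_mul_const _ (show Measurable fun y : ℝ => DD (y - e) from
                mDD.comp (measurable_id.sub measurable_const))
          _ = cR e * ((RD e)⁻¹ * cR e) := by rw [key3]
    _ = ∫⁻ e, RD e * ((RD e)⁻¹ * RD e) ∂volume := by
        apply lintegral_congr_ae
        filter_upwards [hRD_ae] with e he
        rw [he]
    _ ≤ ∫⁻ e, RD e ∂volume := lintegral_mono fun e => SDAux.mul_inv_mul_le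
    _ = 1 := hRD_mass

end SDAux

set_option maxHeartbeats 4000000 in
/-- **Sum-difference inequality for differential entropy.**
If `X, Y` are independent continuous random variables with all relevant differential
entropies existing and finite, then `h(X+Y) ≤ 3·h(X-Y) - h(X) - h(Y)`. -/
theorem sum_difference_diffEntropy
    {Ω : Type*} [MeasurableSpace Ω] (P : Measure Ω) [IsProbabilityMeasure P]
    (X Y : Ω → ℝ) (hX : Measurable X) (hY : Measurable Y)
    (hindep : IndepFun X Y P)
    (h1 : FiniteDent volume P (X + Y)) (h2 : FiniteDent volume P (X - Y))
    (h3 : FiniteDent volume P X) (h4 : FiniteDent volume P Y) :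
    dent volume P (X + Y) ≤
      3 * dent volume P (X - Y) - dent volume P X - dent volume P Y := by
  classical
  obtain ⟨hS_ac, hS_int⟩ := h1
  obtain ⟨hD_ac, hD_int⟩ := h2
  obtain ⟨hF_ac, hF_int⟩ := h3
  obtain ⟨hG_ac, hG_int⟩ := h4
  unfold dent
  set μ : Measure ℝ := P.map X with hμdef
  set ν : Measure ℝ := P.map Y with hνdef
  set S : Measure ℝ := P.map (X + Y) with hSdef
  set D : Measure ℝ := P.map (X - Y) with hDdef
  haveI hμP : IsProbabilityMeasure μ := Measure.isProbabilityMeasure_map hX.aemeasurable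
  haveI hνP : IsProbabilityMeasure ν := Measure.isProbabilityMeasure_map hY.aemeasurable
  haveI hSP : IsProbabilityMeasure S := Measure.isProbabilityMeasure_map (hX.add hY).aemeasurable
  haveI hDP : IsProbabilityMeasure D := Measure.isProbabilityMeasure_map (hX.sub hY).aemeasurable
  -- joint law
  have hjoint : P.map (fun ω => (X ω, Y ω)) = μ.prod ν :=
    (indepFun_iff_map_prod_eq_prod_map_map hX.aemeasurable hY.aemeasurable).mp hindep
  have hSmap : S = (μ.prod ν).map (fun p : ℝ × ℝ => p.1 + p.2) := by
    rw [hSdef, ← hjoint, Measure.map_map measurable_add (hX.prodMk hY)]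
    rfl
  have hDmap : D = (μ.prod ν).map (fun p : ℝ × ℝ => p.1 - p.2) := by
    rw [hDdef, ← hjoint, Measure.map_map measurable_sub (hX.prodMk hY)]
    rfl
  -- densities
  set F := μ.rnDeriv volume with hFdef
  set G := ν.rnDeriv volume with hGdef
  set SD := S.rnDeriv volume with hSDdef
  set DD := D.rnDeriv volume with hDDdef
  have mF : Measurable F := Measure.measurable_rnDeriv _ _
  have mG : Measurable G := Measure.measurable_rnDeriv _ _
  have mSD : Measurable SD := Measure.measurable_rnDeriv _ _
  have mDD : Measurable DD := Measure.measurable_rnDeriv _ _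
  -- the auxiliary measure π on ℝ³
  set π : Measure (ℝ × ℝ × ℝ) := μ.prod (ν.prod ν) with hπdef
  haveI hπP : IsProbabilityMeasure π := by rw [hπdef]; infer_instance
  -- coordinate measurability
  have m1 : Measurable fun ω : ℝ × ℝ × ℝ => ω.1 := measurable_fst
  have m21 : Measurable fun ω : ℝ × ℝ × ℝ => ω.2.1 := measurable_fst.comp measurable_snd
  have m22 : Measurable fun ω : ℝ × ℝ × ℝ => ω.2.2 := measurable_snd.comp measurable_snd
  -- pair laws
  have hmap_xy : π.map (fun ω : ℝ × ℝ × ℝ => (ω.1, ω.2.1)) = μ.prod ν := by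
    have hfun : (fun ω : ℝ × ℝ × ℝ => (ω.1, ω.2.1))
        = Prod.map (id : ℝ → ℝ) (Prod.fst : ℝ × ℝ → ℝ) := rfl
    rw [hπdef, hfun, ← Measure.map_prod_map _ _ measurable_id measurable_fst,
      Measure.map_id, Measure.map_fst_prod, measure_univ, one_smul]
  have hmap_xz : π.map (fun ω : ℝ × ℝ × ℝ => (ω.1, ω.2.2)) = μ.prod ν := by
    have hfun : (fun ω : ℝ × ℝ × ℝ => (ω.1, ω.2.2))
        = Prod.map (id : ℝ → ℝ) (Prod.snd : ℝ × ℝ → ℝ) := rfl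
    rw [hπdef, hfun, ← Measure.map_prod_map _ _ measurable_id measurable_snd,
      Measure.map_id, Measure.map_snd_prod, measure_univ, one_smul]
  have hmap_yz : π.map (fun ω : ℝ × ℝ × ℝ => ω.2) = ν.prod ν := by
    rw [hπdef, show (fun ω : ℝ × ℝ × ℝ => ω.2) = (Prod.snd : ℝ × ℝ × ℝ → ℝ × ℝ) from rfl,
      Measure.map_snd_prod, measure_univ, one_smul]
  -- single laws
  have hmap_x : π.map (fun ω : ℝ × ℝ × ℝ => ω.1) = μ := by
    rw [hπdef, show (fun ω : ℝ × ℝ × ℝ => ω.1) = (Prod.fst : ℝ × (ℝ × ℝ) → ℝ) from rfl,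
      Measure.map_fst_prod, measure_univ, one_smul]
  have hmap_y : π.map (fun ω : ℝ × ℝ × ℝ => ω.2.1) = ν := by
    have hfun : (fun ω : ℝ × ℝ × ℝ => ω.2.1)
        = (Prod.fst : ℝ × ℝ → ℝ) ∘ (fun ω : ℝ × ℝ × ℝ => ω.2) := rfl
    rw [hfun, ← Measure.map_map measurable_fst measurable_snd, hmap_yz,
      Measure.map_fst_prod, measure_univ, one_smul]
  have hT1 : π.map (fun ω : ℝ × ℝ × ℝ => ω.1 - ω.2.1) = D := by
    have hfun : (fun ω : ℝ × ℝ × ℝ => ω.1 - ω.2.1)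
        = (fun p : ℝ × ℝ => p.1 - p.2) ∘ (fun ω : ℝ × ℝ × ℝ => (ω.1, ω.2.1)) := rfl
    rw [hDmap, hfun, ← Measure.map_map measurable_sub (m1.prodMk m21), hmap_xy]
  have hT2 : π.map (fun ω : ℝ × ℝ × ℝ => ω.1 - ω.2.2) = D := by
    have hfun : (fun ω : ℝ × ℝ × ℝ => ω.1 - ω.2.2)
        = (fun p : ℝ × ℝ => p.1 - p.2) ∘ (fun ω : ℝ × ℝ × ℝ => (ω.1, ω.2.2)) := rfl
    rw [hDmap, hfun, ← Measure.map_map measurable_sub (m1.prodMk m22), hmap_xz]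
  have hT3 : π.map (fun ω : ℝ × ℝ × ℝ => ω.1 + ω.2.2) = S := by
    have hfun : (fun ω : ℝ × ℝ × ℝ => ω.1 + ω.2.2)
        = (fun p : ℝ × ℝ => p.1 + p.2) ∘ (fun ω : ℝ × ℝ × ℝ => (ω.1, ω.2.2)) := rfl
    rw [hSmap, hfun, ← Measure.map_map measurable_add (m1.prodMk m22), hmap_xz]
  -- auxiliary convolution laws
  set Gplus : Measure ℝ := (ν.prod ν).map (fun p : ℝ × ℝ => p.1 + p.2) with hGplusdef
  haveI hGplusP : IsProbabilityMeasure Gplus :=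
    Measure.isProbabilityMeasure_map measurable_add.aemeasurable
  have hT4 : π.map (fun ω : ℝ × ℝ × ℝ => ω.2.1 + ω.2.2) = Gplus := by
    have hfun : (fun ω : ℝ × ℝ × ℝ => ω.2.1 + ω.2.2)
        = (fun p : ℝ × ℝ => p.1 + p.2) ∘ (fun ω : ℝ × ℝ × ℝ => ω.2) := rfl
    rw [hGplusdef, hfun, ← Measure.map_map measurable_add measurable_snd, hmap_yz]
  set Dneg : Measure ℝ := D.map (fun u : ℝ => -u) with hDnegdef
  haveI hDnegP : IsProbabilityMeasure Dneg :=
    Measure.isProbabilityMeasure_map measurable_neg.aemeasurable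
  set Rmeas : Measure ℝ := (Dneg.prod ν).map (fun p : ℝ × ℝ => p.1 + p.2) with hRdef
  haveI hRP : IsProbabilityMeasure Rmeas := Measure.isProbabilityMeasure_map measurable_add.aemeasurable
  have hT5 : π.map (fun ω : ℝ × ℝ × ℝ => ω.2.1 + ω.2.2 - ω.1) = Rmeas := by
    have hassoc : π.map (⇑(MeasurableEquiv.prodAssoc (α := ℝ) (β := ℝ) (γ := ℝ)).symm)
        = (μ.prod ν).prod ν := by
      have h := (measurePreserving_prodAssoc μ ν ν).map_eq
      rw [hπdef, ← h, Measure.map_map (MeasurableEquiv.prodAssoc.symm.measurable)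
        (MeasurableEquiv.prodAssoc.measurable), MeasurableEquiv.symm_comp_self,
        Measure.map_id]
    have hDneg' : (μ.prod ν).map (fun p : ℝ × ℝ => p.2 - p.1) = Dneg := by
      rw [hDnegdef, hDmap, Measure.map_map measurable_neg measurable_sub]
      congr 1
      funext p
      simp [neg_sub]
    have hpair : π.map (fun ω : ℝ × ℝ × ℝ => (ω.2.1 - ω.1, ω.2.2)) = Dneg.prod ν := by
      have hcomp : (fun ω : ℝ × ℝ × ℝ => (ω.2.1 - ω.1, ω.2.2))
          = (Prod.map (fun p : ℝ × ℝ => p.2 - p.1) (id : ℝ → ℝ))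
            ∘ (⇑(MeasurableEquiv.prodAssoc (α := ℝ) (β := ℝ) (γ := ℝ)).symm) := rfl
      rw [hcomp, ← Measure.map_map ((show Measurable fun p : ℝ × ℝ => p.2 - p.1 from measurable_snd.sub measurable_fst).prodMap measurable_id)
        (MeasurableEquiv.prodAssoc.symm.measurable), hassoc,
        ← Measure.map_prod_map _ _ (show Measurable fun p : ℝ × ℝ => p.2 - p.1 from measurable_snd.sub measurable_fst) measurable_id,
        hDneg', Measure.map_id]
    have hcomp2 : (fun ω : ℝ × ℝ × ℝ => ω.2.1 + ω.2.2 - ω.1)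
        = (fun p : ℝ × ℝ => p.1 + p.2) ∘ (fun ω : ℝ × ℝ × ℝ => (ω.2.1 - ω.1, ω.2.2)) := by
      funext ω
      simp only [Function.comp_apply]
      ring
    rw [hRdef, hcomp2, ← Measure.map_map measurable_add ((show Measurable fun ω : ℝ × ℝ × ℝ => ω.2.1 - ω.1 from m21.sub m1).prodMk m22), hpair]
  set GP := Gplus.rnDeriv volume with hGPdef
  set RD := Rmeas.rnDeriv volume with hRDdef
  have mGP : Measurable GP := Measure.measurable_rnDeriv _ _
  have mRD : Measurable RD := Measure.measurable_rnDeriv _ _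
  -- density representations
  have hν_wd : volume.withDensity G = ν := Measure.withDensity_rnDeriv_eq ν volume hG_ac
  have hμ_wd : volume.withDensity F = μ := Measure.withDensity_rnDeriv_eq μ volume hF_ac
  have hS_wd : volume.withDensity SD = S := Measure.withDensity_rnDeriv_eq S volume hS_ac
  have hD_wd : volume.withDensity DD = D := Measure.withDensity_rnDeriv_eq D volume hD_ac
  have hGplus_repr : Gplus = volume.withDensity (fun e => ∫⁻ b, G (e - b) ∂ν) := by
    rw [hGplusdef, show ν.prod ν = ν.prod (volume.withDensity G) by rw [hν_wd]]
    exact SDAux.conv_withDensity ν G mG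
  have hGplus_ac : Gplus ≪ volume := by
    rw [hGplus_repr]; exact withDensity_absolutelyContinuous _ _
  set cR : ℝ → ENNReal := fun e => ∫⁻ u, DD u * G (e + u) ∂volume with hcRdef
  have mcR : Measurable cR := by
    apply Measurable.lintegral_prod_right' (f := fun q : ℝ × ℝ => DD q.2 * G (q.1 + q.2))
    exact (mDD.comp measurable_snd).mul (mG.comp (measurable_fst.add measurable_snd))
  have hR_repr : Rmeas = volume.withDensity cR := by
    have hstep : Rmeas = volume.withDensity (fun e => ∫⁻ b, G (e - b) ∂Dneg) := by
      rw [hRdef, show Dneg.prod ν = Dneg.prod (volume.withDensity G) by rw [hν_wd]]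
      exact SDAux.conv_withDensity Dneg G mG
    rw [hstep]
    congr 1
    funext e
    rw [hDnegdef, lintegral_map
      (show Measurable fun b : ℝ => G (e - b) from mG.comp (measurable_const.sub measurable_id))
      measurable_neg]
    have heq : ∀ u : ℝ, G (e - -u) = G (e + u) := fun u => by rw [sub_neg_eq_add]
    rw [show (fun u : ℝ => G (e - -u)) = fun u : ℝ => G (e + u) from funext heq]
    rw [← hD_wd, lintegral_withDensity_eq_lintegral_mul volume mDD
      (show Measurable fun u : ℝ => G (e + u) from mG.comp (measurable_const.add measurable_id))]
    rfl
  have hR_ac : Rmeas ≪ volume := by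
    rw [hR_repr]; exact withDensity_absolutelyContinuous _ _
  have hRD_ae : RD =ᵐ[volume] cR := by
    rw [hRDdef, hR_repr]; exact Measure.rnDeriv_withDensity volume mcR
  -- masses
  have hDD_mass : ∫⁻ u, DD u ∂volume = 1 := by
    rw [hDDdef, Measure.lintegral_rnDeriv hD_ac]; exact measure_univ
  have hGP_mass : ∫⁻ u, GP u ∂volume = 1 := by
    rw [hGPdef, Measure.lintegral_rnDeriv hGplus_ac]; exact measure_univ
  have hRD_mass : ∫⁻ u, RD u ∂volume = 1 := by
    rw [hRDdef, Measure.lintegral_rnDeriv hR_ac]; exact measure_univ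
  -- a.e. positivity and finiteness, pulled back to π
  have hae_pull : ∀ (T : ℝ × ℝ × ℝ → ℝ), Measurable T → ∀ (θ : Measure ℝ), SigmaFinite θ →
      π.map T = θ → θ ≪ volume →
      ∀ᵐ ω ∂π, 0 < θ.rnDeriv volume (T ω) ∧ θ.rnDeriv volume (T ω) < ⊤ := by
    intro T hT θ hσ hθ hac
    have hb1 : ∀ᵐ v ∂θ, 0 < θ.rnDeriv volume v := Measure.rnDeriv_pos hac
    have hb2 : ∀ᵐ v ∂θ, θ.rnDeriv volume v < ⊤ :=
      (Measure.rnDeriv_lt_top θ volume).filter_mono hac.ae_le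
    have hb3 : ∀ᵐ v ∂(π.map T), 0 < θ.rnDeriv volume v ∧ θ.rnDeriv volume v < ⊤ := by
      rw [hθ]; exact hb1.and hb2
    have hms : MeasurableSet {v : ℝ | 0 < θ.rnDeriv volume v ∧ θ.rnDeriv volume v < ⊤} :=
      ((Measure.measurable_rnDeriv θ volume) measurableSet_Ioi).inter
        ((Measure.measurable_rnDeriv θ volume) measurableSet_Iio)
    exact (ae_map_iff hT.aemeasurable hms).mp hb3
  have haeDD1 := hae_pull _ (m1.sub m21) D inferInstance hT1 hD_ac
  have haeDD2 := hae_pull _ (m1.sub m22) D inferInstance hT2 hD_ac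
  have haeSD := hae_pull _ (m1.add m22) S inferInstance hT3 hS_ac
  have haeGP := hae_pull _ (m21.add m22) Gplus inferInstance hT4 hGplus_ac
  have haeRD := hae_pull _ ((m21.add m22).sub m1) Rmeas inferInstance hT5 hR_ac
  have haeF := hae_pull _ m1 μ inferInstance hmap_x hF_ac
  have haeG := hae_pull _ m21 ν inferInstance hmap_y hG_ac
  rw [← hDDdef] at haeDD1 haeDD2
  rw [← hSDdef] at haeSD
  rw [← hGPdef] at haeGP
  rw [← hRDdef] at haeRD
  rw [← hFdef] at haeF
  rw [← hGdef] at haeG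
  -- the three likelihood ratios
  set t1 : ℝ × ℝ × ℝ → ENNReal := fun ω =>
    DD (ω.1 - ω.2.1) * GP (ω.2.1 + ω.2.2) / (SD (ω.1 + ω.2.2) * G ω.2.1) with ht1def
  set t2 : ℝ × ℝ × ℝ → ENNReal := fun ω =>
    DD (ω.1 - ω.2.1) * DD (ω.1 - ω.2.2) / (F ω.1 * RD (ω.2.1 + ω.2.2 - ω.1)) with ht2def
  set t3 : ℝ × ℝ × ℝ → ENNReal := fun ω =>
    RD (ω.2.1 + ω.2.2 - ω.1) / GP (ω.2.1 + ω.2.2) with ht3def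
  have mt1 : Measurable t1 := ((mDD.comp (m1.sub m21)).mul (mGP.comp (m21.add m22))).div
    ((mSD.comp (m1.add m22)).mul (mG.comp m21))
  have mt2 : Measurable t2 := ((mDD.comp (m1.sub m21)).mul (mDD.comp (m1.sub m22))).div
    ((mF.comp m1).mul (mRD.comp ((m21.add m22).sub m1)))
  have mt3 : Measurable t3 := (mRD.comp ((m21.add m22).sub m1)).div (mGP.comp (m21.add m22))
  -- the three Gibbs bounds
  have hB3 : ∫⁻ ω, t3 ω ∂π ≤ 1 := by
    rw [ht3def, hπdef]
    exact SDAux.bound3 μ ν Rmeas Gplus hGplusdef hGplus_ac hR_ac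
  have hB1 : ∫⁻ ω, t1 ω ∂π ≤ 1 := by
    rw [ht1def, hπdef]
    exact SDAux.bound1 μ ν S D Gplus hG_ac hS_ac hD_ac hGplus_ac hSmap
  have hB2 : ∫⁻ ω, t2 ω ∂π ≤ 1 := by
    rw [ht2def, hπdef]
    exact SDAux.bound2 μ ν D Rmeas hF_ac hG_ac hD_ac hR_repr
  -- log-density pullbacks
  set LS : ℝ → ℝ := fun x => Real.log ((SD x).toReal) with hLSdef
  set LD : ℝ → ℝ := fun x => Real.log ((DD x).toReal) with hLDdef
  set LF : ℝ → ℝ := fun x => Real.log ((F x).toReal) with hLFdef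
  set LG : ℝ → ℝ := fun x => Real.log ((G x).toReal) with hLGdef
  have mLS : Measurable LS := Real.measurable_log.comp mSD.ennreal_toReal
  have mLD : Measurable LD := Real.measurable_log.comp mDD.ennreal_toReal
  have mLF : Measurable LF := Real.measurable_log.comp mF.ennreal_toReal
  have mLG : Measurable LG := Real.measurable_log.comp mG.ennreal_toReal
  have hpull : ∀ (T : ℝ × ℝ × ℝ → ℝ), Measurable T → ∀ (θ : Measure ℝ), π.map T = θ →
      ∀ (L : ℝ → ℝ), Measurable L → Integrable L θ →
      Integrable (fun ω => L (T ω)) π ∧ ∫ ω, L (T ω) ∂π = ∫ v, L v ∂θ := by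
    intro T hT θ hθ L hL hint
    rw [← hθ] at hint
    constructor
    · exact (integrable_map_measure hL.aestronglyMeasurable hT.aemeasurable).mp hint
    · rw [← hθ]
      exact (integral_map hT.aemeasurable hL.aestronglyMeasurable).symm
  have hi1 : Integrable (fun ω : ℝ × ℝ × ℝ => LD (ω.1 - ω.2.1)) π :=
    (hpull _ (m1.sub m21) D hT1 LD mLD hD_int).1
  have he1 : ∫ ω, LD (ω.1 - ω.2.1) ∂π = ∫ v, LD v ∂D :=
    (hpull _ (m1.sub m21) D hT1 LD mLD hD_int).2
  have hi2 : Integrable (fun ω : ℝ × ℝ × ℝ => LD (ω.1 - ω.2.2)) π :=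
    (hpull _ (m1.sub m22) D hT2 LD mLD hD_int).1
  have he2 : ∫ ω, LD (ω.1 - ω.2.2) ∂π = ∫ v, LD v ∂D :=
    (hpull _ (m1.sub m22) D hT2 LD mLD hD_int).2
  have hi3 : Integrable (fun ω : ℝ × ℝ × ℝ => LS (ω.1 + ω.2.2)) π :=
    (hpull _ (m1.add m22) S hT3 LS mLS hS_int).1
  have he3 : ∫ ω, LS (ω.1 + ω.2.2) ∂π = ∫ v, LS v ∂S :=
    (hpull _ (m1.add m22) S hT3 LS mLS hS_int).2
  have hi4 : Integrable (fun ω : ℝ × ℝ × ℝ => LF ω.1) π :=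
    (hpull _ m1 μ hmap_x LF mLF hF_int).1
  have he4 : ∫ ω, LF ω.1 ∂π = ∫ v, LF v ∂μ :=
    (hpull _ m1 μ hmap_x LF mLF hF_int).2
  have hi5 : Integrable (fun ω : ℝ × ℝ × ℝ => LG ω.2.1) π :=
    (hpull _ m21 ν hmap_y LG mLG hG_int).1
  have he5 : ∫ ω, LG ω.2.1 ∂π = ∫ v, LG v ∂ν :=
    (hpull _ m21 ν hmap_y LG mLG hG_int).2
  -- integrability of φ
  have hiA : Integrable (fun ω : ℝ × ℝ × ℝ => 2 * LD (ω.1 - ω.2.1)) π := hi1.const_mul 2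
  have hiB : Integrable (fun ω : ℝ × ℝ × ℝ =>
      2 * LD (ω.1 - ω.2.1) + LD (ω.1 - ω.2.2)) π := hiA.add hi2
  have hiC : Integrable (fun ω : ℝ × ℝ × ℝ =>
      2 * LD (ω.1 - ω.2.1) + LD (ω.1 - ω.2.2) - LF ω.1) π := hiB.sub hi4
  have hiD : Integrable (fun ω : ℝ × ℝ × ℝ =>
      2 * LD (ω.1 - ω.2.1) + LD (ω.1 - ω.2.2) - LF ω.1 - LG ω.2.1) π := hiC.sub hi5
  have hφ_int : Integrable (fun ω : ℝ × ℝ × ℝ => 2 * LD (ω.1 - ω.2.1) + LD (ω.1 - ω.2.2)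
      - LF ω.1 - LG ω.2.1 - LS (ω.1 + ω.2.2)) π := hiD.sub hi3
  have hφ_val : ∫ ω, (2 * LD (ω.1 - ω.2.1) + LD (ω.1 - ω.2.2) - LF ω.1 - LG ω.2.1
      - LS (ω.1 + ω.2.2)) ∂π
      = 2 * ∫ v, LD v ∂D + ∫ v, LD v ∂D - ∫ v, LF v ∂μ - ∫ v, LG v ∂ν - ∫ v, LS v ∂S := by
    rw [integral_sub hiD hi3, integral_sub hiC hi5, integral_sub hiB hi4,
      integral_add hiA hi2, integral_const_mul, he1, he2, he3, he4, he5]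
  -- a.e. domination
  have hφ_le : ∀ᵐ ω ∂π, 2 * LD (ω.1 - ω.2.1) + LD (ω.1 - ω.2.2) - LF ω.1 - LG ω.2.1
      - LS (ω.1 + ω.2.2) ≤ (t1 ω + t2 ω + t3 ω).toReal - 3 := by
    filter_upwards [haeDD1, haeDD2, haeSD, haeGP, haeRD, haeF, haeG]
      with ω hA hB hC hP hR hF' hG'
    simp only [hLSdef, hLDdef, hLFdef, hLGdef, ht1def, ht2def, ht3def]
    exact SDAux.log_ineq hA.1.ne' hA.2.ne hB.1.ne' hB.2.ne hC.1.ne' hC.2.ne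
      hF'.1.ne' hF'.2.ne hG'.1.ne' hG'.2.ne hP.1.ne' hP.2.ne hR.1.ne' hR.2.ne
  have hfin_ae : ∀ᵐ ω ∂π, t1 ω + t2 ω + t3 ω < ⊤ := by
    filter_upwards [haeDD1, haeDD2, haeSD, haeGP, haeRD, haeF, haeG]
      with ω hA hB hC hP hR hF' hG'
    simp only [ht1def, ht2def, ht3def]
    have h1T : DD (ω.1 - ω.2.1) * GP (ω.2.1 + ω.2.2) / (SD (ω.1 + ω.2.2) * G ω.2.1) ≠ ⊤ := by
      rw [Ne, ENNReal.div_eq_top]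
      push_neg
      refine ⟨fun _ => mul_ne_zero hC.1.ne' hG'.1.ne', fun h =>
        absurd h (ENNReal.mul_ne_top hA.2.ne hP.2.ne)⟩
    have h2T : DD (ω.1 - ω.2.1) * DD (ω.1 - ω.2.2)
        / (F ω.1 * RD (ω.2.1 + ω.2.2 - ω.1)) ≠ ⊤ := by
      rw [Ne, ENNReal.div_eq_top]
      push_neg
      refine ⟨fun _ => mul_ne_zero hF'.1.ne' hR.1.ne', fun h =>
        absurd h (ENNReal.mul_ne_top hA.2.ne hB.2.ne)⟩
    have h3T : RD (ω.2.1 + ω.2.2 - ω.1) / GP (ω.2.1 + ω.2.2) ≠ ⊤ := by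
      rw [Ne, ENNReal.div_eq_top]
      push_neg
      exact ⟨fun _ => hP.1.ne', fun h => absurd h hR.2.ne⟩
    exact lt_of_le_of_ne le_top (by
      simp only [Ne, ENNReal.add_eq_top, not_or]
      exact ⟨⟨h1T, h2T⟩, h3T⟩)
  -- combine
  have hsum_le : ∫⁻ ω, (t1 ω + t2 ω + t3 ω) ∂π ≤ 3 := by
    calc ∫⁻ ω, (t1 ω + t2 ω + t3 ω) ∂π
        = (∫⁻ ω, t1 ω ∂π + ∫⁻ ω, t2 ω ∂π) + ∫⁻ ω, t3 ω ∂π := by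
          rw [lintegral_add_right _ mt3, lintegral_add_right _ mt2]
      _ ≤ (1 + 1) + 1 := by gcongr
      _ = 3 := by norm_num
  have hne : ∫⁻ ω, (t1 ω + t2 ω + t3 ω) ∂π ≠ ⊤ :=
    (lt_of_le_of_lt hsum_le (by norm_num)).ne
  have msum : Measurable (fun ω : ℝ × ℝ × ℝ => t1 ω + t2 ω + t3 ω) := by
    exact (mt1.add mt2).add mt3
  have hH_int : Integrable (fun ω => (t1 ω + t2 ω + t3 ω).toReal) π :=
    integrable_toReal_of_lintegral_ne_top msum.aemeasurable hne
  have hkey : ∫ ω, (2 * LD (ω.1 - ω.2.1) + LD (ω.1 - ω.2.2) - LF ω.1 - LG ω.2.1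
      - LS (ω.1 + ω.2.2)) ∂π ≤ 0 := by
    have step1 : ∫ ω, (2 * LD (ω.1 - ω.2.1) + LD (ω.1 - ω.2.2) - LF ω.1 - LG ω.2.1
        - LS (ω.1 + ω.2.2)) ∂π ≤ ∫ ω, ((t1 ω + t2 ω + t3 ω).toReal - 3) ∂π :=
      integral_mono_ae hφ_int (hH_int.sub (integrable_const 3)) hφ_le
    have step2 : ∫ ω, ((t1 ω + t2 ω + t3 ω).toReal - 3) ∂π
        = (∫⁻ ω, (t1 ω + t2 ω + t3 ω) ∂π).toReal - 3 := by
      rw [integral_sub hH_int (integrable_const 3), integral_toReal msum.aemeasurable hfin_ae]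
      simp
    have step3 : (∫⁻ ω, (t1 ω + t2 ω + t3 ω) ∂π).toReal ≤ 3 := by
      have h := ENNReal.toReal_mono (by norm_num : (3 : ENNReal) ≠ ⊤) hsum_le
      simpa using h
    linarith
  rw [hφ_val] at hkey
  linarith
end
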